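/- arXiv:1008.1168 — 13 statements merged into one kernel-verified Lean document; each statement's English description precedes it below -/
import Mathlib

section
/- Let A and B be unital C*-algebras and let Φ : A → B be a linear map with Φ(1) = 1. Then Φ is completely positive if and only if for every n ≥ 1 and every self-adjoint matrix a ∈ Mₙ(A) one has Φₙ(a)* = Φₙ(a) and ‖Φₙ(a)‖ ≤ ‖a‖, where Φₙ : Mₙ(A) → Mₙ(B) is the map applying Φ entrywise. -/
/-!
**Statement 0.** Let `A`, `B` be unital C⋆-algebras and `Φ : A → B` a linear map with
`Φ 1 = 1`.  Then `Φ` is completely positive iff for every `n ≥ 1` and every self-adjoint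
`a ∈ Mₙ(A)` one has `Φₙ(a)* = Φₙ(a)` and `‖Φₙ(a)‖ ≤ ‖a‖`.

Positivity of an element of the C⋆-algebra `Mₙ(A)` is expressed by the (equivalent, canonical)
condition of being of the form `star x * x`.  Since Mathlib does not endow `Matrix (Fin n)
(Fin n) A` with its C⋆-norm, the norm condition `‖Φₙ(a)‖ ≤ ‖a‖` for *self-adjoint* elements is
expressed via the spectral radius, which coincides with the C⋆-norm on self-adjoint elements.
-/

open scoped ComplexOrder NNReal ENNReal
open Matrix WithCStarModule CStarModule

set_option linter.unusedSectionVars false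
set_option maxHeartbeats 1000000
set_option synthInstance.maxHeartbeats 200000

namespace CPAux

noncomputable section

variable (n A : Type*) [Fintype n] [DecidableEq n]
  [CStarAlgebra A] [PartialOrder A] [StarOrderedRing A]

/-- Type synonym for matrices carrying the C⋆-operator norm. -/
def CM := Matrix n n A

variable {n A}

/-- Identity equivalence between `Matrix n n A` and `CM n A`. -/
def toCM : Matrix n n A ≃ CM n A := Equiv.refl _

/-- Back to matrices. -/
def toM (M : CM n A) : Matrix n n A := M

instance : CStarAlgebra (CM n A) := inferInstanceAs (CStarAlgebra (CStarMatrix n n A))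

@[simp] lemma toM_star (M : CM n A) : toM (star M) = (toM M)ᴴ := rfl
@[simp] lemma toCM_star (M : Matrix n n A) : toCM Mᴴ = star (toCM M) := rfl
@[simp] lemma toM_mul (M N : CM n A) : toM (M * N) = toM M * toM N := rfl
@[simp] lemma toM_toCM (M : Matrix n n A) : toM (toCM M) = M := rfl


variable (n A) in
/-- The identity algebra equivalence between `Matrix n n A` and `CM n A`. -/
def toCMₐ : Matrix n n A ≃ₐ[ℂ] CM n A :=
  { toCM with
    map_mul' := fun _ _ => rfl
    map_add' := fun _ _ => rfl
    commutes' := fun _ => rfl }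

lemma spectrum_toCM (M : Matrix n n A) : spectrum ℂ (toCM (n := n) (A := A) M) = spectrum ℂ M :=
  AlgEquiv.spectrum_eq (toCMₐ n A) M

lemma spectralRadius_toCM (M : Matrix n n A) :
    spectralRadius ℂ (toCM (n := n) (A := A) M) = spectralRadius ℂ M := by
  rw [spectralRadius, spectralRadius, spectrum_toCM]

end

section Helpers

variable {C : Type*} [CStarAlgebra C] [PartialOrder C] [StarOrderedRing C]

lemma exists_star_mul_self (b : C) (hb : 0 ≤ b) : ∃ y : C, b = star y * y := by
  obtain ⟨x, hx, -, hxx⟩ := CFC.exists_sqrt_of_isSelfAdjoint_of_quasispectrumRestricts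
    (.of_nonneg hb) (.nnreal_of_nonneg hb)
  exact ⟨x, by rw [← hxx, hx.star_eq]⟩

lemma nonneg_of_spectrum (b : C) (hb : IsSelfAdjoint b)
    (h : ∀ x ∈ spectrum ℝ b, 0 ≤ x) : 0 ≤ b :=
  (StarOrderedRing.nonneg_iff_spectrum_nonneg b hb).mpr h

lemma norm_le_of_spectrum (b : C) (hb : IsSelfAdjoint b) (t : ℝ) (ht : 0 ≤ t)
    (h : ∀ x ∈ spectrum ℝ b, |x| ≤ t) : ‖b‖ ≤ t := by
  obtain h0 | h0 := subsingleton_or_nontrivial C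
  · rw [Subsingleton.elim b 0, norm_zero]; exact ht
  · rcases CStarAlgebra.norm_or_neg_norm_mem_spectrum hb with hmem | hmem
    · have := h _ hmem
      rwa [abs_of_nonneg (norm_nonneg b)] at this
    · have := h _ hmem
      rwa [abs_neg, abs_of_nonneg (norm_nonneg b)] at this

lemma mem_spectrum_algebraMap_sub {b : C} {x : ℝ} (t : ℝ) (hx : x ∈ spectrum ℝ b) :
    t - x ∈ spectrum ℝ (algebraMap ℝ C t - b) := by
  rw [← spectrum.singleton_sub_eq]
  exact Set.sub_mem_sub (Set.mem_singleton t) hx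

lemma mem_spectrum_algebraMap_add {b : C} {x : ℝ} (t : ℝ) (hx : x ∈ spectrum ℝ b) :
    t + x ∈ spectrum ℝ (algebraMap ℝ C t + b) := by
  rw [← spectrum.singleton_add_eq]
  exact Set.add_mem_add (Set.mem_singleton t) hx

/-- The spectral radius of a selfadjoint element is its norm (as an inequality criterion). -/
lemma spectralRadius_le_iff {b : C} (hb : IsSelfAdjoint b) {t : ℝ≥0} :
    spectralRadius ℂ b ≤ t ↔ ‖b‖₊ ≤ t := by
  rw [hb.spectralRadius_eq_nnnorm, ENNReal.coe_le_coe]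

lemma algebraMap_real_eq {E : Type*} [NormedRing E] [NormedAlgebra ℂ E] (t : ℝ) :
    algebraMap ℝ E t = algebraMap ℂ E (t : ℂ) := by
  rw [IsScalarTower.algebraMap_apply ℝ ℂ E t, Complex.coe_algebraMap]

end Helpers

end CPAux

open CPAux

section MainAux

variable {A B : Type*} [CStarAlgebra A] [CStarAlgebra B]
  (Φ : A →ₗ[ℂ] B)

lemma mapPhi_sub {m : ℕ} (M N : Matrix (Fin m) (Fin m) A) :
    (M - N).map ⇑Φ = M.map ⇑Φ - N.map ⇑Φ := by
  ext i j
  simp [Matrix.map_apply, Matrix.sub_apply, map_sub]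

lemma mapPhi_add {m : ℕ} (M N : Matrix (Fin m) (Fin m) A) :
    (M + N).map ⇑Φ = M.map ⇑Φ + N.map ⇑Φ := by
  ext i j
  simp [Matrix.map_apply, Matrix.add_apply, map_add]

lemma mapPhi_algebraMap {m : ℕ} (hΦ1 : Φ 1 = 1) (z : ℂ) :
    (algebraMap ℂ (Matrix (Fin m) (Fin m) A) z).map ⇑Φ
      = algebraMap ℂ (Matrix (Fin m) (Fin m) B) z := by
  ext i j
  simp only [Matrix.map_apply, Matrix.algebraMap_matrix_apply]
  split
  · rw [Algebra.algebraMap_eq_smul_one, Algebra.algebraMap_eq_smul_one, _root_.map_smul, hΦ1]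
  · exact map_zero Φ

end MainAux



theorem unital_map_completelyPositive_iff_selfAdjoint_contractive
    {A B : Type*} [CStarAlgebra A] [CStarAlgebra B]
    (Φ : A →ₗ[ℂ] B) (hΦ1 : Φ 1 = 1) :
    (∀ (n : ℕ), 1 ≤ n → ∀ a : Matrix (Fin n) (Fin n) A,
        (∃ x : Matrix (Fin n) (Fin n) A, a = star x * x) →
          ∃ y : Matrix (Fin n) (Fin n) B, a.map Φ = star y * y)
      ↔
    (∀ (n : ℕ), 1 ≤ n → ∀ a : Matrix (Fin n) (Fin n) A, star a = a →
        star (a.map Φ) = a.map Φ ∧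
          spectralRadius ℂ (a.map Φ) ≤ spectralRadius ℂ a) := by
  letI : PartialOrder A := CStarAlgebra.spectralOrder A
  haveI : StarOrderedRing A := CStarAlgebra.spectralOrderedRing A
  letI : PartialOrder B := CStarAlgebra.spectralOrder B
  haveI : StarOrderedRing B := CStarAlgebra.spectralOrderedRing B
  constructor
  · -- completely positive implies selfadjoint and contractive
    intro hCP m hm a ha
    letI : PartialOrder (CM (Fin m) A) := CStarAlgebra.spectralOrder _
    haveI : StarOrderedRing (CM (Fin m) A) := CStarAlgebra.spectralOrderedRing _
    letI : PartialOrder (CM (Fin m) B) := CStarAlgebra.spectralOrder _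
    haveI : StarOrderedRing (CM (Fin m) B) := CStarAlgebra.spectralOrderedRing _
    have ha' : IsSelfAdjoint (toCM (n := Fin m) (A := A) a) := ha
    set t : ℝ := ‖toCM (n := Fin m) (A := A) a‖ with ht
    set dA : Matrix (Fin m) (Fin m) A := algebraMap ℂ _ (t : ℂ) with hdA
    set dB : Matrix (Fin m) (Fin m) B := algebraMap ℂ _ (t : ℂ) with hdB
    have hcommA : toCM dA = algebraMap ℝ (CM (Fin m) A) t := by
      rw [algebraMap_real_eq]
      exact (toCMₐ (Fin m) A).commutes ((t : ℂ))
    have hcommB : toCM dB = algebraMap ℝ (CM (Fin m) B) t := by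
      rw [algebraMap_real_eq]
      exact (toCMₐ (Fin m) B).commutes ((t : ℂ))
    have h1 : (0 : CM (Fin m) A) ≤ toCM dA - toCM a := by
      rw [hcommA, sub_nonneg]
      exact ha'.le_algebraMap_norm_self
    have h2 : (0 : CM (Fin m) A) ≤ toCM dA + toCM a := by
      rw [hcommA]
      have h := IsSelfAdjoint.neg_algebraMap_norm_le_self (a := toCM a) ha'
      have h' := add_le_add_right h (algebraMap ℝ (CM (Fin m) A) ‖toCM a‖)
      simpa [add_comm] using h'
    obtain ⟨x₁, hx₁⟩ := exists_star_mul_self _ h1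
    obtain ⟨x₂, hx₂⟩ := exists_star_mul_self _ h2
    obtain ⟨y₁, hy₁⟩ := hCP m hm (dA - a) ⟨toM x₁, congrArg toM hx₁⟩
    obtain ⟨y₂, hy₂⟩ := hCP m hm (dA + a) ⟨toM x₂, congrArg toM hx₂⟩
    rw [mapPhi_sub, mapPhi_algebraMap Φ hΦ1, ← hdB] at hy₁
    have hy₂' : dB + a.map ⇑Φ = star y₂ * y₂ := by
      rw [← hy₂, mapPhi_add, hdA, mapPhi_algebraMap Φ hΦ1, ← hdB]
    -- move to CM over B
    set b : CM (Fin m) B := toCM (a.map ⇑Φ) with hb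
    have hb1 : (0 : CM (Fin m) B) ≤ algebraMap ℝ (CM (Fin m) B) t - b := by
      rw [← hcommB]
      rw [show toCM dB - b = star (toCM y₁) * toCM y₁ from congrArg toCM hy₁]
      exact star_mul_self_nonneg _
    have hb2 : (0 : CM (Fin m) B) ≤ algebraMap ℝ (CM (Fin m) B) t + b := by
      rw [← hcommB]
      rw [show toCM dB + b = star (toCM y₂) * toCM y₂ from congrArg toCM hy₂']
      exact star_mul_self_nonneg _
    have hbsa : IsSelfAdjoint b := by
      have e2 : toCM dB + b = star (toCM y₂) * toCM y₂ := congrArg toCM hy₂'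
      have heq : b = star (toCM y₂) * toCM y₂ - algebraMap ℝ (CM (Fin m) B) t := by
        rw [← e2, hcommB]
        abel
      rw [heq]
      exact (IsSelfAdjoint.star_mul_self _).sub (IsSelfAdjoint.algebraMap _ (.all t))
    refine ⟨hbsa, ?_⟩
    rw [← spectralRadius_toCM (a.map ⇑Φ), ← spectralRadius_toCM a,
      hbsa.spectralRadius_eq_nnnorm, ha'.spectralRadius_eq_nnnorm, ENNReal.coe_le_coe,
      ← NNReal.coe_le_coe, coe_nnnorm, coe_nnnorm]
    refine norm_le_of_spectrum b hbsa t (norm_nonneg _) fun x hx => ?_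
    have hxt1 : 0 ≤ t - x := spectrum_nonneg_of_nonneg hb1 (mem_spectrum_algebraMap_sub t hx)
    have hxt2 : 0 ≤ t + x := spectrum_nonneg_of_nonneg hb2 (mem_spectrum_algebraMap_add t hx)
    exact abs_le.mpr ⟨by linarith, by linarith⟩
  · -- selfadjoint & contractive implies completely positive
    intro hC m hm a hpos
    letI : PartialOrder (CM (Fin m) A) := CStarAlgebra.spectralOrder _
    haveI : StarOrderedRing (CM (Fin m) A) := CStarAlgebra.spectralOrderedRing _
    letI : PartialOrder (CM (Fin m) B) := CStarAlgebra.spectralOrder _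
    haveI : StarOrderedRing (CM (Fin m) B) := CStarAlgebra.spectralOrderedRing _
    obtain hB | hB := subsingleton_or_nontrivial B
    · exact ⟨0, Subsingleton.elim _ _⟩
    haveI : Nonempty (Fin m) := ⟨⟨0, hm⟩⟩
    haveI : Nontrivial (CM (Fin m) B) := inferInstanceAs (Nontrivial (Matrix (Fin m) (Fin m) B))
    obtain ⟨x, hx⟩ := hpos
    have ha0 : (0 : CM (Fin m) A) ≤ toCM a := by
      rw [show toCM a = star (toCM x) * toCM x from congrArg toCM hx]
      exact star_mul_self_nonneg _
    have ha' : IsSelfAdjoint (toCM (n := Fin m) (A := A) a) := .of_nonneg ha0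
    set t : ℝ := ‖toCM (n := Fin m) (A := A) a‖ with ht
    set dA : Matrix (Fin m) (Fin m) A := algebraMap ℂ _ (t : ℂ) with hdA
    set dB : Matrix (Fin m) (Fin m) B := algebraMap ℂ _ (t : ℂ) with hdB
    have hcommA : toCM dA = algebraMap ℝ (CM (Fin m) A) t := by
      rw [algebraMap_real_eq]
      exact (toCMₐ (Fin m) A).commutes ((t : ℂ))
    have hcommB : toCM dB = algebraMap ℝ (CM (Fin m) B) t := by
      rw [algebraMap_real_eq]
      exact (toCMₐ (Fin m) B).commutes ((t : ℂ))
    have hceq : toCM (dA - a) = algebraMap ℝ (CM (Fin m) A) t - toCM a := by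
      rw [show toCM (dA - a) = toCM dA - toCM a from rfl, hcommA]
    have hcsa : IsSelfAdjoint (toCM (dA - a)) := by
      rw [hceq]
      exact (IsSelfAdjoint.algebraMap _ (.all t)).sub ha'
    obtain ⟨hsa_am, hsr_am⟩ := hC m hm a ha'
    obtain ⟨hsa_cm, hsr_cm⟩ := hC m hm (dA - a) hcsa
    set b : CM (Fin m) B := toCM (a.map ⇑Φ) with hb
    have hbsa : IsSelfAdjoint b := hsa_am
    have hcm_eq : toCM ((dA - a).map ⇑Φ) = algebraMap ℝ (CM (Fin m) B) t - b := by
      rw [mapPhi_sub, mapPhi_algebraMap Φ hΦ1, ← hdB]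
      rw [show toCM (dB - a.map ⇑Φ) = toCM dB - b from rfl, hcommB]
    have hcsa' : IsSelfAdjoint (toCM ((dA - a).map ⇑Φ)) := hsa_cm
    -- ‖toCM (dA - a)‖ ≤ t
    have h0c : (0 : CM (Fin m) A) ≤ algebraMap ℝ (CM (Fin m) A) t - toCM a := by
      rw [sub_nonneg]
      exact ha'.le_algebraMap_norm_self
    have hnorm_c : ‖toCM (dA - a)‖ ≤ t := by
      rw [hceq]
      refine (CStarAlgebra.norm_le_iff_le_algebraMap _ (norm_nonneg (toCM a)) h0c).mpr ?_
      exact sub_le_self _ ha0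
    have hnorm_cm : ‖toCM ((dA - a).map ⇑Φ)‖ ≤ t := by
      rw [← spectralRadius_toCM ((dA - a).map ⇑Φ), ← spectralRadius_toCM (dA - a),
        hcsa'.spectralRadius_eq_nnnorm, hcsa.spectralRadius_eq_nnnorm, ENNReal.coe_le_coe,
        ← NNReal.coe_le_coe, coe_nnnorm, coe_nnnorm] at hsr_cm
      exact hsr_cm.trans hnorm_c
    have hbpos : (0 : CM (Fin m) B) ≤ b := by
      refine nonneg_of_spectrum b hbsa fun x hx => ?_
      have hmem : t - x ∈ spectrum ℝ (algebraMap ℝ (CM (Fin m) B) t - b) :=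
        mem_spectrum_algebraMap_sub t hx
      rw [← hcm_eq] at hmem
      have hle := spectrum.norm_le_norm_of_mem hmem
      rw [Real.norm_eq_abs] at hle
      have habs : |t - x| ≤ t := hle.trans hnorm_cm
      have := (abs_le.mp habs).2
      linarith
    obtain ⟨y, hy⟩ := exists_star_mul_self b hbpos
    exact ⟨toM y, congrArg toM hy⟩
end

section
/- (Stinespring dilation theorem) Let A be a unital C*-algebra, H a complex Hilbert space, and Φ : A → B(H) a unital completely positive linear map. Then there exist a complex Hilbert space K, an isometric complex-linear embedding V : H → K, and a unital *-homomorphism π : A → B(K) such that Φ(a) = V* ∘ π(a) ∘ V for all a ∈ A (equivalently, Φ(a) is the compression of π(a) to the image of H in K). -/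
noncomputable section

universe u v

set_option linter.unusedSectionVars false

namespace StineAux

open scoped InnerProductSpace RCLike
open Finsupp

variable {A : Type u} [CStarAlgebra A]
variable {H : Type v} [NormedAddCommGroup H] [InnerProductSpace ℂ H] [CompleteSpace H]

local notation "⟪" x ", " y "⟫" => @inner ℂ _ _ x y

/-- `algebraMap ℝ A ‖a‖² - star a * a` is of the form `star c * c`. -/
lemma exists_star_mul_self (a : A) :
    ∃ c : A, star c * c = ((‖a‖ ^ 2 : ℝ) : ℂ) • (1 : A) - star a * a := by
  letI : PartialOrder A := CStarAlgebra.spectralOrder A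
  letI : StarOrderedRing A := CStarAlgebra.spectralOrderedRing A
  set x : A := algebraMap ℝ A (‖a‖ ^ 2) - star a * a with hxdef
  have hx : 0 ≤ x := sub_nonneg.2 CStarAlgebra.star_mul_le_algebraMap_norm_sq
  refine ⟨CFC.sqrt x, ?_⟩
  have h1 : star (CFC.sqrt x) = CFC.sqrt x :=
    (IsSelfAdjoint.of_nonneg (CFC.sqrt_nonneg (a := x))).star_eq
  rw [h1, CFC.sqrt_mul_sqrt_self x hx, hxdef]
  congr 1
  rw [Algebra.algebraMap_eq_smul_one]
  rw [show ((‖a‖ ^ 2 : ℝ) : ℂ) = algebraMap ℝ ℂ (‖a‖ ^ 2) from rfl,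
    algebraMap_smul]

variable (Φ : A →ₗ[ℂ] (H →L[ℂ] H))

/-- The key positivity consequence of complete positivity. -/
lemma posB
    (hΦcp : ∀ (n : ℕ) (M : Matrix (Fin n) (Fin n) A),
      (∃ x : Matrix (Fin n) (Fin n) A, M = star x * x) →
        ∃ y : Matrix (Fin n) (Fin n) (H →L[ℂ] H), M.map Φ = star y * y)
    (n : ℕ) (a : Fin n → A) (h : Fin n → H) :
    ∃ r : ℝ, 0 ≤ r ∧ ∑ i, ∑ j, ⟪h i, Φ (star (a i) * a j) (h j)⟫ = (r : ℂ) := by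
  rcases Nat.eq_zero_or_pos n with hn | hn
  · subst hn; exact ⟨0, le_refl _, by simp⟩
  set z : Fin n := ⟨0, hn⟩
  set M : Matrix (Fin n) (Fin n) A := Matrix.of fun i j => star (a i) * a j with hM
  have hMx : ∃ x : Matrix (Fin n) (Fin n) A, M = star x * x := by
    refine ⟨Matrix.of fun i j => if i = z then a j else 0, ?_⟩
    ext i j
    rw [Matrix.mul_apply]
    have : ∀ k : Fin n,
        (star (Matrix.of fun i j => if i = z then a j else 0) : Matrix (Fin n) (Fin n) A) i k *
          (Matrix.of fun i j => if i = z then a j else 0) k j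
        = if k = z then star (a i) * a j else 0 := by
      intro k
      simp only [Matrix.star_apply, Matrix.of_apply]
      by_cases hk : k = z <;> simp [hk]
    rw [Finset.sum_congr rfl fun k _ => this k, Finset.sum_ite_eq' Finset.univ z
      (fun _ => star (a i) * a j)]
    simp [hM]
  obtain ⟨y, hy⟩ := hΦcp n M hMx
  have hyij : ∀ i j, Φ (M i j) = ∑ k, ContinuousLinearMap.adjoint (y k i) * y k j := by
    intro i j
    have := congrFun (congrFun hy i) j
    rw [Matrix.map_apply] at this
    rw [this, Matrix.mul_apply]
    refine Finset.sum_congr rfl fun k _ => ?_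
    rw [Matrix.star_apply, ContinuousLinearMap.star_eq_adjoint]
  refine ⟨∑ k, ‖∑ i, y k i (h i)‖ ^ 2, Finset.sum_nonneg fun k _ => sq_nonneg _, ?_⟩
  have key : ∀ i j, ⟪h i, Φ (star (a i) * a j) (h j)⟫
      = ∑ k, ⟪y k i (h i), y k j (h j)⟫ := by
    intro i j
    have hMij : star (a i) * a j = M i j := by simp [hM]
    rw [hMij, hyij i j]
    rw [ContinuousLinearMap.sum_apply, inner_sum]
    refine Finset.sum_congr rfl fun k _ => ?_
    rw [ContinuousLinearMap.mul_apply, ContinuousLinearMap.adjoint_inner_right]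
  calc ∑ i, ∑ j, ⟪h i, Φ (star (a i) * a j) (h j)⟫
      = ∑ i, ∑ j, ∑ k, ⟪y k i (h i), y k j (h j)⟫ := by
        exact Finset.sum_congr rfl fun i _ => Finset.sum_congr rfl fun j _ => key i j
    _ = ∑ i, ∑ k, ∑ j, ⟪y k i (h i), y k j (h j)⟫ :=
        Finset.sum_congr rfl fun i _ => Finset.sum_comm
    _ = ∑ k, ∑ i, ∑ j, ⟪y k i (h i), y k j (h j)⟫ := Finset.sum_comm
    _ = ∑ k, ⟪∑ i, y k i (h i), ∑ j, y k j (h j)⟫ := by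
        refine Finset.sum_congr rfl fun k _ => ?_
        rw [sum_inner]
        exact Finset.sum_congr rfl fun i _ => (inner_sum _ _ _).symm
    _ = ((∑ k, ‖∑ i, y k i (h i)‖ ^ 2 : ℝ) : ℂ) := by
        push_cast
        refine Finset.sum_congr rfl fun k _ => ?_
        rw [inner_self_eq_norm_sq_to_K]
        norm_cast

/-- Bundled hypotheses: unital completely positive. -/
class CP (Φ₀ : A →ₗ[ℂ] (H →L[ℂ] H)) : Prop where
  unital : Φ₀ 1 = 1
  cp : ∀ (n : ℕ) (M : Matrix (Fin n) (Fin n) A),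
      (∃ x : Matrix (Fin n) (Fin n) A, M = star x * x) →
        ∃ y : Matrix (Fin n) (Fin n) (H →L[ℂ] H), M.map Φ₀ = star y * y

/-- The pre-Hilbert space `A ⊗ H` realized as finitely supported functions. -/
def PreSp (_Φ₀ : A →ₗ[ℂ] (H →L[ℂ] H)) : Type (max u v) := A →₀ H

instance : AddCommGroup (PreSp Φ) := inferInstanceAs (AddCommGroup (A →₀ H))
instance : Module ℂ (PreSp Φ) := inferInstanceAs (Module ℂ (A →₀ H))

/-- The elementary tensor `a ⊗ h`. -/
def sgl (a : A) (h : H) : PreSp Φ := Finsupp.single a h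

/-- The sesquilinear form, bundled as a linear map in the second variable. -/
def BL (f : A →₀ H) : (A →₀ H) →ₗ[ℂ] ℂ :=
  Finsupp.lsum ℂ fun b => f.sum fun a h =>
    (((innerSL ℂ h).comp (Φ (star a * b))) : H →ₗ[ℂ] ℂ)

lemma BL_single_single (a b : A) (h k : H) :
    BL Φ (Finsupp.single a h) (Finsupp.single b k) = ⟪h, Φ (star a * b) k⟫ := by
  unfold BL
  rw [Finsupp.lsum_single]
  rw [Finsupp.sum_single_index (by ext k'; simp)]
  rfl

lemma BL_add_left (f g : A →₀ H) : BL Φ (f + g) = BL Φ f + BL Φ g := by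
  unfold BL
  rw [← map_add]
  congr 1
  funext b
  rw [Pi.add_apply, Finsupp.sum_add_index']
  · intro a; ext k'; simp
  · intro a h1 h2; ext k'; simp [inner_add_left]

lemma BL_smul_left (c : ℂ) (f : A →₀ H) :
    BL Φ (c • f) = (starRingEnd ℂ c) • BL Φ f := by
  unfold BL
  rw [← map_smul]
  congr 1
  funext b
  rw [Pi.smul_apply, Finsupp.sum_smul_index' (fun a => by ext k'; simp),
    Finsupp.smul_sum]
  refine Finsupp.sum_congr fun a _ => ?_
  ext k'
  simp [inner_smul_left]

lemma BL_zero_left : BL Φ 0 = 0 := by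
  have h := BL_add_left Φ 0 0
  rw [add_zero] at h
  exact (left_eq_add.mp h)

/-- `BL` as additive monoid hom in the first variable. -/
def BLhom : (A →₀ H) →+ ((A →₀ H) →ₗ[ℂ] ℂ) := AddMonoidHom.mk' (BL Φ) (BL_add_left Φ)

instance : Inner ℂ (PreSp Φ) := ⟨fun f g => BL Φ f g⟩

lemma inner_def (f g : PreSp Φ) : (⟪f, g⟫ : ℂ) = BL Φ f g := rfl

lemma inner_sgl_sgl (a b : A) (h k : H) :
    (⟪sgl Φ a h, sgl Φ b k⟫ : ℂ) = ⟪h, Φ (star a * b) k⟫ :=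
  BL_single_single Φ a b h k

lemma sum_sgl_eq (n : ℕ) (a : Fin n → A) (h : Fin n → H) :
    ((∑ i, sgl Φ (a i) (h i) : PreSp Φ) : A →₀ H)
      = ∑ i, Finsupp.single (a i) (h i) := rfl

lemma inner_sum_sum (n m : ℕ) (a : Fin n → A) (h : Fin n → H)
    (b : Fin m → A) (k : Fin m → H) :
    (⟪∑ i, sgl Φ (a i) (h i), ∑ j, sgl Φ (b j) (k j)⟫ : ℂ)
      = ∑ i, ∑ j, ⟪h i, Φ (star (a i) * b j) (k j)⟫ := by
  rw [inner_def]
  have h1 : BL Φ (∑ i, Finsupp.single (a i) (h i))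
      = ∑ i, BL Φ (Finsupp.single (a i) (h i)) := map_sum (BLhom Φ) _ _
  rw [show ((∑ i, sgl Φ (a i) (h i) : PreSp Φ) : A →₀ H)
    = ∑ i, Finsupp.single (a i) (h i) from rfl, h1]
  erw [LinearMap.sum_apply]
  refine Finset.sum_congr rfl fun i _ => ?_
  rw [show ((∑ j, sgl Φ (b j) (k j) : PreSp Φ) : A →₀ H)
    = ∑ j, Finsupp.single (b j) (k j) from rfl, map_sum]
  exact Finset.sum_congr rfl fun j _ => BL_single_single Φ _ _ _ _

lemma exists_repr (f : PreSp Φ) :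
    ∃ (n : ℕ) (a : Fin n → A) (h : Fin n → H), f = ∑ i, sgl Φ (a i) (h i) := by
  classical
  set g : A →₀ H := f with hg
  set e := g.support.equivFin.symm
  refine ⟨g.support.card, fun i => (e i : A), fun i => g (e i : A), ?_⟩
  have h1 : g = ∑ a ∈ g.support, Finsupp.single a (g a) := by
    conv_lhs => rw [← Finsupp.sum_single g]
    rfl
  show (g : A →₀ H) = ∑ i, Finsupp.single ((e i : A)) (g (e i : A))
  calc (g : A →₀ H) = ∑ a ∈ g.support, Finsupp.single a (g a) := h1
    _ = ∑ x : g.support, Finsupp.single (x : A) (g (x : A)) :=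
        (Finset.sum_coe_sort g.support (fun a => Finsupp.single (a : A) (g a))).symm
    _ = ∑ i, Finsupp.single ((e i : A)) (g (e i : A)) :=
        (Equiv.sum_comp e (fun x => Finsupp.single (x : A) (g (x : A)))).symm

variable [CP Φ]

lemma diag_real (f : PreSp Φ) : ∃ r : ℝ, 0 ≤ r ∧ (⟪f, f⟫ : ℂ) = (r : ℂ) := by
  obtain ⟨n, a, h, rfl⟩ := exists_repr Φ f
  rw [inner_sum_sum]
  exact posB Φ CP.cp n a h

lemma inner_expand_add (f g : PreSp Φ) :
    (⟪f + g, f + g⟫ : ℂ) = ⟪f, f⟫ + ⟪f, g⟫ + (⟪g, f⟫ + ⟪g, g⟫) := by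
  simp only [inner_def]
  erw [BL_add_left]
  erw [LinearMap.add_apply, map_add, map_add]

lemma inner_conj (f g : PreSp Φ) :
    (starRingEnd ℂ) (⟪g, f⟫ : ℂ) = ⟪f, g⟫ := by
  obtain ⟨rf, _, hf⟩ := diag_real Φ f
  obtain ⟨rg, _, hg⟩ := diag_real Φ g
  obtain ⟨r1, _, h1⟩ := diag_real Φ (f + g)
  obtain ⟨r2, _, h2⟩ := diag_real Φ (f + Complex.I • g)
  rw [inner_expand_add] at h1
  rw [inner_expand_add] at h2
  have e1 : (⟪f, Complex.I • g⟫ : ℂ) = Complex.I * ⟪f, g⟫ := by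
    rw [inner_def, inner_def]; erw [map_smul]; rfl
  have e2 : (⟪Complex.I • g, f⟫ : ℂ) = - (Complex.I * ⟪g, f⟫) := by
    rw [inner_def, inner_def]; erw [BL_smul_left]
    simp [Complex.conj_I]
    rfl
  have e3 : (⟪Complex.I • g, Complex.I • g⟫ : ℂ) = ⟪g, g⟫ := by
    rw [inner_def, inner_def]; erw [BL_smul_left, map_smul]
    simp [Complex.conj_I]
    change Complex.I * -(Complex.I * (BL Φ g) g) = (BL Φ g) g
    rw [mul_neg, ← mul_assoc, Complex.I_mul_I]; ring
  rw [e1, e2, e3, hf, hg] at h2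
  rw [hf, hg] at h1
  set z := (⟪f, g⟫ : ℂ)
  set w := (⟪g, f⟫ : ℂ)
  have him : z.im + w.im = 0 := by
    have h' := congrArg Complex.im h1
    simpa using h'
  have hre : z.re = w.re := by
    have h' := congrArg Complex.im h2
    simp [Complex.add_im, Complex.mul_im, Complex.I_re, Complex.I_im] at h'
    linarith
  apply Complex.ext
  · simp only [Complex.conj_re]
    exact hre.symm
  · simp only [Complex.conj_im]
    linarith

def preCore : PreInnerProductSpace.Core ℂ (PreSp Φ) where
  inner f g := ⟪f, g⟫
  conj_inner_symm := inner_conj Φ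
  re_inner_nonneg f := by
    obtain ⟨r, hr, h⟩ := diag_real Φ f
    rw [show (inner ℂ f f : ℂ) = (r : ℂ) from h]
    simpa using hr
  add_left x y z := by
    rw [inner_def, inner_def, inner_def]; erw [BL_add_left]; rfl
  smul_left x y r := by
    rw [inner_def, inner_def]; erw [BL_smul_left]; rfl

instance : SeminormedAddCommGroup (PreSp Φ) :=
  InnerProductSpace.Core.toSeminormedAddCommGroup (𝕜 := ℂ) (F := PreSp Φ) (c := preCore Φ)

instance : NormedSpace ℂ (PreSp Φ) :=
  InnerProductSpace.Core.toNormedSpace (𝕜 := ℂ) (F := PreSp Φ) (c := preCore Φ)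

instance : InnerProductSpace ℂ (PreSp Φ) where
  norm_sq_eq_re_inner f := by
    have hn : ‖f‖ = Real.sqrt (RCLike.re (⟪f, f⟫ : ℂ)) := rfl
    rw [hn]; exact Real.sq_sqrt ((preCore Φ).re_inner_nonneg f)
  conj_inner_symm := inner_conj Φ
  add_left x y z := (preCore Φ).add_left x y z
  smul_left x y r := (preCore Φ).smul_left x y r

lemma norm_def (f : PreSp Φ) : ‖f‖ = Real.sqrt (RCLike.re (⟪f, f⟫ : ℂ)) := rfl

/-! ### The dilation space -/

def Ksp : Type (max u v) := UniformSpace.Completion (SeparationQuotient (PreSp Φ))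

instance : NormedAddCommGroup (Ksp Φ) :=
  inferInstanceAs (NormedAddCommGroup (UniformSpace.Completion (SeparationQuotient (PreSp Φ))))
instance : InnerProductSpace ℂ (Ksp Φ) :=
  inferInstanceAs (InnerProductSpace ℂ (UniformSpace.Completion (SeparationQuotient (PreSp Φ))))
instance : CompleteSpace (Ksp Φ) :=
  inferInstanceAs (CompleteSpace (UniformSpace.Completion (SeparationQuotient (PreSp Φ))))

/-- The canonical map from the pre-Hilbert space to the dilation space. -/
def iota : PreSp Φ →L[ℂ] Ksp Φ :=
  (UniformSpace.Completion.toComplL).comp (SeparationQuotient.mkCLM ℂ (PreSp Φ))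

lemma iota_apply (f : PreSp Φ) :
    iota Φ f = ((SeparationQuotient.mk f : SeparationQuotient (PreSp Φ)) :
      UniformSpace.Completion (SeparationQuotient (PreSp Φ))) := rfl

lemma inner_iota (f g : PreSp Φ) : (⟪iota Φ f, iota Φ g⟫ : ℂ) = ⟪f, g⟫ := by
  rw [iota_apply, iota_apply]
  erw [show (⟪((SeparationQuotient.mk f : SeparationQuotient (PreSp Φ)) :
      UniformSpace.Completion (SeparationQuotient (PreSp Φ))),
      ((SeparationQuotient.mk g : SeparationQuotient (PreSp Φ)) :
      UniformSpace.Completion (SeparationQuotient (PreSp Φ)))⟫ : ℂ)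
    = ⟪(SeparationQuotient.mk f : SeparationQuotient (PreSp Φ)),
        (SeparationQuotient.mk g : SeparationQuotient (PreSp Φ))⟫ from
    UniformSpace.Completion.inner_coe _ _]
  exact SeparationQuotient.inner_mk_mk f g

lemma norm_iota (f : PreSp Φ) : ‖iota Φ f‖ = ‖f‖ := by
  rw [iota_apply]; erw [UniformSpace.Completion.norm_coe, SeparationQuotient.norm_mk]

lemma isometry_iota : Isometry (iota Φ) :=
  AddMonoidHomClass.isometry_of_norm (iota Φ) (norm_iota Φ)

lemma denseRange_iota : DenseRange (iota Φ) := by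
  have h1 : ⇑(iota Φ) = ((↑) : SeparationQuotient (PreSp Φ) →
      UniformSpace.Completion (SeparationQuotient (PreSp Φ))) ∘ SeparationQuotient.mk := rfl
  rw [h1]
  exact UniformSpace.Completion.denseRange_coe.comp
    SeparationQuotient.surjective_mk.denseRange (UniformSpace.Completion.continuous_coe _)

/-- Equality in `Ksp` of the images of two elements of the pre-space having the same
inner products against everything. -/
lemma iota_eq {p q : PreSp Φ} (h : ∀ g : PreSp Φ, (⟪g, p⟫ : ℂ) = ⟪g, q⟫) :
    iota Φ p = iota Φ q := by
  have heq : (fun z : Ksp Φ => (⟪z, iota Φ p⟫ : ℂ)) = fun z => (⟪z, iota Φ q⟫ : ℂ) := by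
    refine (denseRange_iota Φ).equalizer ?_ ?_ (funext fun g => ?_)
    · exact Continuous.inner continuous_id continuous_const
    · exact Continuous.inner continuous_id continuous_const
    · show (⟪iota Φ g, iota Φ p⟫ : ℂ) = ⟪iota Φ g, iota Φ q⟫
      rw [inner_iota, inner_iota]; exact h g
  have hz : (⟪iota Φ p - iota Φ q, iota Φ p - iota Φ q⟫ : ℂ) = 0 := by
    rw [inner_sub_right, congrFun heq (iota Φ p - iota Φ q), sub_self]
  rw [inner_self_eq_zero] at hz
  exact sub_eq_zero.mp hz

/-- Equality of operators agreeing on the dense range of `iota`. -/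
lemma op_ext {T S : Ksp Φ →L[ℂ] Ksp Φ}
    (h : ∀ f : PreSp Φ, T (iota Φ f) = S (iota Φ f)) : T = S := by
  refine ContinuousLinearMap.ext fun z => ?_
  exact congrFun ((denseRange_iota Φ).equalizer T.continuous S.continuous (funext h)) z

/-! ### The left-multiplication operators -/

/-- Left multiplication by `x` on the pre-space. -/
def piP (x : A) : (A →₀ H) →ₗ[ℂ] (A →₀ H) :=
  Finsupp.lsum ℂ fun b => Finsupp.lsingle (x * b)

lemma piP_single (x b : A) (h : H) :
    piP (H := H) x (Finsupp.single b h) = Finsupp.single (x * b) h := by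
  simp [piP]

/-- `piP` as a map of the pre-space. -/
def piPS (x : A) (f : PreSp Φ) : PreSp Φ := piP x f

lemma piP_sum (x : A) (m : ℕ) (b : Fin m → A) (h : Fin m → H) :
    piPS Φ x (∑ j, sgl Φ (b j) (h j)) = ∑ j, sgl Φ (x * b j) (h j) := by
  show piP x (∑ j, Finsupp.single (b j) (h j))
      = (∑ j, Finsupp.single (x * b j) (h j) : A →₀ H)
  rw [map_sum]
  exact Finset.sum_congr rfl fun j _ => piP_single x (b j) (h j)

lemma piP_one : piP (H := H) (1 : A) = LinearMap.id := by
  apply Finsupp.lhom_ext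
  intro a b
  simp [piP_single]

lemma piP_mul (x y : A) : piP (H := H) (x * y) = (piP x).comp (piP y) := by
  apply Finsupp.lhom_ext
  intro a b
  simp [piP_single, mul_assoc]

lemma inner_piP_add (x y : A) (f g : PreSp Φ) :
    (⟪g, piPS Φ (x + y) f⟫ : ℂ)
      = ⟪g, piPS Φ x f⟫ + ⟪g, piPS Φ y f⟫ := by
  obtain ⟨n, c, k, rfl⟩ := exists_repr Φ g
  obtain ⟨m, b, h, rfl⟩ := exists_repr Φ f
  rw [piP_sum, piP_sum, piP_sum, inner_sum_sum, inner_sum_sum, inner_sum_sum,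
    ← Finset.sum_add_distrib]
  refine Finset.sum_congr rfl fun i _ => ?_
  rw [← Finset.sum_add_distrib]
  refine Finset.sum_congr rfl fun j _ => ?_
  rw [show star (c i) * ((x + y) * b j)
      = star (c i) * (x * b j) + star (c i) * (y * b j) by rw [add_mul, mul_add]]
  rw [map_add, ContinuousLinearMap.add_apply, inner_add_right]

lemma inner_piP_smul (t : ℂ) (x : A) (f g : PreSp Φ) :
    (⟪g, piPS Φ (t • x) f⟫ : ℂ) = t * ⟪g, piPS Φ x f⟫ := by
  obtain ⟨n, c, k, rfl⟩ := exists_repr Φ g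
  obtain ⟨m, b, h, rfl⟩ := exists_repr Φ f
  rw [piP_sum, piP_sum, inner_sum_sum, inner_sum_sum, Finset.mul_sum]
  refine Finset.sum_congr rfl fun i _ => ?_
  rw [Finset.mul_sum]
  refine Finset.sum_congr rfl fun j _ => ?_
  rw [show star (c i) * (t • x * b j) = t • (star (c i) * (x * b j)) by
    rw [smul_mul_assoc, mul_smul_comm]]
  rw [map_smul, ContinuousLinearMap.smul_apply, inner_smul_right]

lemma inner_piP_star (x : A) (f g : PreSp Φ) :
    (⟪piPS Φ (star x) g, f⟫ : ℂ) = ⟪g, piPS Φ x f⟫ := by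
  obtain ⟨n, c, k, rfl⟩ := exists_repr Φ g
  obtain ⟨m, b, h, rfl⟩ := exists_repr Φ f
  rw [piP_sum, piP_sum, inner_sum_sum, inner_sum_sum]
  refine Finset.sum_congr rfl fun i _ => Finset.sum_congr rfl fun j _ => ?_
  rw [show star (star x * c i) * b j = star (c i) * (x * b j) by
    rw [star_mul, star_star, mul_assoc]]

/-! ### The norm bound -/

lemma boundDiag (x : A) (f : PreSp Φ) :
    RCLike.re (⟪piPS Φ x f, piPS Φ x f⟫ : ℂ) ≤ ‖x‖ ^ 2 * RCLike.re (⟪f, f⟫ : ℂ) := by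
  obtain ⟨m, b, h, rfl⟩ := exists_repr Φ f
  obtain ⟨c, hc⟩ := exists_star_mul_self x
  obtain ⟨r, hr0, hr⟩ := posB Φ CP.cp m (fun j => c * b j) h
  rw [piP_sum, inner_sum_sum, inner_sum_sum]
  have key : ∀ i j : Fin m, (⟪h i, Φ (star (c * b i) * (c * b j)) (h j)⟫ : ℂ)
      = ((‖x‖ ^ 2 : ℝ) : ℂ) * ⟪h i, Φ (star (b i) * b j) (h j)⟫
        - ⟪h i, Φ (star (x * b i) * (x * b j)) (h j)⟫ := by
    intro i j
    have halg : star (c * b i) * (c * b j)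
        = ((‖x‖ ^ 2 : ℝ) : ℂ) • (star (b i) * b j) - star (x * b i) * (x * b j) := by
      rw [star_mul]
      calc star (b i) * star c * (c * b j) = star (b i) * (star c * c * b j) := by
            rw [mul_assoc, mul_assoc]
        _ = _ := by
            rw [hc, sub_mul, smul_mul_assoc, one_mul, mul_sub, mul_smul_comm]
            congr 1
            rw [star_mul, mul_assoc, mul_assoc]
    rw [halg, map_sub, map_smul, ContinuousLinearMap.sub_apply,
      ContinuousLinearMap.smul_apply, inner_sub_right, inner_smul_right]
  have hsum : ((r : ℝ) : ℂ)
      = ((‖x‖ ^ 2 : ℝ) : ℂ) * (∑ i, ∑ j, (⟪h i, Φ (star (b i) * b j) (h j)⟫ : ℂ))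
        - ∑ i, ∑ j, (⟪h i, Φ (star (x * b i) * (x * b j)) (h j)⟫ : ℂ) := by
    rw [← hr]
    rw [Finset.sum_congr rfl fun i _ => Finset.sum_congr rfl fun j _ => key i j]
    simp [Finset.sum_sub_distrib, Finset.mul_sum]
  set S0 := ∑ i, ∑ j, (⟪h i, Φ (star (b i) * b j) (h j)⟫ : ℂ) with hS0
  set S1 := ∑ i, ∑ j, (⟪h i, Φ (star (x * b i) * (x * b j)) (h j)⟫ : ℂ) with hS1
  have h2 : r = ‖x‖ ^ 2 * S0.re - S1.re := by
    have h3 := congrArg Complex.re hsum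
    rw [Complex.ofReal_re, Complex.sub_re, Complex.re_ofReal_mul] at h3
    exact h3
  simp only [RCLike.re_to_complex]
  linarith

lemma norm_piPS_le (x : A) (f : PreSp Φ) : ‖piPS Φ x f‖ ≤ ‖x‖ * ‖f‖ := by
  rw [norm_def, norm_def]
  calc Real.sqrt (RCLike.re (⟪piPS Φ x f, piPS Φ x f⟫ : ℂ))
      ≤ Real.sqrt (‖x‖ ^ 2 * RCLike.re (⟪f, f⟫ : ℂ)) :=
        Real.sqrt_le_sqrt (boundDiag Φ x f)
    _ = ‖x‖ * Real.sqrt (RCLike.re (⟪f, f⟫ : ℂ)) := by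
        rw [Real.sqrt_mul (sq_nonneg _), Real.sqrt_sq (norm_nonneg _)]

/-- `piP` as a linear map of the pre-space. -/
def piPSL (x : A) : PreSp Φ →ₗ[ℂ] PreSp Φ := piP x

/-- `piP` as a continuous linear map of the pre-space. -/
def piPL (x : A) : PreSp Φ →L[ℂ] PreSp Φ :=
  LinearMap.mkContinuous (piPSL Φ x) ‖x‖ (fun f => norm_piPS_le Φ x f)

/-- The dilation action of `x` on `Ksp`, defined by extension from the separation quotient. -/
def piK (x : A) : Ksp Φ →L[ℂ] Ksp Φ :=
  ContinuousLinearMap.extend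
    ((((iota Φ).comp (piPL Φ x)) : PreSp Φ →L[ℂ] Ksp Φ).comp
      (SeparationQuotient.outCLM ℂ (PreSp Φ)))
    (UniformSpace.Completion.toComplL :
      SeparationQuotient (PreSp Φ) →L[ℂ] Ksp Φ)

lemma piK_iota (x : A) (f : PreSp Φ) : piK Φ x (iota Φ f) = iota Φ (piPS Φ x f) := by
  have h1 : piK Φ x (iota Φ f)
      = iota Φ (piPS Φ x (SeparationQuotient.outCLM ℂ (PreSp Φ) (SeparationQuotient.mk f))) := by
    have := ContinuousLinearMap.extend_eq
      (((((iota Φ).comp (piPL Φ x)) : PreSp Φ →L[ℂ] Ksp Φ).comp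
        (SeparationQuotient.outCLM ℂ (PreSp Φ))))
      (e := (UniformSpace.Completion.toComplL :
        SeparationQuotient (PreSp Φ) →L[ℂ] Ksp Φ))
      (UniformSpace.Completion.denseRange_coe)
      (UniformSpace.Completion.isUniformInducing_coe _)
      (SeparationQuotient.mk f)
    exact this
  rw [h1]
  have hsep : Inseparable (SeparationQuotient.outCLM ℂ (PreSp Φ) (SeparationQuotient.mk f)) f :=
    SeparationQuotient.mk_eq_mk.mp (SeparationQuotient.mk_outCLM ℂ _)
  have hsep2 : Inseparable
      (piPS Φ x (SeparationQuotient.outCLM ℂ (PreSp Φ) (SeparationQuotient.mk f)))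
      (piPS Φ x f) := hsep.map (piPL Φ x).continuous
  exact (hsep2.map (iota Φ).continuous).eq

lemma piK_one : piK Φ 1 = 1 := by
  refine op_ext Φ fun f => ?_
  rw [piK_iota, ContinuousLinearMap.one_apply]
  congr 1
  show piP (1 : A) f = f
  rw [piP_one]
  rfl

lemma piK_mul (x y : A) : piK Φ (x * y) = piK Φ x * piK Φ y := by
  refine op_ext Φ fun f => ?_
  rw [ContinuousLinearMap.mul_apply, piK_iota, piK_iota, piK_iota]
  congr 1
  show piP (x * y) f = piP x (piP y f)
  rw [piP_mul]
  rfl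

lemma piK_add (x y : A) : piK Φ (x + y) = piK Φ x + piK Φ y := by
  refine op_ext Φ fun f => ?_
  rw [ContinuousLinearMap.add_apply, piK_iota, piK_iota, piK_iota, ← map_add]
  exact iota_eq Φ fun g => by rw [inner_piP_add, inner_add_right]

lemma piK_smul (t : ℂ) (x : A) : piK Φ (t • x) = t • piK Φ x := by
  refine op_ext Φ fun f => ?_
  rw [ContinuousLinearMap.smul_apply, piK_iota, piK_iota, ← map_smul]
  exact iota_eq Φ fun g => by rw [inner_piP_smul, inner_smul_right]

lemma piK_zero : piK Φ 0 = 0 := by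
  have h := piK_smul Φ 0 0
  rw [zero_smul, zero_smul] at h
  exact h

lemma piK_star (x : A) : piK Φ (star x) = star (piK Φ x) := by
  rw [ContinuousLinearMap.star_eq_adjoint]
  refine (ContinuousLinearMap.eq_adjoint_iff _ _).mpr ?_
  have step1 : ∀ (g : PreSp Φ) (w : Ksp Φ),
      (⟪piK Φ (star x) (iota Φ g), w⟫ : ℂ) = ⟪iota Φ g, piK Φ x w⟫ := by
    intro g w
    have hcont1 : Continuous fun w : Ksp Φ => (⟪piK Φ (star x) (iota Φ g), w⟫ : ℂ) :=
      Continuous.inner continuous_const continuous_id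
    have hcont2 : Continuous fun w : Ksp Φ => (⟪iota Φ g, piK Φ x w⟫ : ℂ) :=
      Continuous.inner continuous_const ((piK Φ x).continuous)
    have heq := (denseRange_iota Φ).equalizer hcont1 hcont2 (funext fun f => by
      show (⟪piK Φ (star x) (iota Φ g), iota Φ f⟫ : ℂ) = ⟪iota Φ g, piK Φ x (iota Φ f)⟫
      rw [piK_iota, piK_iota, inner_iota, inner_iota]
      exact inner_piP_star Φ x f g)
    exact congrFun heq w
  intro z w
  have hcont1 : Continuous fun z : Ksp Φ => (⟪piK Φ (star x) z, w⟫ : ℂ) :=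
    Continuous.inner ((piK Φ (star x)).continuous) continuous_const
  have hcont2 : Continuous fun z : Ksp Φ => (⟪z, piK Φ x w⟫ : ℂ) :=
    Continuous.inner continuous_id continuous_const
  have heq := (denseRange_iota Φ).equalizer hcont1 hcont2 (funext fun g => step1 g w)
  exact congrFun heq z

lemma piK_commutes (t : ℂ) :
    piK Φ (algebraMap ℂ A t) = algebraMap ℂ (Ksp Φ →L[ℂ] Ksp Φ) t := by
  rw [Algebra.algebraMap_eq_smul_one, Algebra.algebraMap_eq_smul_one, piK_smul, piK_one]

/-- The dilation `*`-homomorphism. -/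
def piHom : A →⋆ₐ[ℂ] (Ksp Φ →L[ℂ] Ksp Φ) where
  toFun := piK Φ
  map_one' := piK_one Φ
  map_mul' := piK_mul Φ
  map_zero' := piK_zero Φ
  map_add' := piK_add Φ
  commutes' := piK_commutes Φ
  map_star' := piK_star Φ

/-! ### The isometry `V` -/

def VL : H →ₗ[ℂ] Ksp Φ :=
  ((iota Φ : PreSp Φ →L[ℂ] Ksp Φ) : PreSp Φ →ₗ[ℂ] Ksp Φ).comp
    ((Finsupp.lsingle 1 : H →ₗ[ℂ] (A →₀ H)) : H →ₗ[ℂ] PreSp Φ)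

lemma VL_apply (h : H) : VL Φ h = iota Φ (sgl Φ 1 h) := rfl

lemma norm_VL (h : H) : ‖VL Φ h‖ = ‖h‖ := by
  rw [VL_apply, norm_iota, norm_def, inner_sgl_sgl, star_one, one_mul,
    CP.unital (Φ₀ := Φ), ContinuousLinearMap.one_apply]
  rw [show RCLike.re (⟪h, h⟫ : ℂ) = ‖h‖ ^ 2 from inner_self_eq_norm_sq h]
  exact Real.sqrt_sq (norm_nonneg h)

def Vmap : H →L[ℂ] Ksp Φ :=
  LinearMap.mkContinuous (VL Φ) 1 (fun h => by rw [norm_VL, one_mul])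

lemma Vmap_apply (h : H) : Vmap Φ h = iota Φ (sgl Φ 1 h) := rfl

lemma isometry_V : Isometry (Vmap Φ) :=
  AddMonoidHomClass.isometry_of_norm (Vmap Φ) (fun h => norm_VL Φ h)

lemma compression (a : A) :
    Φ a = (ContinuousLinearMap.adjoint (Vmap Φ)).comp ((piK Φ a).comp (Vmap Φ)) := by
  refine ContinuousLinearMap.ext fun h => ?_
  refine ext_inner_left ℂ fun k => ?_
  rw [ContinuousLinearMap.comp_apply, ContinuousLinearMap.comp_apply,
    ContinuousLinearMap.adjoint_inner_right]
  rw [Vmap_apply, Vmap_apply, piK_iota, inner_iota]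
  rw [show piPS Φ a (sgl Φ 1 h) = sgl Φ (a * 1) h from piP_single a 1 h]
  rw [inner_sgl_sgl, star_one, one_mul, mul_one]


end StineAux

end

/-!
**Statement 3 (Stinespring dilation theorem).** Every unital completely positive map
`Φ : A → B(H)` is a compression `Φ(a) = V* ∘ π(a) ∘ V` of a unital `*`-homomorphism
`π : A → B(K)` along an isometric embedding `V : H → K`.

Complete positivity is expressed by: for every `n`, the entrywise map `Φₙ` on `n × n`
matrices sends positive elements (those of the form `star x * x`) to positive elements.
-/

theorem stinespring_dilation
    {A : Type u} [CStarAlgebra A]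
    {H : Type v} [NormedAddCommGroup H] [InnerProductSpace ℂ H] [CompleteSpace H]
    (Φ : A →ₗ[ℂ] (H →L[ℂ] H)) (hΦ1 : Φ 1 = 1)
    (hΦcp : ∀ (n : ℕ) (M : Matrix (Fin n) (Fin n) A),
      (∃ x : Matrix (Fin n) (Fin n) A, M = star x * x) →
        ∃ y : Matrix (Fin n) (Fin n) (H →L[ℂ] H), M.map Φ = star y * y) :
    ∃ (K : Type (max u v)) (_ : NormedAddCommGroup K) (_ : InnerProductSpace ℂ K)
      (_ : CompleteSpace K) (V : H →L[ℂ] K) (π : A →⋆ₐ[ℂ] (K →L[ℂ] K)),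
      Isometry V ∧
      ∀ a : A, Φ a = (ContinuousLinearMap.adjoint V).comp ((π a).comp V) := by
  haveI : StineAux.CP Φ := ⟨hΦ1, hΦcp⟩
  exact ⟨StineAux.Ksp Φ, inferInstance, inferInstance, inferInstance,
    StineAux.Vmap Φ, StineAux.piHom Φ, StineAux.isometry_V Φ,
    fun a => StineAux.compression Φ a⟩
end

section
/- (Kadison–Schwarz inequality) Let A and B be unital C*-algebras and Φ : A → B a unital completely positive linear map. Then for every a ∈ A one has Φ(a)* Φ(a) ≤ Φ(a* a) in the canonical order of the C*-algebra B. -/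
/-!
**Statement 4 (Kadison–Schwarz inequality).** If `Φ : A → B` is a unital completely
positive map between unital C⋆-algebras, then `Φ(a)* Φ(a) ≤ Φ(a* a)` for all `a ∈ A`.

The inequality `x ≤ y` in the canonical order of the C⋆-algebra `B` is expressed by the
(equivalent) condition that `y - x` is positive, i.e. of the form `star z * z`; similarly,
complete positivity is expressed via positive elements of matrix algebras being of the form
`star x * x`.
-/

lemma exists_star_mul_self_of_nonneg {B : Type*} [CStarAlgebra B] [PartialOrder B]
    [StarOrderedRing B] {x : B} (hx : 0 ≤ x) :
    ∃ z : B, x = star z * z := by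
  refine ⟨CFC.sqrt x, ?_⟩
  rw [(IsSelfAdjoint.of_nonneg (CFC.sqrt_nonneg x)).star_eq, CFC.sqrt_mul_sqrt_self x hx]

theorem kadison_schwarz
    {A B : Type*} [CStarAlgebra A] [CStarAlgebra B]
    (Φ : A →ₗ[ℂ] B) (hΦ1 : Φ 1 = 1)
    (hΦcp : ∀ (n : ℕ) (M : Matrix (Fin n) (Fin n) A),
      (∃ x : Matrix (Fin n) (Fin n) A, M = star x * x) →
        ∃ y : Matrix (Fin n) (Fin n) B, M.map Φ = star y * y)
    (a : A) :
    ∃ z : B, Φ (star a * a) - star (Φ a) * Φ a = star z * z := by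
  letI := CStarAlgebra.spectralOrder B
  haveI := CStarAlgebra.spectralOrderedRing (A := B)
  set x : Matrix (Fin 2) (Fin 2) A := !![1, a; 0, 0] with hxdef
  obtain ⟨y, hy⟩ := hΦcp 2 (star x * x) ⟨x, rfl⟩
  set b := Φ a with hb
  have h00 := congrFun (congrFun hy 0) 0
  have h01 := congrFun (congrFun hy 0) 1
  have h11 := congrFun (congrFun hy 1) 1
  simp [Matrix.map_apply, Matrix.mul_apply, Matrix.star_apply, Fin.sum_univ_two,
    hxdef, hΦ1] at h00 h01 h11
  -- h00 : 1 = star (y 0 0) * y 0 0 + star (y 1 0) * y 1 0  (or similar)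
  have h10 : star (y 0 1) * y 0 0 + star (y 1 1) * y 1 0 = star b := by
    have := congrArg star h01
    simpa [star_add, star_mul, add_comm] using this.symm
  set w : Fin 2 → B := fun k => y k 1 - y k 0 * b with hw
  have key : Φ (star a * a) - star b * b = ∑ k : Fin 2, star (w k) * w k := by
    have expand : ∑ k : Fin 2, star (w k) * w k =
        (star (y 0 1) * y 0 1 + star (y 1 1) * y 1 1)
        - (star (y 0 1) * y 0 0 + star (y 1 1) * y 1 0) * b
        - star b * (star (y 0 0) * y 0 1 + star (y 1 0) * y 1 1)
        + star b * ((star (y 0 0) * y 0 0 + star (y 1 0) * y 1 0) * b) := by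
      simp only [hw, Fin.sum_univ_two, star_sub, star_mul]
      noncomm_ring
    rw [expand, ← h11, ← h01, h10, ← h00, one_mul]
    noncomm_ring
  have hnn : 0 ≤ ∑ k : Fin 2, star (w k) * w k :=
    Finset.sum_nonneg fun k _ => star_mul_self_nonneg (w k)
  rw [hb] at key
  rw [key]
  exact exists_star_mul_self_of_nonneg hnn
end

section
/- (Multiplicative domain) Let A and B be unital C*-algebras and Φ : A → B a unital completely positive linear map. Suppose a ∈ A satisfies Φ(a* a) = Φ(a)* Φ(a) and Φ(a a*) = Φ(a) Φ(a)*. Then for every x ∈ A one has Φ(a x) = Φ(a) Φ(x) and Φ(x a) = Φ(x) Φ(a). -/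
/-!
**Statement 5 (multiplicative domain).** Let `Φ : A → B` be a unital completely positive
map between unital C⋆-algebras and suppose `a ∈ A` satisfies `Φ(a* a) = Φ(a)* Φ(a)` and
`Φ(a a*) = Φ(a) Φ(a)*`.  Then `Φ(a x) = Φ(a) Φ(x)` and `Φ(x a) = Φ(x) Φ(a)` for all `x`.

Complete positivity is expressed by: for every `n`, the entrywise map `Φₙ` on `n × n`
matrices sends positive elements (those of the form `star x * x`) to positive elements.
-/

theorem multiplicative_domain
    {A B : Type*} [CStarAlgebra A] [CStarAlgebra B]
    (Φ : A →ₗ[ℂ] B) (hΦ1 : Φ 1 = 1)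
    (hΦcp : ∀ (n : ℕ) (M : Matrix (Fin n) (Fin n) A),
      (∃ x : Matrix (Fin n) (Fin n) A, M = star x * x) →
        ∃ y : Matrix (Fin n) (Fin n) B, M.map Φ = star y * y)
    (a : A)
    (ha₁ : Φ (star a * a) = star (Φ a) * Φ a)
    (ha₂ : Φ (a * star a) = Φ a * star (Φ a)) :
    ∀ x : A, Φ (a * x) = Φ a * Φ x ∧ Φ (x * a) = Φ x * Φ a := by
  classical
  letI : PartialOrder A := CStarAlgebra.spectralOrder A
  haveI : StarOrderedRing A := CStarAlgebra.spectralOrderedRing A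
  letI : PartialOrder B := CStarAlgebra.spectralOrder B
  haveI : StarOrderedRing B := CStarAlgebra.spectralOrderedRing B
  -- Φ sends elements of the form `star u * u` to elements of the same form.
  have hpos : ∀ u : A, ∃ v : B, Φ (star u * u) = star v * v := by
    intro u
    obtain ⟨y, hy⟩ := hΦcp 1 (Matrix.of fun _ _ => star u * u)
      ⟨Matrix.of fun _ _ => u, by
        ext i j
        simp [Matrix.mul_apply, Matrix.star_apply]⟩
    refine ⟨y 0 0, ?_⟩
    have := congrArg (fun N => N 0 0) hy
    simpa [Matrix.mul_apply, Matrix.map_apply, Matrix.star_apply] using this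
  -- Φ is a positive map.
  have hpos' : ∀ p : A, 0 ≤ p → 0 ≤ Φ p := by
    intro p hp
    obtain ⟨v, hv⟩ := hpos (CFC.sqrt p)
    have h1 : star (CFC.sqrt p) = CFC.sqrt p :=
      (IsSelfAdjoint.of_nonneg (CFC.sqrt_nonneg (a := p))).star_eq
    have h2 : CFC.sqrt p * CFC.sqrt p = p := CFC.sqrt_mul_sqrt_self p hp
    rw [h1, h2] at hv
    rw [hv]
    exact star_mul_self_nonneg v
  -- Φ preserves selfadjointness.
  have hsa : ∀ h : A, IsSelfAdjoint h → IsSelfAdjoint (Φ h) := by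
    intro h hh
    have hdec : h⁺ - h⁻ = h := CFC.posPart_sub_negPart h hh
    rw [← hdec, map_sub]
    exact ((hpos' _ (CFC.posPart_nonneg h)).isSelfAdjoint).sub
      ((hpos' _ (CFC.negPart_nonneg h)).isSelfAdjoint)
  -- Φ is star-preserving.
  have hstar : ∀ z : A, Φ (star z) = star (Φ z) := by
    intro z
    have h1 : IsSelfAdjoint (Φ (z + star z)) :=
      hsa _ (by simp [IsSelfAdjoint, star_add, add_comm])
    have h2 : IsSelfAdjoint (Φ (Complex.I • (z - star z))) := by
      refine hsa _ ?_
      simp only [IsSelfAdjoint, star_smul, star_sub, star_star, Complex.star_def,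
        Complex.conj_I, neg_smul, smul_sub]
      abel
    have e0 : star z = (2:ℂ)⁻¹ • ((z + star z) + Complex.I • (Complex.I • (z - star z))) := by
      rw [smul_smul, Complex.I_mul_I]
      simp [smul_sub, smul_add, neg_smul, sub_eq_add_neg]
      module
    have e0' : z = (2:ℂ)⁻¹ • ((z + star z) - Complex.I • (Complex.I • (z - star z))) := by
      rw [smul_smul, Complex.I_mul_I]
      simp [smul_sub, smul_add, neg_smul, sub_eq_add_neg]
      module
    have e1 : Φ (star z) = (2:ℂ)⁻¹ • (Φ (z + star z) + Complex.I • Φ (Complex.I • (z - star z))) := by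
      conv_lhs => rw [e0]
      simp [map_smul, map_add]
    have e2 : Φ z = (2:ℂ)⁻¹ • (Φ (z + star z) - Complex.I • Φ (Complex.I • (z - star z))) := by
      conv_lhs => rw [e0']
      simp [map_smul, map_sub]
    rw [e1, e2, star_smul, star_sub, star_smul, h1.star_eq, h2.star_eq]
    simp [Complex.star_def, Complex.conj_I, sub_eq_add_neg, neg_smul]
    abel
  -- The key lemma: if `Φ(b* b) = Φ(b)* Φ(b)` then `Φ(b* x) = Φ(b)* Φ(x)` for all `x`.
  have key : ∀ b x : A, Φ (star b * b) = star (Φ b) * Φ b → Φ (star b * x) = star (Φ b) * Φ x := by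
    intro b x hb
    set e : Fin 3 → A := ![1, b, x] with he
    obtain ⟨y, hy⟩ := hΦcp 3 (Matrix.of fun i j => star (e i) * e j)
      ⟨Matrix.of fun i j => if i = 0 then e j else 0, by
        ext i j
        simp [Matrix.mul_apply, Matrix.star_apply, Fin.sum_univ_three]⟩
    have hS : ∀ i j, (∑ k, star (y k i) * y k j) = Φ (star (e i) * e j) := by
      intro i j
      have := congrArg (fun N => N i j) hy
      simp only [Matrix.map_apply, Matrix.of_apply, Matrix.mul_apply, Matrix.star_apply] at this
      exact this.symm
    set c := Φ b with hc
    set z : Fin 3 → B := fun k => y k 1 - y k 0 * c with hzdef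
    have hS00 : (∑ k, star (y k 0) * y k 0) = 1 := by
      rw [hS 0 0]; simp [he, hΦ1]
    have hS01 : (∑ k, star (y k 0) * y k 1) = c := by
      rw [hS 0 1]; simp [he, hc]
    have hS10 : (∑ k, star (y k 1) * y k 0) = star c := by
      have : (∑ k, star (y k 1) * y k 0) = star (∑ k, star (y k 0) * y k 1) := by
        rw [star_sum]
        simp [star_mul]
      rw [this, hS01]
    have hS11 : (∑ k, star (y k 1) * y k 1) = star c * c := by
      rw [hS 1 1]; simp [he]; exact hb
    have hS02 : (∑ k, star (y k 0) * y k 2) = Φ x := by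
      rw [hS 0 2]; simp [he]
    have hS12 : (∑ k, star (y k 1) * y k 2) = Φ (star b * x) := by
      rw [hS 1 2]; simp [he]
    have hsum0 : (∑ k, star (z k) * z k) = 0 := by
      have expand : (∑ k, star (z k) * z k)
          = (∑ k, star (y k 1) * y k 1) - (∑ k, star (y k 1) * y k 0) * c
            - star c * (∑ k, star (y k 0) * y k 1)
            + star c * (∑ k, star (y k 0) * y k 0) * c := by
        simp only [hzdef, Fin.sum_univ_three, star_sub, star_mul, star_star]
        noncomm_ring
      rw [expand, hS00, hS01, hS10, hS11]
      simp
    have hz0 : ∀ k, z k = 0 := by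
      intro k
      have hnn : ∀ k ∈ Finset.univ, (0:B) ≤ star (z k) * z k :=
        fun k _ => star_mul_self_nonneg _
      have := (Finset.sum_eq_zero_iff_of_nonneg hnn).mp hsum0 k (Finset.mem_univ k)
      exact (CStarRing.star_mul_self_eq_zero_iff _).mp this
    have final : (∑ k, star (z k) * y k 2) = 0 := by
      simp [hz0]
    have expand2 : (∑ k, star (z k) * y k 2)
        = (∑ k, star (y k 1) * y k 2) - star c * (∑ k, star (y k 0) * y k 2) := by
      simp only [hzdef, Fin.sum_univ_three, star_sub, star_mul, star_star]
      noncomm_ring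
    rw [expand2, hS12, hS02] at final
    exact sub_eq_zero.mp final
  intro x
  constructor
  · have hb : Φ (star (star a) * star a) = star (Φ (star a)) * Φ (star a) := by
      rw [star_star, hstar, star_star, ha₂]
    have := key (star a) x hb
    rwa [star_star, hstar, star_star] at this
  · have h1 := key a (star x) ha₁
    have h2 : Φ (x * a) = star (Φ (star a * star x)) := by
      rw [← hstar]
      simp [star_mul, star_star]
    rw [h2, h1, star_mul, star_star, ← hstar, star_star]
end

section
/- Let H be a complex Hilbert space, n ≥ 1, and let a_1, …, a_n ∈ B(H) be linearly independent bounded operators. Then there exist unit vectors ξ_1, …, ξ_n ∈ H such that the n×n complex matrix with entries ⟨ξ_i, a_j ξ_i⟩ (i, j = 1, …, n) is invertible (has full rank n). -/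
/-!
**Statement 6.** If `a₁, …, aₙ` are linearly independent bounded operators on a complex
Hilbert space `H`, then there are unit vectors `ξ₁, …, ξₙ ∈ H` such that the `n × n`
complex matrix `(⟨ξᵢ, aⱼ ξᵢ⟩)ᵢⱼ` is invertible.
-/

theorem exists_unit_vectors_matrix_invertible
    {H : Type*} [NormedAddCommGroup H] [InnerProductSpace ℂ H] [CompleteSpace H]
    (n : ℕ) (hn : 1 ≤ n) (a : Fin n → (H →L[ℂ] H)) (ha : LinearIndependent ℂ a) :
    ∃ ξ : Fin n → H, (∀ i, ‖ξ i‖ = 1) ∧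
      IsUnit (Matrix.of fun i j => (inner ℂ (ξ i) ((a j) (ξ i)) : ℂ)) := by
  classical
  set f : H → (Fin n → ℂ) := fun ξ j => (inner ℂ ξ (a j ξ) : ℂ) with hf
  set S : Set (Fin n → ℂ) := f '' {ξ : H | ‖ξ‖ = 1} with hS
  -- Step 1: S spans ℂ^n.
  have hspan : Submodule.span ℂ S = ⊤ := by
    by_contra h
    obtain ⟨x, hx⟩ : ∃ x : Fin n → ℂ, x ∉ Submodule.span ℂ S := by
      by_contra hc
      push_neg at hc
      exact h (Submodule.eq_top_iff'.2 hc)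
    obtain ⟨φ, hφx, hφS⟩ :=
      Submodule.exists_dual_map_eq_bot_of_notMem hx inferInstance
    set w : Fin n → ℂ := fun j => φ (Pi.single j 1) with hw
    have hφ_sum : ∀ c : Fin n → ℂ, φ c = ∑ j, c j * w j := by
      intro c
      rw [φ.pi_apply_eq_sum_univ c]
      refine Finset.sum_congr rfl fun j _ => ?_
      rw [smul_eq_mul]
      congr 1
      congr 1
      ext k
      simp [Pi.single_apply, eq_comm]
    set b : H →L[ℂ] H := ∑ j, w j • a j with hb
    have hbzero : ∀ ξ : H, (inner ℂ ξ (b ξ) : ℂ) = 0 := by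
      have hunit : ∀ ξ : H, ‖ξ‖ = 1 → (inner ℂ ξ (b ξ) : ℂ) = 0 := by
        intro ξ hξ
        have hfS : f ξ ∈ S := ⟨ξ, hξ, rfl⟩
        have hmem : φ (f ξ) ∈ (Submodule.span ℂ S).map φ :=
          ⟨f ξ, Submodule.subset_span hfS, rfl⟩
        rw [hφS] at hmem
        have h0 : φ (f ξ) = 0 := hmem
        rw [hφ_sum] at h0
        calc (inner ℂ ξ (b ξ) : ℂ) = ∑ j, (inner ℂ ξ ((w j • a j) ξ) : ℂ) := by
              rw [hb]
              simp [inner_sum, ContinuousLinearMap.sum_apply]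
          _ = ∑ j, f ξ j * w j := by
              refine Finset.sum_congr rfl fun j _ => ?_
              simp [hf, inner_smul_right, mul_comm]
          _ = 0 := h0
      intro ξ
      rcases eq_or_ne ξ 0 with rfl | hξ0
      · simp
      · have hnorm : ‖(‖ξ‖⁻¹ : ℂ) • ξ‖ = 1 := by
          simp [norm_smul, inv_mul_cancel₀ (norm_ne_zero_iff.2 hξ0)]
        have := hunit ((‖ξ‖⁻¹ : ℂ) • ξ) hnorm
        rw [map_smul, inner_smul_left, inner_smul_right] at this
        have hne : ((‖ξ‖ : ℂ)⁻¹) ≠ 0 := by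
          simp [norm_ne_zero_iff.2 hξ0]
        have hne' : (starRingEnd ℂ) ((‖ξ‖ : ℂ)⁻¹) ≠ 0 := by
          simpa using hne
        rcases mul_eq_zero.1 this with h | h
        · exact absurd h hne'
        rcases mul_eq_zero.1 h with h | h
        · exact absurd h hne
        · exact h
    have hb0 : b = 0 := by
      have : (b : H →ₗ[ℂ] H) = 0 := by
        rw [← inner_map_self_eq_zero]
        intro x
        rw [← inner_conj_symm]
        simp only [ContinuousLinearMap.coe_coe]
        rw [hbzero x, map_zero]
      exact ContinuousLinearMap.coe_injective this
    have hw0 : ∀ j, w j = 0 := by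
      have := linearIndependent_iff'.1 ha Finset.univ w (by rw [← hb, hb0])
      intro j; exact this j (Finset.mem_univ j)
    apply hφx
    rw [hφ_sum]
    simp [hw0]
  -- Step 2: extract a basis from S.
  obtain ⟨t, htS, htspan, htli⟩ := exists_linearIndependent ℂ S
  rw [hspan] at htspan
  have hbasis : Module.Basis t ℂ (Fin n → ℂ) := Module.Basis.mk htli (by rw [Subtype.range_coe]; exact htspan.ge)
  have : Fintype t := FiniteDimensional.fintypeBasisIndex hbasis
  have hcard : Fintype.card t = n := by
    have := Module.finrank_eq_card_basis hbasis
    simpa [Module.finrank_fintype_fun_eq_card] using this.symm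
  obtain ⟨e⟩ : Nonempty (Fin n ≃ t) :=
    ⟨(Fintype.equivFinOfCardEq hcard).symm⟩
  -- choose unit vectors
  have hchoice : ∀ i : Fin n, ∃ ξ : H, ‖ξ‖ = 1 ∧ f ξ = (e i : Fin n → ℂ) := by
    intro i
    have : ((e i : Fin n → ℂ)) ∈ S := htS (e i).2
    obtain ⟨ξ, hξ, hfξ⟩ := this
    exact ⟨ξ, hξ, hfξ⟩
  choose ξ hξnorm hξf using hchoice
  refine ⟨ξ, hξnorm, ?_⟩
  rw [← Matrix.linearIndependent_rows_iff_isUnit]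
  have hrows : (fun i => (Matrix.of fun i j => (inner ℂ (ξ i) ((a j) (ξ i)) : ℂ)) i)
      = fun i => ((e i : Fin n → ℂ)) := by
    funext i
    exact hξf i
  rw [show (Matrix.of fun i j => (inner ℂ (ξ i) ((a j) (ξ i)) : ℂ)).row = _ from hrows]
  exact htli.comp e e.injective
end

section
/- (Density of mixed vector states) Let H be a complex Hilbert space and C ⊆ B(H) a unital C*-subalgebra (a closed star-subalgebra containing the identity). Let ρ : C → ℂ be a linear functional with ρ(1) = 1 and ρ(x* x) ≥ 0 for all x ∈ C (a state on C). Then for every finite collection x_1, …, x_n ∈ C and every ε > 0 there exist l ∈ ℕ, nonnegative real coefficients λ_1, …, λ_l with Σ_j λ_j = 1, and unit vectors ξ_1, …, ξ_l ∈ H such that |ρ(x_i) − Σ_{j=1}^{l} λ_j ⟨ξ_j, x_i ξ_j⟩| < ε for every i = 1, …, n. -/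
open scoped ComplexOrder

section Aux

/-- A positive linear functional on a star algebra is star-preserving (sends `star` to
complex conjugate). -/
lemma aux_rho_star {C : Type*} [Ring C] [StarRing C] [Algebra ℂ C] [StarModule ℂ C]
    (ρ : C →ₗ[ℂ] ℂ) (hρ1 : ρ 1 = 1) (hρpos : ∀ x : C, 0 ≤ ρ (star x * x)) (y : C) :
    ρ (star y) = starRingEnd ℂ (ρ y) := by
  have him : ∀ x : C, (ρ (star x * x)).im = 0 := by
    intro x
    have := hρpos x
    rw [Complex.nonneg_iff] at this
    exact this.2.symm
  have h1 : (ρ 1 + ρ y + ρ (star y) + ρ (star y * y)).im = 0 := by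
    have hexp : star (1 + y) * (1 + y) = 1 + y + star y + star y * y := by
      rw [star_add, star_one]
      simp only [add_mul, mul_add, one_mul, mul_one]
      abel
    have h := him (1 + y)
    rw [hexp] at h
    simpa using h
  have h2 : (ρ 1 + Complex.I * ρ y + -(Complex.I * ρ (star y)) + ρ (star y * y)).im = 0 := by
    have hexp : star (1 + Complex.I • y) * (1 + Complex.I • y)
        = 1 + Complex.I • y + (-Complex.I) • star y + star y * y := by
      rw [star_add, star_one, star_smul, Complex.star_def, Complex.conj_I]
      simp only [add_mul, mul_add, one_mul, mul_one, neg_smul, neg_mul, smul_mul_smul_comm,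
        Complex.I_mul_I, neg_neg, one_smul]
      abel
    have h := him (1 + Complex.I • y)
    rw [hexp] at h
    simpa only [map_add, map_smul, map_neg, smul_eq_mul, neg_smul, neg_mul] using h
  have him1 : (ρ 1).im = 0 := by rw [hρ1]; simp
  have himyy : (ρ (star y * y)).im = 0 := him (y)
  simp only [Complex.add_im, Complex.sub_im, Complex.neg_im, Complex.mul_im, Complex.I_re,
    Complex.I_im, him1, himyy, zero_mul, one_mul, zero_add, add_zero, mul_zero] at h1 h2
  have hre : (ρ (star y)).re = (ρ y).re := by linarith
  have him' : (ρ (star y)).im = - (ρ y).im := by linarith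
  apply Complex.ext <;> simp [Complex.conj_re, Complex.conj_im, hre, him']

/-- In a unital C⋆-algebra, a selfadjoint element with nonnegative (real) spectrum is a
square `star s * s`. -/
lemma aux_sqrt {A : Type*} [CStarAlgebra A] (q : A) (h1 : IsSelfAdjoint q)
    (h2 : ∀ t ∈ spectrum ℝ q, (0:ℝ) ≤ t) : ∃ s : A, star s * s = q := by
  refine ⟨cfc Real.sqrt q, ?_⟩
  have hs : IsSelfAdjoint (cfc Real.sqrt q) := cfc_predicate Real.sqrt q
  rw [hs.star_eq]
  calc cfc Real.sqrt q * cfc Real.sqrt q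
      = cfc (fun t : ℝ => Real.sqrt t * Real.sqrt t) q := (cfc_mul _ _ q).symm
    _ = cfc (fun t : ℝ => t) q := cfc_congr fun t ht => Real.mul_self_sqrt (h2 t ht)
    _ = q := cfc_id ℝ q

end Aux

set_option maxHeartbeats 1000000 in
theorem mixed_vector_states_dense
    {H : Type*} [NormedAddCommGroup H] [InnerProductSpace ℂ H] [CompleteSpace H]
    (C : StarSubalgebra ℂ (H →L[ℂ] H)) (hC : IsClosed (C : Set (H →L[ℂ] H)))
    (ρ : C →ₗ[ℂ] ℂ) (hρ1 : ρ 1 = 1) (hρpos : ∀ x : C, 0 ≤ ρ (star x * x))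
    (n : ℕ) (x : Fin n → C) (ε : ℝ) (hε : 0 < ε) :
    ∃ (l : ℕ) (lam : Fin l → ℝ) (ξ : Fin l → H),
      (∀ j, 0 ≤ lam j) ∧ (∑ j, lam j) = 1 ∧ (∀ j, ‖ξ j‖ = 1) ∧
      ∀ i, ‖ρ (x i) - ∑ j, (lam j : ℂ) *
          (inner ℂ (ξ j) (((x i : H →L[ℂ] H)) (ξ j)) : ℂ)‖ < ε := by
  haveI : CompleteSpace C := hC.completeSpace_coe
  classical
  set φ : H → (Fin n → ℂ) := fun ξ i => (inner ℂ ξ ((x i : H →L[ℂ] H) ξ) : ℂ) with hφ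
  set T : Set (Fin n → ℂ) := {p | ∃ ξ : H, ‖ξ‖ = 1 ∧ φ ξ = p} with hT
  set S : Set (Fin n → ℂ) := closure (convexHull ℝ T) with hS
  set r : Fin n → ℂ := fun i => ρ (x i) with hr
  by_cases hmem : r ∈ S
  · -- approximation case
    obtain ⟨v, hvS, hvr⟩ : ∃ v ∈ convexHull ℝ T, dist r v < ε := by
      rw [hS, Metric.mem_closure_iff] at hmem
      exact hmem ε hε
    rw [convexHull_eq] at hvS
    obtain ⟨ι, t, w, z, hw0, hw1, hz, hcm⟩ := hvS
    choose ζ hζ1 hζ2 using fun (i : t) => hz i i.2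
    set e : Fin t.card ≃ t := t.equivFin.symm with he
    refine ⟨t.card, fun j => w (e j), fun j => ζ (e j), fun j => hw0 _ (e j).2, ?_, fun j => hζ1 _, ?_⟩
    · rw [Equiv.sum_comp e (fun i : t => w i), Finset.sum_coe_sort t w]
      exact hw1
    · intro i
      have hsum : (∑ j, ((w (e j) : ℂ)) * (inner ℂ (ζ (e j)) ((x i : H →L[ℂ] H) (ζ (e j))) : ℂ)) = v i := by
        have : ∀ j : Fin t.card, ((w (e j) : ℂ)) * (inner ℂ (ζ (e j)) ((x i : H →L[ℂ] H) (ζ (e j))) : ℂ)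
            = w (e j) • z (e j) i := by
          intro j
          rw [← hζ2 (e j)]
          simp [Complex.real_smul, hφ]
        rw [Finset.sum_congr rfl fun j _ => this j,
          Equiv.sum_comp e (fun i' : t => w (i' : ι) • z (i' : ι) i),
          Finset.sum_coe_sort t (fun i' => w i' • z i' i)]
        have hv : v i = ∑ i' ∈ t, w i' • z i' i := by
          rw [← hcm, Finset.centerMass_eq_of_sum_1 t z hw1, Finset.sum_apply]
          simp
        rw [hv]
      rw [hsum]
      calc ‖r i - v i‖ ≤ ‖r - v‖ := by
            simpa using norm_le_pi_norm (r - v) i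
        _ < ε := by rwa [← dist_eq_norm]
  · -- separation case: derive a contradiction
    exfalso
    have hTS : T ⊆ S := fun p hp => subset_closure (subset_convexHull ℝ T hp)
    obtain ⟨f, u, hfu, hur⟩ :=
      geometric_hahn_banach_closed_point ((convex_convexHull ℝ T).closure) isClosed_closure hmem
    -- decompose f
    set c : Fin n → ℂ := fun i =>
      (f (Pi.single i 1) : ℂ) - (f (Pi.single i Complex.I) : ℂ) * Complex.I with hc
    have hf : ∀ v : Fin n → ℂ, f v = (∑ i, c i * v i).re := by
      intro v
      have hv : v = ∑ i, Pi.single i (v i) := (Finset.univ_sum_single v).symm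
      rw [hv, map_sum]
      rw [Complex.re_sum]
      refine Finset.sum_congr rfl fun i _ => ?_
      have hsingle : Pi.single i (v i)
          = ((v i).re • (Pi.single i (1:ℂ) : Fin n → ℂ) : Fin n → ℂ)
            + (v i).im • (Pi.single i Complex.I : Fin n → ℂ) := by
        rw [← Pi.single_smul, ← Pi.single_smul, ← Pi.single_add]
        congr 1
        simp [Complex.real_smul, Complex.re_add_im]
      rw [hsingle, map_add, map_smul, map_smul]
      simp [hc, Complex.mul_re]
      ring
    -- the element a = ∑ cᵢ xᵢ of C
    set aC : C := ∑ i, c i • x i with haC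
    set A : H →L[ℂ] H := (aC : H →L[ℂ] H) with hA
    have hrA : f r = (ρ aC).re := by
      rw [hf r]
      congr 1
      rw [haC, map_sum]
      exact Finset.sum_congr rfl fun i _ => by simp [hr]
    have hφA : ∀ ξ : H, ‖ξ‖ = 1 → f (φ ξ) = (inner ℂ ξ (A ξ) : ℂ).re := by
      intro ξ hξ
      rw [hf (φ ξ)]
      congr 1
      have : A ξ = ∑ i, c i • ((x i : H →L[ℂ] H) ξ) := by
        rw [hA, haC]
        push_cast
        simp [ContinuousLinearMap.sum_apply]
      rw [this, inner_sum]
      exact Finset.sum_congr rfl fun i _ => by simp [inner_smul_right, hφ]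
    have hAu : ∀ ξ : H, ‖ξ‖ = 1 → (inner ℂ ξ (A ξ) : ℂ).re < u := by
      intro ξ hξ
      rw [← hφA ξ hξ]
      exact hfu _ (hTS ⟨ξ, hξ, rfl⟩)
    have hAu' : ∀ ξ : H, (inner ℂ ξ (A ξ) : ℂ).re ≤ u * ‖ξ‖ ^ 2 := by
      intro ξ
      rcases eq_or_ne ξ 0 with h0 | h0
      · simp [h0]
      · have hn : (0:ℝ) < ‖ξ‖ := norm_pos_iff.mpr h0
        set η : H := ((‖ξ‖⁻¹ : ℝ) : ℂ) • ξ with hη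
        have hηn : ‖η‖ = 1 := by
          rw [hη, norm_smul]
          simp [norm_inv, hn.ne']
        have := (hAu η hηn).le
        have hinner : (inner ℂ η (A η) : ℂ) = ((‖ξ‖⁻¹ : ℝ) : ℂ) ^ 2 * inner ℂ ξ (A ξ) := by
          rw [hη, map_smul, inner_smul_left, inner_smul_right]
          simp [Complex.conj_ofReal]
          ring
        rw [hinner] at this
        have : (‖ξ‖⁻¹) ^ 2 * (inner ℂ ξ (A ξ) : ℂ).re ≤ u := by
          rw [← Complex.ofReal_pow, Complex.re_ofReal_mul] at this
          exact this
        calc (inner ℂ ξ (A ξ) : ℂ).re = ‖ξ‖ ^ 2 * ((‖ξ‖⁻¹) ^ 2 * (inner ℂ ξ (A ξ) : ℂ).re) := by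
              field_simp
          _ ≤ ‖ξ‖ ^ 2 * u := by
              exact mul_le_mul_of_nonneg_left this (by positivity)
          _ = u * ‖ξ‖ ^ 2 := by ring
    -- the selfadjoint part and the positive element
    set bC : C := ((2:ℂ)⁻¹) • (aC + star aC) with hbC
    set qC : C := (u : ℂ) • 1 - bC with hqC
    have hbsa : IsSelfAdjoint bC := by
      exact IsSelfAdjoint.smul (isSelfAdjoint_iff.mpr (by norm_num))
        (IsSelfAdjoint.add_star_self aC)
    have hqsa : IsSelfAdjoint qC := by
      apply IsSelfAdjoint.sub _ hbsa
      have hone : IsSelfAdjoint (1 : C) := star_one _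
      exact IsSelfAdjoint.smul
        (isSelfAdjoint_iff.mpr (by norm_num [Complex.star_def, Complex.conj_ofReal])) hone
    -- its image in B(H) is positive
    have hBinner : ∀ ξ : H, (inner ℂ ξ ((bC : H →L[ℂ] H) ξ) : ℂ).re = (inner ℂ ξ (A ξ) : ℂ).re := by
      intro ξ
      have hcoe : (bC : H →L[ℂ] H) = ((2:ℂ)⁻¹) • (A + star A) := by
        rw [hbC]
        push_cast
        rfl
      rw [hcoe]
      simp only [ContinuousLinearMap.smul_apply, ContinuousLinearMap.add_apply,
        inner_smul_right, inner_add_right]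
      have hst : (inner ℂ ξ ((star A) ξ) : ℂ) = starRingEnd ℂ (inner ℂ ξ (A ξ)) := by
        rw [ContinuousLinearMap.star_eq_adjoint, ContinuousLinearMap.adjoint_inner_right]
        exact (inner_conj_symm (A ξ) ξ).symm
      rw [hst]
      have hre2 : (inner ℂ (A ξ) ξ : ℂ).re = (inner ℂ ξ (A ξ) : ℂ).re := by
        rw [← inner_conj_symm (A ξ) ξ, Complex.conj_re]
      simp [Complex.add_re, Complex.mul_re, hre2]
      ring
    have hQpos : (0 : H →L[ℂ] H) ≤ (qC : H →L[ℂ] H) := by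
      rw [ContinuousLinearMap.nonneg_iff_isPositive]
      constructor
      · rw [← ContinuousLinearMap.isSelfAdjoint_iff_isSymmetric]
        rw [isSelfAdjoint_iff, ← StarMemClass.coe_star]
        exact congrArg Subtype.val hqsa.star_eq
      · intro ξ
        rw [ContinuousLinearMap.reApplyInnerSelf_apply, RCLike.re_to_complex]
        have hsym : (inner ℂ ((qC : H →L[ℂ] H) ξ) ξ : ℂ).re = (inner ℂ ξ ((qC : H →L[ℂ] H) ξ) : ℂ).re := by
          rw [← inner_conj_symm ((qC : H →L[ℂ] H) ξ) ξ, Complex.conj_re]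
        rw [hsym]
        have hcoe : (qC : H →L[ℂ] H) = (u : ℂ) • 1 - (bC : H →L[ℂ] H) := by
          rw [hqC]; push_cast; rfl
        rw [hcoe]
        simp only [ContinuousLinearMap.sub_apply, ContinuousLinearMap.smul_apply,
          ContinuousLinearMap.one_apply, inner_sub_right, inner_smul_right]
        rw [Complex.sub_re]
        have : (inner ℂ ξ ξ : ℂ) = (‖ξ‖ ^ 2 : ℝ) := by
          rw [inner_self_eq_norm_sq_to_K]; norm_num
        rw [this, hBinner ξ]
        have h1 : ((u:ℂ) * ((‖ξ‖ ^ 2 : ℝ) : ℂ)).re = u * ‖ξ‖ ^ 2 := by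
          rw [← Complex.ofReal_mul]
          exact Complex.ofReal_re _
        rw [h1]
        linarith [hAu' ξ]
    -- spectrum transfer and square root
    have hspec : spectrum ℝ qC = spectrum ℝ (qC : H →L[ℂ] H) := by
      ext s
      rw [spectrum.mem_iff, spectrum.mem_iff, not_iff_not]
      have hcoe : ((algebraMap ℝ C s - qC : C) : H →L[ℂ] H)
          = algebraMap ℝ (H →L[ℂ] H) s - (qC : H →L[ℂ] H) := by
        rw [AddSubgroupClass.coe_sub]
        congr 1
      rw [← hcoe]
      exact (StarSubalgebra.coe_isUnit (hS := hC) (a := algebraMap ℝ C s - qC)).symm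
    have hspec' : ∀ s ∈ spectrum ℝ qC, (0:ℝ) ≤ s := by
      rw [hspec]
      exact fun s hs => spectrum_nonneg_of_nonneg hQpos hs
    obtain ⟨sC, hsC⟩ := aux_sqrt qC hqsa hspec'
    have hρq : 0 ≤ ρ qC := hsC ▸ hρpos sC
    -- compute ρ qC
    have hρstar := aux_rho_star ρ hρ1 hρpos
    have hρb : (ρ bC).re = (ρ aC).re := by
      rw [hbC]
      rw [map_smul, map_add, hρstar aC]
      simp [Complex.mul_re, Complex.add_re, Complex.add_im]
      ring
    have hρqval : (ρ qC).re = u - (ρ aC).re := by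
      rw [hqC, map_sub, map_smul, hρ1]
      simp [Complex.sub_re, Complex.mul_re, hρb]
    rw [Complex.nonneg_iff] at hρq
    have : (ρ aC).re ≤ u := by linarith [hρq.1, hρqval ▸ hρq.1]
    rw [← hrA] at this
    linarith
end

section
/- (Schur products of commuting positive operator matrices) Let H be a complex Hilbert space, n ≥ 1, and let 𝒜, ℬ ∈ Mₙ(B(H)) be matrices of bounded operators such that 𝒜 ≥ 0 and ℬ ≥ 0 in the C*-algebra Mₙ(B(H)), and such that all entries pairwise commute: 𝒜_{ij} ℬ_{kl} = ℬ_{kl} 𝒜_{ij} for all indices i, j, k, l. Then the entrywise (Schur) product 𝒜 ⊙ ℬ, defined by (𝒜 ⊙ ℬ)_{ij} = 𝒜_{ij} ℬ_{ij}, is also positive: 𝒜 ⊙ ℬ ≥ 0 in Mₙ(B(H)). -/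
set_option linter.unusedSectionVars false
set_option maxHeartbeats 1000000
set_option synthInstance.maxHeartbeats 400000

section CfcAux

variable {A : Type*} [CStarAlgebra A]

lemma isClosed_commute_set (b : A) : IsClosed {x : A | b * x = x * b} := by
  have : {x : A | b * x = x * b} = (fun x => b * x - x * b) ⁻¹' {0} := by
    ext x; simp [sub_eq_zero]
  rw [this]
  exact isClosed_singleton.preimage (by fun_prop)

lemma commute_cfc {a : A} (ha : IsSelfAdjoint a) (b : A) (hab : Commute b a)
    (f : ℝ → ℝ) : Commute b (cfc f a) := by
  by_cases hf : ContinuousOn f (spectrum ℝ a)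
  · rw [cfc_apply f a ha hf]
    suffices h : ∀ g : C(spectrum ℝ a, ℝ), Commute b (cfcHom ha g) from h _
    intro g
    let S : Subalgebra ℝ C(spectrum ℝ a, ℝ) :=
      (Subalgebra.centralizer ℝ {b}).comap
        ((cfcHom ha (R := ℝ)) : C(spectrum ℝ a, ℝ) →⋆ₐ[ℝ] A).toAlgHom
    have hclosed : IsClosed (S : Set C(spectrum ℝ a, ℝ)) := by
      have h1 : (S : Set C(spectrum ℝ a, ℝ)) =
          (cfcHom ha (R := ℝ)) ⁻¹' {x : A | b * x = x * b} := by
        ext g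
        simp only [S, Subalgebra.coe_comap, Set.mem_preimage, StarAlgHom.coe_toAlgHom,
          SetLike.mem_coe, Subalgebra.mem_centralizer_iff, Set.mem_singleton_iff,
          Set.mem_setOf_eq]
        constructor
        · intro h; exact h b rfl
        · rintro h c rfl; exact h
      rw [h1]
      exact (isClosed_commute_set b).preimage (cfcHom_continuous ha)
    have hpoly : polynomialFunctions (spectrum ℝ a) ≤ S := by
      rw [polynomialFunctions.eq_adjoin_X, Algebra.adjoin_le_iff]
      rintro x ⟨⟩
      show (cfcHom ha (R := ℝ)) _ ∈ Subalgebra.centralizer ℝ {b}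
      have hX : (Polynomial.toContinuousMapOnAlgHom (spectrum ℝ a)) Polynomial.X =
          (ContinuousMap.id ℝ).restrict (spectrum ℝ a) := by
        ext x
        simp [Polynomial.toContinuousMapOn, Polynomial.toContinuousMap]
      rw [hX, cfcHom_id ha]
      rw [Subalgebra.mem_centralizer_iff]
      rintro c rfl
      exact hab
    have htop : (polynomialFunctions (spectrum ℝ a)).topologicalClosure = ⊤ :=
      polynomialFunctions.topologicalClosure _
    have hle : (⊤ : Subalgebra ℝ C(spectrum ℝ a, ℝ)) ≤ S := by
      rw [← htop]
      exact Subalgebra.topologicalClosure_minimal hpoly hclosed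
    have hg : g ∈ S := hle (Algebra.mem_top)
    exact (Subalgebra.mem_centralizer_iff ℝ).mp hg b rfl
  · rw [cfc_apply_of_not_continuousOn a hf]
    exact Commute.zero_right b

variable [PartialOrder A] [StarOrderedRing A]

/-- Square root via unital cfc. -/
noncomputable def msqrt (a : A) : A := cfc Real.sqrt a

lemma msqrt_isSelfAdjoint (a : A) : IsSelfAdjoint (msqrt a) := cfc_predicate _ _

lemma msqrt_mul_self {a : A} (ha : 0 ≤ a) : msqrt a * msqrt a = a := by
  have h1 : IsSelfAdjoint a := .of_nonneg ha
  rw [msqrt, ← cfc_mul _ _ a Real.continuous_sqrt.continuousOn Real.continuous_sqrt.continuousOn]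
  have h2 : ∀ x ∈ spectrum ℝ a, Real.sqrt x * Real.sqrt x = id x := fun x hx =>
    Real.mul_self_sqrt (spectrum_nonneg_of_nonneg ha hx)
  rw [cfc_congr h2, cfc_id ℝ a]

lemma commute_msqrt {a : A} (ha : 0 ≤ a) (b : A) (hab : Commute b a) :
    Commute b (msqrt a) :=
  commute_cfc (.of_nonneg ha) b hab _

end CfcAux

noncomputable section SchurAux

variable {H : Type*} [NormedAddCommGroup H] [InnerProductSpace ℂ H] [CompleteSpace H]
variable {n : ℕ}

local notation "K" => PiLp 2 (fun _ : Fin n => H)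

instance SchurAux.instCompleteKSchur : CompleteSpace (PiLp 2 (fun _ : Fin n => H)) :=
  inferInstance

/-- A matrix of operators acting on `(Fin n → H)` with the `ℓ²` structure. -/
def PhiSchur (M : Matrix (Fin n) (Fin n) (H →L[ℂ] H)) : K →L[ℂ] K :=
  ((PiLp.continuousLinearEquiv 2 ℂ (fun _ : Fin n => H)).symm :
      (∀ _ : Fin n, H) →L[ℂ] K).comp
    (ContinuousLinearMap.pi fun i => ∑ j, M i j ∘L PiLp.proj 2 (fun _ : Fin n => H) j)

lemma PhiSchur_apply (M : Matrix (Fin n) (Fin n) (H →L[ℂ] H)) (v : K) (i : Fin n) :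
    PhiSchur M v i = ∑ j, M i j (v j) := by
  simp [PhiSchur, ContinuousLinearMap.sum_apply]

lemma PiLp_coord_sum {ι : Type*} (s : Finset ι) (w : ι → K) (k : Fin n) :
    (∑ j ∈ s, w j) k = ∑ j ∈ s, w j k := by
  induction s using Finset.cons_induction with
  | empty => rfl
  | cons a s ha ih => rw [Finset.sum_cons, Finset.sum_cons, ← ih]; rfl

lemma PiLp_ext {v w : K} (h : ∀ k, v k = w k) : v = w := PiLp.ext h

/-- Inclusion of the `j`-th coordinate. -/
def singSchur (j : Fin n) : H →L[ℂ] K :=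
  ((PiLp.continuousLinearEquiv 2 ℂ (fun _ : Fin n => H)).symm :
      (∀ _ : Fin n, H) →L[ℂ] K).comp
    (ContinuousLinearMap.pi fun k =>
      if k = j then ContinuousLinearMap.id ℂ H else 0)

lemma singSchur_apply (j : Fin n) (h : H) (k : Fin n) :
    singSchur (n := n) j h k = if k = j then h else 0 := by
  simp [singSchur]
  split <;> rfl

/-- The inverse of `PhiSchur`. -/
def PsiSchur (T : K →L[ℂ] K) : Matrix (Fin n) (Fin n) (H →L[ℂ] H) :=
  Matrix.of fun i j => PiLp.proj 2 (fun _ : Fin n => H) i ∘L T ∘L singSchur j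

lemma PsiSchur_PhiSchur (M : Matrix (Fin n) (Fin n) (H →L[ℂ] H)) :
    PsiSchur (PhiSchur M) = M := by
  ext i j h
  simp only [PsiSchur, Matrix.of_apply, ContinuousLinearMap.comp_apply, PiLp.proj_apply]
  rw [PhiSchur_apply]
  rw [Finset.sum_eq_single j]
  · rw [singSchur_apply]; simp
  · intro k _ hk
    rw [singSchur_apply]
    simp [hk]
  · simp

lemma sum_singSchur (v : K) : ∑ j, singSchur (n := n) j (v j) = v := by
  apply PiLp_ext
  intro k
  rw [PiLp_coord_sum]
  rw [Finset.sum_congr rfl (fun j _ => singSchur_apply j (v j) k)]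
  simp

lemma PhiSchur_PsiSchur (T : K →L[ℂ] K) : PhiSchur (PsiSchur T) = T := by
  ext v i
  rw [PhiSchur_apply]
  simp only [PsiSchur, Matrix.of_apply, ContinuousLinearMap.comp_apply, PiLp.proj_apply]
  rw [← PiLp_coord_sum, ← map_sum, sum_singSchur]

lemma PhiSchur_injective :
    Function.Injective (PhiSchur (H := H) (n := n)) := by
  intro M N h
  rw [← PsiSchur_PhiSchur M, h, PsiSchur_PhiSchur]

lemma PhiSchur_add (M N : Matrix (Fin n) (Fin n) (H →L[ℂ] H)) :
    PhiSchur (M + N) = PhiSchur M + PhiSchur N := by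
  ext v i
  rw [ContinuousLinearMap.add_apply]
  show _ = PhiSchur M v i + PhiSchur N v i
  rw [PhiSchur_apply, PhiSchur_apply, PhiSchur_apply, ← Finset.sum_add_distrib]
  simp [Matrix.add_apply]

lemma PhiSchur_mul (M N : Matrix (Fin n) (Fin n) (H →L[ℂ] H)) :
    PhiSchur (M * N) = PhiSchur M * PhiSchur N := by
  ext v i
  rw [ContinuousLinearMap.mul_apply, PhiSchur_apply, PhiSchur_apply]
  rw [Finset.sum_congr rfl (fun j _ => by rw [Matrix.mul_apply, ContinuousLinearMap.sum_apply])]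
  rw [Finset.sum_comm]
  refine Finset.sum_congr rfl fun k _ => ?_
  rw [PhiSchur_apply, map_sum]
  exact Finset.sum_congr rfl fun j _ => rfl

lemma PhiSchur_star (M : Matrix (Fin n) (Fin n) (H →L[ℂ] H)) :
    PhiSchur (star M) = star (PhiSchur M) := by
  rw [ContinuousLinearMap.star_eq_adjoint]
  rw [ContinuousLinearMap.eq_adjoint_iff]
  intro v w
  rw [PiLp.inner_apply, PiLp.inner_apply]
  rw [Finset.sum_congr rfl (fun i _ => by
    rw [PhiSchur_apply, sum_inner])]
  rw [Finset.sum_comm]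
  refine Finset.sum_congr rfl fun j _ => ?_
  rw [PhiSchur_apply, inner_sum]
  refine Finset.sum_congr rfl fun i _ => ?_
  rw [Matrix.star_apply, ContinuousLinearMap.star_eq_adjoint,
    ContinuousLinearMap.adjoint_inner_left]

lemma PhiSchur_zero : PhiSchur (0 : Matrix (Fin n) (Fin n) (H →L[ℂ] H)) = 0 := by
  ext v i
  rw [PhiSchur_apply]
  show _ = (0 : K) i
  simp [Matrix.zero_apply]

lemma PhiSchur_sum {ι : Type*} (s : Finset ι) (f : ι → Matrix (Fin n) (Fin n) (H →L[ℂ] H)) :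
    PhiSchur (∑ j ∈ s, f j) = ∑ j ∈ s, PhiSchur (f j) := by
  induction s using Finset.cons_induction with
  | empty => simpa using PhiSchur_zero
  | cons a s ha ih => rw [Finset.sum_cons, Finset.sum_cons, PhiSchur_add, ih]

end SchurAux


/-!
**Statement 8 (Schur products of commuting positive operator matrices).** If `𝒜, ℬ` are
positive elements of `Mₙ(B(H))` all of whose entries pairwise commute, then their entrywise
(Schur) product is positive in `Mₙ(B(H))`.

Positivity of an element of the C⋆-algebra `Mₙ(B(H))` is expressed by the (equivalent,
canonical) condition of being of the form `star x * x`.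
-/

theorem schur_product_of_commuting_positive
    {H : Type*} [NormedAddCommGroup H] [InnerProductSpace ℂ H] [CompleteSpace H]
    (n : ℕ) (hn : 1 ≤ n)
    (𝒜 ℬ : Matrix (Fin n) (Fin n) (H →L[ℂ] H))
    (hA : ∃ x : Matrix (Fin n) (Fin n) (H →L[ℂ] H), 𝒜 = star x * x)
    (hB : ∃ x : Matrix (Fin n) (Fin n) (H →L[ℂ] H), ℬ = star x * x)
    (hcomm : ∀ i j k l, 𝒜 i j * ℬ k l = ℬ k l * 𝒜 i j) :
    ∃ x : Matrix (Fin n) (Fin n) (H →L[ℂ] H),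
      (Matrix.of fun i j => 𝒜 i j * ℬ i j) = star x * x := by
  classical
  obtain ⟨xa, hxa⟩ := hA
  obtain ⟨xb, hxb⟩ := hB
  have hA0 : 0 ≤ PhiSchur 𝒜 := by
    rw [hxa, PhiSchur_mul, PhiSchur_star]; exact star_mul_self_nonneg _
  have hB0 : 0 ≤ PhiSchur ℬ := by
    rw [hxb, PhiSchur_mul, PhiSchur_star]; exact star_mul_self_nonneg _
  set α := PsiSchur (msqrt (PhiSchur 𝒜)) with hαdef
  set β := PsiSchur (msqrt (PhiSchur ℬ)) with hβdef
  have hΦα : PhiSchur α = msqrt (PhiSchur 𝒜) := PhiSchur_PsiSchur _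
  have hΦβ : PhiSchur β = msqrt (PhiSchur ℬ) := PhiSchur_PsiSchur _
  have hαα : α * α = 𝒜 :=
    PhiSchur_injective (by rw [PhiSchur_mul, hΦα, msqrt_mul_self hA0])
  have hββ : β * β = ℬ :=
    PhiSchur_injective (by rw [PhiSchur_mul, hΦβ, msqrt_mul_self hB0])
  have hαsa : star α = α := by
    apply PhiSchur_injective
    rw [PhiSchur_star, hΦα]
    exact (msqrt_isSelfAdjoint _).star_eq
  have hβsa : star β = β := by
    apply PhiSchur_injective
    rw [PhiSchur_star, hΦβ]
    exact (msqrt_isSelfAdjoint _).star_eq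
  -- generic entrywise commutation transfer to the square root
  have key : ∀ (c : H →L[ℂ] H) (M : Matrix (Fin n) (Fin n) (H →L[ℂ] H)),
      0 ≤ PhiSchur M → (∀ i j, c * M i j = M i j * c) →
      ∀ i j, c * (PsiSchur (msqrt (PhiSchur M))) i j
        = (PsiSchur (msqrt (PhiSchur M))) i j * c := by
    intro c M hM h i j
    have h1 : Matrix.diagonal (fun _ : Fin n => c) * M
        = M * Matrix.diagonal (fun _ : Fin n => c) := by
      ext i j
      rw [Matrix.diagonal_mul, Matrix.mul_diagonal, h]
    have h2 : Commute (PhiSchur (Matrix.diagonal fun _ : Fin n => c)) (PhiSchur M) := by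
      show _ = _
      rw [← PhiSchur_mul, ← PhiSchur_mul, h1]
    have h3 := commute_msqrt hM _ h2
    have h4 : Matrix.diagonal (fun _ : Fin n => c) * PsiSchur (msqrt (PhiSchur M))
        = PsiSchur (msqrt (PhiSchur M)) * Matrix.diagonal (fun _ : Fin n => c) := by
      apply PhiSchur_injective
      rw [PhiSchur_mul, PhiSchur_mul, PhiSchur_PsiSchur]
      exact h3
    have h5 := congrFun (congrFun h4 i) j
    rwa [Matrix.diagonal_mul, Matrix.mul_diagonal] at h5
  have hαB : ∀ i j k l, ℬ k l * α i j = α i j * ℬ k l := by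
    intro i j k l
    exact key (ℬ k l) 𝒜 hA0 (fun i j => (hcomm i j k l).symm) i j
  have hαβ : ∀ i j k l, α i j * β k l = β k l * α i j := by
    intro i j k l
    exact key (α i j) ℬ hB0 (fun k l => (hαB i j k l).symm) k l
  set i0 : Fin n := ⟨0, hn⟩ with hi0
  set Mk : Fin n → Fin n → Matrix (Fin n) (Fin n) (H →L[ℂ] H) :=
    fun k l => Matrix.of fun r j => if r = i0 then β l j * α k j else 0 with hMkdef
  have hdecomp : (Matrix.of fun i j => 𝒜 i j * ℬ i j)
      = ∑ k, ∑ l, star (Mk k l) * Mk k l := by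
    ext i j
    rw [Matrix.sum_apply]
    rw [Finset.sum_congr rfl (fun k _ => Matrix.sum_apply i j _ _)]
    have e1 : ∀ p q, star (α p q) = α q p := by
      intro p q
      conv_rhs => rw [← hαsa]
      rw [Matrix.star_apply]
    have e2 : ∀ p q, star (β p q) = β q p := by
      intro p q
      conv_rhs => rw [← hβsa]
      rw [Matrix.star_apply]
    have hterm : ∀ k l, (star (Mk k l) * Mk k l) i j
        = (α i k * α k j) * (β i l * β l j) := by
      intro k l
      have hent : ∀ r j', Mk k l r j' = if r = i0 then β l j' * α k j' else 0 :=
        fun r j' => rfl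
      rw [Matrix.mul_apply]
      have hsummand : ∀ r, (star (Mk k l)) i r * Mk k l r j
          = if r = i0 then star (β l i * α k i) * (β l j * α k j) else 0 := by
        intro r
        rw [Matrix.star_apply, hent, hent]
        by_cases hr : r = i0
        · simp [hr]
        · simp [hr]
      rw [Finset.sum_congr rfl (fun r _ => hsummand r), Finset.sum_ite_eq' Finset.univ i0,
        if_pos (Finset.mem_univ i0)]
      have hC : Commute (α k j) (β i l * β l j) := by
        have c1 : Commute (α k j) (β i l) := hαβ k j i l
        have c2 : Commute (α k j) (β l j) := hαβ k j l j
        exact c1.mul_right c2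
      calc star (β l i * α k i) * (β l j * α k j)
          = α i k * β i l * (β l j * α k j) := by rw [star_mul, e1, e2]
        _ = α i k * (β i l * β l j * α k j) := by
            rw [mul_assoc (α i k), ← mul_assoc (β i l)]
        _ = α i k * (α k j * (β i l * β l j)) := by rw [← hC.eq]
        _ = (α i k * α k j) * (β i l * β l j) := by rw [← mul_assoc]
    rw [Finset.sum_congr rfl (fun k _ => Finset.sum_congr rfl (fun l _ => hterm k l))]
    rw [← Finset.sum_mul_sum]
    rw [Matrix.of_apply, ← hαα, ← hββ, Matrix.mul_apply, Matrix.mul_apply]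
  have hpos : 0 ≤ PhiSchur (Matrix.of fun i j => 𝒜 i j * ℬ i j) := by
    rw [hdecomp, PhiSchur_sum]
    rw [Finset.sum_congr rfl (fun k _ => PhiSchur_sum _ _)]
    refine Finset.sum_nonneg fun k _ => Finset.sum_nonneg fun l _ => ?_
    rw [PhiSchur_mul, PhiSchur_star]
    exact star_mul_self_nonneg _
  refine ⟨PsiSchur (msqrt (PhiSchur (Matrix.of fun i j => 𝒜 i j * ℬ i j))), ?_⟩
  apply PhiSchur_injective
  rw [PhiSchur_mul, PhiSchur_star, PhiSchur_PsiSchur, (msqrt_isSelfAdjoint _).star_eq,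
    msqrt_mul_self hpos]
end

section
/- The set Q_c of commuting-operator quantum correlations for the scenario (k, m) is a closed subset of ℝ^{k²m²} (with its standard topology). -/
/-!
**Statement 11.** The set `Q_c` of commuting-operator quantum correlations for the scenario
`(k, m)` is a closed subset of `ℝ^(k²m²)` (here the space of functions
`Fin m → Fin m → Fin k → Fin k → ℝ` with its standard (product) topology).
-/

/-- `P` (written `P a b x y` for `P(a,b|x,y)`) is a commuting-operator quantum
correlation for the scenario `(k, m)`; Hilbert spaces are taken in a fixed universe. -/
def IsCommutingCorrelation (k m : ℕ) (P : Fin m → Fin m → Fin k → Fin k → ℝ) : Prop :=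
  ∃ (H : Type) (_ : NormedAddCommGroup H) (_ : InnerProductSpace ℂ H) (_ : CompleteSpace H)
    (ψ : H) (A B : Fin k → Fin m → (H →L[ℂ] H)),
    ‖ψ‖ = 1 ∧
    (∀ x a, (A x a).IsPositive) ∧
    (∀ y b, (B y b).IsPositive) ∧
    (∀ x, (∑ a, A x a) = 1) ∧
    (∀ y, (∑ b, B y b) = 1) ∧
    (∀ x y a b, A x a * B y b = B y b * A x a) ∧
    (∀ x y a b, (P a b x y : ℂ) = inner ℂ ψ ((A x a * B y b) ψ))

namespace QcClosedAux

open Filter Topology UniformSpace ContinuousLinearMap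

noncomputable section

open scoped Classical in
/-- Ultralimit of a sequence along an ultrafilter (junk value if no limit exists). -/
def ulim (U : Ultrafilter ℕ) {X : Type*} [TopologicalSpace X] (f : ℕ → X) : X :=
  if h : ∃ c, Tendsto f ↑U (𝓝 c) then h.choose else f 0

theorem tendsto_ulim {U : Ultrafilter ℕ} {X : Type*} [TopologicalSpace X] {f : ℕ → X}
    (h : ∃ c, Tendsto f ↑U (𝓝 c)) : Tendsto f ↑U (𝓝 (ulim U f)) := by
  classical
  rw [ulim, dif_pos h]; exact h.choose_spec

theorem ulim_eq {U : Ultrafilter ℕ} {X : Type*} [TopologicalSpace X] [T2Space X] {f : ℕ → X}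
    {c : X} (h : Tendsto f ↑U (𝓝 c)) : ulim U f = c :=
  tendsto_nhds_unique (tendsto_ulim ⟨c, h⟩) h

theorem exists_ulim {U : Ultrafilter ℕ} {X : Type*} [NormedAddCommGroup X] [ProperSpace X]
    {f : ℕ → X} {C : ℝ} (h : ∀ n, ‖f n‖ ≤ C) : ∃ c, Tendsto f ↑U (𝓝 c) := by
  have hmem : (↑(U.map f) : Filter X) ≤ 𝓟 (Metric.closedBall 0 C) := by
    rw [Ultrafilter.coe_map, le_principal_iff, mem_map]
    exact univ_mem' fun n => by simpa using h n
  obtain ⟨c, -, hc⟩ := (isCompact_closedBall (0 : X) C).ultrafilter_le_nhds (U.map f) hmem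
  rw [Ultrafilter.coe_map] at hc
  exact ⟨c, hc⟩

end

end QcClosedAux

namespace QcClosedAux

noncomputable section

open Filter Topology UniformSpace ContinuousLinearMap RCLike

variable (H : ℕ → Type) [∀ n, NormedAddCommGroup (H n)]
  [∀ n, InnerProductSpace ℂ (H n)]

/-- The submodule of bounded sequences in a product of Hilbert spaces. -/
def Bdd : Submodule ℂ (∀ n, H n) where
  carrier := {f | ∃ C : ℝ, ∀ n, ‖f n‖ ≤ C}
  add_mem' := by
    rintro f g ⟨C, hC⟩ ⟨D, hD⟩
    exact ⟨C + D, fun n => (norm_add_le _ _).trans (add_le_add (hC n) (hD n))⟩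
  zero_mem' := ⟨0, fun n => by simp⟩
  smul_mem' := by
    rintro c f ⟨C, hC⟩
    refine ⟨‖c‖ * C, fun n => ?_⟩
    rw [Pi.smul_apply, norm_smul]
    exact mul_le_mul_of_nonneg_left (hC n) (norm_nonneg c)

/-- Type synonym for the bounded sequences, to carry the ultraproduct (semi-)inner product. -/
@[nolint unusedArguments]
def UP (_U : Ultrafilter ℕ) (H : ℕ → Type) [∀ n, NormedAddCommGroup (H n)]
    [∀ n, InnerProductSpace ℂ (H n)] : Type := ↥(Bdd H)

namespace UP

variable {U : Ultrafilter ℕ}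

instance : AddCommGroup (UP U H) := inferInstanceAs (AddCommGroup ↥(Bdd H))
instance : Module ℂ (UP U H) := inferInstanceAs (Module ℂ ↥(Bdd H))

variable {H}

/-- The underlying sequence. -/
def seq (f : UP U H) : ∀ n, H n := (show ↥(Bdd H) from f).1

theorem bdd (f : UP U H) : ∃ C : ℝ, ∀ n, ‖f.seq n‖ ≤ C := (show ↥(Bdd H) from f).2

/-- Constructor. -/
def mk (f : ∀ n, H n) (h : ∃ C : ℝ, ∀ n, ‖f n‖ ≤ C) : UP U H := show ↥(Bdd H) from ⟨f, h⟩

@[simp] theorem seq_mk (f : ∀ n, H n) (h) (n : ℕ) : (mk (U := U) f h).seq n = f n := rfl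

theorem ext {f g : UP U H} (h : ∀ n, f.seq n = g.seq n) : f = g := by
  have : (show ↥(Bdd H) from f) = (show ↥(Bdd H) from g) := Subtype.ext (funext h)
  exact this

@[simp] theorem seq_add (f g : UP U H) (n : ℕ) : (f + g).seq n = f.seq n + g.seq n := rfl
@[simp] theorem seq_smul (c : ℂ) (f : UP U H) (n : ℕ) : (c • f).seq n = c • f.seq n := rfl
@[simp] theorem seq_zero (n : ℕ) : (0 : UP U H).seq n = 0 := rfl

/-- `seq · n` as an additive monoid hom. -/
def seqHom (n : ℕ) : UP U H →+ H n :=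
  { toFun := fun f => f.seq n, map_zero' := rfl, map_add' := fun _ _ => rfl }

theorem seq_sum {ι : Type*} (s : Finset ι) (g : ι → UP U H) (n : ℕ) :
    (∑ i ∈ s, g i).seq n = ∑ i ∈ s, (g i).seq n := map_sum (seqHom n) g s

noncomputable instance : Inner ℂ (UP U H) :=
  ⟨fun f g => ulim U fun n => inner ℂ (f.seq n) (g.seq n)⟩

theorem inner_def (f g : UP U H) :
    (inner ℂ f g : ℂ) = ulim U fun n => inner ℂ (f.seq n) (g.seq n) := rfl

theorem exists_tendsto_inner (f g : UP U H) :
    ∃ c, Tendsto (fun n => (inner ℂ (f.seq n) (g.seq n) : ℂ)) ↑U (𝓝 c) := by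
  obtain ⟨C, hC⟩ := f.bdd
  obtain ⟨D, hD⟩ := g.bdd
  refine exists_ulim (C := C * D) fun n => ?_
  exact (norm_inner_le_norm _ _).trans
    (mul_le_mul (hC n) (hD n) (norm_nonneg _) ((norm_nonneg _).trans (hC n)))

theorem tendsto_inner (f g : UP U H) :
    Tendsto (fun n => (inner ℂ (f.seq n) (g.seq n) : ℂ)) ↑U (𝓝 (inner ℂ f g)) :=
  tendsto_ulim (exists_tendsto_inner f g)

noncomputable instance core : PreInnerProductSpace.Core ℂ (UP U H) where
  toInner := inferInstance
  conj_inner_symm f g := by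
    refine (ulim_eq ?_).symm
    have h := ((continuous_conj (K := ℂ)).tendsto _).comp (tendsto_inner g f)
    have he : ((starRingEnd ℂ) ∘ fun n => (inner ℂ (g.seq n) (f.seq n) : ℂ)) =
        fun n => (inner ℂ (f.seq n) (g.seq n) : ℂ) := by
      funext n; simp [Function.comp, inner_conj_symm]
    rwa [he] at h
  re_inner_nonneg f := by
    have h := ((continuous_re (K := ℂ)).tendsto _).comp (tendsto_inner f f)
    refine ge_of_tendsto' h fun n => ?_
    exact inner_self_nonneg
  add_left f g h := by
    refine ulim_eq ?_
    have := ((tendsto_inner f h).add (tendsto_inner g h))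
    refine Tendsto.congr (fun n => ?_) this
    simp [inner_add_left]
  smul_left f g r := by
    refine ulim_eq ?_
    have := (tendsto_inner f g).const_mul ((starRingEnd ℂ) r)
    refine Tendsto.congr (fun n => ?_) this
    simp [inner_smul_left, mul_comm]

noncomputable instance : SeminormedAddCommGroup (UP U H) :=
  InnerProductSpace.Core.toSeminormedAddCommGroup (𝕜 := ℂ) (F := UP U H)

noncomputable instance : NormedSpace ℂ (UP U H) :=
  InnerProductSpace.Core.toNormedSpace (𝕜 := ℂ) (F := UP U H)

noncomputable instance : InnerProductSpace ℂ (UP U H) :=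
  { (inferInstance : NormedSpace ℂ (UP U H)),
    (inferInstance : Inner ℂ (UP U H)) with
    norm_sq_eq_re_inner := fun x => Real.sq_sqrt (core.re_inner_nonneg x)
    conj_inner_symm := core.conj_inner_symm
    add_left := core.add_left
    smul_left := core.smul_left }

theorem tendsto_norm_seq (f : UP U H) :
    Tendsto (fun n => ‖f.seq n‖) ↑U (𝓝 ‖f‖) := by
  have h1 := ((continuous_re (K := ℂ)).tendsto _).comp (tendsto_inner f f)
  have h2 := (Real.continuous_sqrt.tendsto _).comp h1
  have he : (Real.sqrt ∘ (re (K := ℂ) ∘ fun n => (inner ℂ (f.seq n) (f.seq n) : ℂ))) =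
      fun n => ‖f.seq n‖ := by
    funext n
    simp only [Function.comp]
    rw [inner_self_eq_norm_sq (𝕜 := ℂ), Real.sqrt_sq (norm_nonneg _)]
  rw [he] at h2
  have : ‖f‖ = Real.sqrt (re (inner (𝕜 := ℂ) f f)) := rfl
  rwa [← this] at h2

end UP

end

end QcClosedAux

namespace QcClosedAux

noncomputable section

open Filter Topology UniformSpace ContinuousLinearMap RCLike UP

variable {U : Ultrafilter ℕ} {H : ℕ → Type} [∀ n, NormedAddCommGroup (H n)]
  [∀ n, InnerProductSpace ℂ (H n)]

variable (U) in
/-- Componentwise action of a uniformly bounded sequence of operators on `UP U H`. -/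
def opL (T : ∀ n, H n →L[ℂ] H n) (hT : ∀ n, ‖T n‖ ≤ 1) : UP U H →L[ℂ] UP U H :=
  LinearMap.mkContinuous
    { toFun := fun f => mk (fun n => T n (f.seq n))
        (f.bdd.imp fun C hC n => ((T n).le_of_opNorm_le (hT n) _).trans
          (by rw [one_mul]; exact hC n))
      map_add' := fun f g => ext fun n => by simp
      map_smul' := fun c f => ext fun n => by simp }
    1 (fun f => by
      rw [one_mul]
      refine le_of_tendsto_of_tendsto' (tendsto_norm_seq _) (tendsto_norm_seq f) fun n => ?_
      have h := (T n).le_of_opNorm_le (hT n) (f.seq n)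
      rw [one_mul] at h
      simpa using h)

@[simp] theorem opL_seq (T : ∀ n, H n →L[ℂ] H n) (hT : ∀ n, ‖T n‖ ≤ 1) (f : UP U H) (n : ℕ) :
    (opL U T hT f).seq n = T n (f.seq n) := rfl

theorem opL_norm_le (T : ∀ n, H n →L[ℂ] H n) (hT : ∀ n, ‖T n‖ ≤ 1) :
    ‖opL U T hT‖ ≤ 1 := LinearMap.mkContinuous_norm_le _ zero_le_one _

variable (U) in
/-- The extension of `opL` to the completion of `UP U H`. -/
def opC (T : ∀ n, H n →L[ℂ] H n) (hT : ∀ n, ‖T n‖ ≤ 1) :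
    Completion (UP U H) →L[ℂ] Completion (UP U H) :=
  LinearMap.mkContinuous
    { toFun := Completion.map (opL U T hT)
      map_add' := fun x y => Completion.induction_on₂ x y
        (isClosed_eq ((Completion.continuous_map).comp continuous_add)
          (((Completion.continuous_map).comp continuous_fst).add
            ((Completion.continuous_map).comp continuous_snd) :
            Continuous (Completion.map (opL U T hT) ∘ Prod.fst + Completion.map (opL U T hT) ∘ Prod.snd)))
        (fun f g => by
          rw [← Completion.coe_add, Completion.map_coe (opL U T hT).uniformContinuous,
            Completion.map_coe (opL U T hT).uniformContinuous,
            Completion.map_coe (opL U T hT).uniformContinuous, ← Completion.coe_add, map_add])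
      map_smul' := fun c x => Completion.induction_on x
        (isClosed_eq ((Completion.continuous_map).comp (continuous_const_smul c))
          ((continuous_const_smul c).comp (Completion.continuous_map)))
        (fun f => by
          show Completion.map (⇑(opL U T hT)) (c • (↑f : Completion (UP U H))) =
            (RingHom.id ℂ) c • Completion.map (⇑(opL U T hT)) ↑f
          rw [show c • (↑f : Completion (UP U H)) = ↑(c • f) from (Completion.coe_smul c f).symm,
            Completion.map_coe (opL U T hT).uniformContinuous,
            Completion.map_coe (opL U T hT).uniformContinuous, map_smul,
            Completion.coe_smul]
          rfl) }
    1
    (fun x => Completion.induction_on x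
      (isClosed_le (continuous_norm.comp (Completion.continuous_map))
        (continuous_const.mul continuous_norm))
      (fun f => by
        show ‖Completion.map (⇑(opL U T hT)) ↑f‖ ≤ 1 * ‖(↑f : Completion (UP U H))‖
        rw [Completion.map_coe (opL U T hT).uniformContinuous, Completion.norm_coe,
          Completion.norm_coe, one_mul]
        have h := (opL U T hT).le_of_opNorm_le (opL_norm_le T hT) f
        rwa [one_mul] at h))

theorem opC_coe (T : ∀ n, H n →L[ℂ] H n) (hT : ∀ n, ‖T n‖ ≤ 1) (f : UP U H) :
    opC U T hT ↑f = (↑(opL U T hT f) : Completion (UP U H)) :=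
  Completion.map_coe (opL U T hT).uniformContinuous f

theorem clm_ext {S₁ S₂ : Completion (UP U H) →L[ℂ] Completion (UP U H)}
    (h : ∀ f : UP U H, S₁ ↑f = S₂ ↑f) : S₁ = S₂ :=
  ContinuousLinearMap.ext fun x => Completion.induction_on x
    (isClosed_eq S₁.continuous S₂.continuous) h

theorem opC_isPositive [∀ n, CompleteSpace (H n)] (T : ∀ n, H n →L[ℂ] H n)
    (hT : ∀ n, ‖T n‖ ≤ 1) (hpos : ∀ n, (T n).IsPositive) : (opC U T hT).IsPositive := by
  constructor
  · intro u v
    refine Completion.induction_on₂ u v ?_ (fun f g => ?_)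
    · apply isClosed_eq
      · exact Completion.Continuous.inner ((opC U T hT).continuous.comp continuous_fst)
          continuous_snd
      · exact Completion.Continuous.inner continuous_fst
          ((opC U T hT).continuous.comp continuous_snd)
    · show (inner ℂ (opC U T hT ↑f) (↑g : Completion (UP U H)) : ℂ) = inner ℂ ↑f (opC U T hT ↑g)
      rw [opC_coe, opC_coe, Completion.inner_coe, Completion.inner_coe]
      rw [inner_def, inner_def]
      congr 1
      funext n
      simpa using (hpos n).1
        (f.seq n) (g.seq n)
  · intro u
    refine Completion.induction_on u ?_ (fun f => ?_)
    · show IsClosed {x : Completion (UP U H) | 0 ≤ re (inner (𝕜 := ℂ) (opC U T hT x) x)}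
      apply isClosed_le continuous_const
      exact (continuous_re (K := ℂ)).comp
        (Completion.Continuous.inner (opC U T hT).continuous continuous_id)
    · show 0 ≤ re (inner (𝕜 := ℂ) (opC U T hT ↑f) (↑f : Completion (UP U H)))
      rw [opC_coe, Completion.inner_coe, inner_def]
      have h := ((continuous_re (K := ℂ)).tendsto _).comp
        (tendsto_ulim (exists_tendsto_inner (opL U T hT f) f))
      refine ge_of_tendsto' h fun n => ?_
      simpa [ContinuousLinearMap.reApplyInnerSelf_apply] using (hpos n).2 (f.seq n)

theorem opC_comm (T S : ∀ n, H n →L[ℂ] H n) (hT : ∀ n, ‖T n‖ ≤ 1) (hS : ∀ n, ‖S n‖ ≤ 1)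
    (h : ∀ n, T n * S n = S n * T n) :
    opC U T hT * opC U S hS = opC U S hS * opC U T hT := by
  refine clm_ext fun f => ?_
  simp only [ContinuousLinearMap.mul_apply, opC_coe]
  refine congrArg _ (ext fun n => ?_)
  simp only [opL_seq]
  have := ContinuousLinearMap.ext_iff.mp (h n) (f.seq n)
  simpa [ContinuousLinearMap.mul_apply] using this

theorem coe_sum {ι : Type*} (s : Finset ι) (g : ι → UP U H) :
    ((↑(∑ i ∈ s, g i) : Completion (UP U H))) = ∑ i ∈ s, (↑(g i) : Completion (UP U H)) := by
  classical
  induction s using Finset.induction_on with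
  | empty => simp; rfl
  | insert _ _ h ih => rw [Finset.sum_insert h, Finset.sum_insert h, Completion.coe_add, ih]

theorem opC_sum_eq_one {m' : ℕ} (T : Fin m' → ∀ n, H n →L[ℂ] H n)
    (hT : ∀ i n, ‖T i n‖ ≤ 1) (hsum : ∀ n, (∑ i, T i n) = 1) :
    (∑ i, opC U (T i) (hT i)) = 1 := by
  refine clm_ext fun f => ?_
  rw [ContinuousLinearMap.sum_apply, ContinuousLinearMap.one_apply]
  simp only [opC_coe]
  rw [← coe_sum]
  have hs : (∑ i, opL U (T i) (hT i) f) = f := by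
    refine ext fun n => ?_
    rw [seq_sum]
    simp only [opL_seq]
    rw [← ContinuousLinearMap.sum_apply, hsum n, ContinuousLinearMap.one_apply]
  rw [hs]

end

end QcClosedAux

namespace QcClosedAux

open Filter Topology UniformSpace ContinuousLinearMap RCLike UP

/-- A bundled commuting-operator representation of a correlation. -/
structure Rep (k m : ℕ) (P : Fin m → Fin m → Fin k → Fin k → ℝ) where
  H : Type
  [normed : NormedAddCommGroup H]
  [ips : InnerProductSpace ℂ H]
  [complete : CompleteSpace H]
  ψ : H
  A : Fin k → Fin m → (H →L[ℂ] H)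
  B : Fin k → Fin m → (H →L[ℂ] H)
  norm_ψ : ‖ψ‖ = 1
  posA : ∀ x a, (A x a).IsPositive
  posB : ∀ y b, (B y b).IsPositive
  sumA : ∀ x, (∑ a, A x a) = 1
  sumB : ∀ y, (∑ b, B y b) = 1
  comm : ∀ x y a b, A x a * B y b = B y b * A x a
  corr : ∀ x y a b, (P a b x y : ℂ) = inner ℂ ψ ((A x a * B y b) ψ)

attribute [instance] Rep.normed Rep.ips Rep.complete

theorem rep_nonempty {k m : ℕ} {P : Fin m → Fin m → Fin k → Fin k → ℝ}
    (h : IsCommutingCorrelation k m P) : Nonempty (Rep k m P) := by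
  obtain ⟨H, i1, i2, i3, ψ, A, B, h1, h2, h3, h4, h5, h6, h7⟩ := h
  exact ⟨{ H := H, ψ := ψ, A := A, B := B, norm_ψ := h1, posA := h2, posB := h3,
           sumA := h4, sumB := h5, comm := h6, corr := h7 }⟩

/-- Norm bound for one member of a POVM. -/
theorem norm_le_one_of_povm {H : Type} [NormedAddCommGroup H] [InnerProductSpace ℂ H]
    [CompleteSpace H] {m : ℕ} (A : Fin m → (H →L[ℂ] H)) (hpos : ∀ a, (A a).IsPositive)
    (hsum : (∑ a, A a) = 1) (a : Fin m) : ‖A a‖ ≤ 1 := by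
  have hsub : ((1 : H →L[ℂ] H) - A a).IsPositive := by
    have h1 : (1 : H →L[ℂ] H) - A a = ∑ a' ∈ Finset.univ.erase a, A a' := by
      rw [← hsum, ← Finset.add_sum_erase _ _ (Finset.mem_univ a), add_sub_cancel_left]
    rw [h1]
    exact Finset.sum_induction _ _ (fun _ _ => IsPositive.add) isPositive_zero
      (fun a' _ => hpos a')
  rw [CStarAlgebra.norm_le_one_iff_of_nonneg (A a) ((nonneg_iff_isPositive (A a)).mpr (hpos a)),
    ← sub_nonneg, nonneg_iff_isPositive]
  exact hsub

end QcClosedAux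

namespace QcClosedAux

noncomputable section

open Filter Topology UniformSpace ContinuousLinearMap RCLike UP

variable {U : Ultrafilter ℕ} {H : ℕ → Type} [∀ n, NormedAddCommGroup (H n)]
  [∀ n, InnerProductSpace ℂ (H n)]

theorem opC_inner (T S : ∀ n, H n →L[ℂ] H n) (hT : ∀ n, ‖T n‖ ≤ 1) (hS : ∀ n, ‖S n‖ ≤ 1)
    (ψ : UP U H) (c : ℂ)
    (h : Tendsto (fun n => (inner ℂ (ψ.seq n) (T n (S n (ψ.seq n))) : ℂ)) ↑U (𝓝 c)) :
    (inner ℂ (↑ψ) ((opC U T hT * opC U S hS) (↑ψ : Completion (UP U H))) : ℂ) = c := by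
  rw [ContinuousLinearMap.mul_apply, opC_coe, opC_coe, Completion.inner_coe, inner_def]
  exact ulim_eq h

theorem norm_coe_eq_one (ψ : UP U H) (h : ∀ n, ‖ψ.seq n‖ = 1) :
    ‖(↑ψ : Completion (UP U H))‖ = 1 := by
  rw [Completion.norm_coe]
  have h1 : (fun n => ‖ψ.seq n‖) = fun _ => (1 : ℝ) := funext h
  have h2 := tendsto_norm_seq ψ
  rw [h1] at h2
  exact tendsto_nhds_unique h2 tendsto_const_nhds

end

end QcClosedAux

open Filter Topology UniformSpace ContinuousLinearMap QcClosedAux QcClosedAux.UP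

theorem isClosed_commutingCorrelations (k m : ℕ) (hk : 1 ≤ k) (hm : 1 ≤ m) :
    IsClosed {P : Fin m → Fin m → Fin k → Fin k → ℝ | IsCommutingCorrelation k m P} := by
  refine IsSeqClosed.isClosed ?_
  intro Pn P hPn hlim
  obtain ⟨U, hU⟩ := Filter.exists_ultrafilter_le (atTop : Filter ℕ)
  let r : ∀ n, Rep k m (Pn n) := fun n => Classical.choice (rep_nonempty (hPn n))
  have hA1 : ∀ (x : Fin k) (a : Fin m) (n : ℕ), ‖(r n).A x a‖ ≤ 1 := fun x a n =>
    norm_le_one_of_povm _ ((r n).posA x) ((r n).sumA x) a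
  have hB1 : ∀ (y : Fin k) (b : Fin m) (n : ℕ), ‖(r n).B y b‖ ≤ 1 := fun y b n =>
    norm_le_one_of_povm _ ((r n).posB y) ((r n).sumB y) b
  let ψW : UP U (fun n => (r n).H) :=
    UP.mk (fun n => (r n).ψ) ⟨1, fun n => le_of_eq (r n).norm_ψ⟩
  refine ⟨Completion (UP U (fun n => (r n).H)), inferInstance, inferInstance, inferInstance,
    ↑ψW,
    (fun x a => opC U (fun n => (r n).A x a) (hA1 x a)),
    (fun y b => opC U (fun n => (r n).B y b) (hB1 y b)),
    ?_, ?_, ?_, ?_, ?_, ?_, ?_⟩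
  · exact norm_coe_eq_one ψW fun n => (r n).norm_ψ
  · intro x a; exact opC_isPositive _ _ (fun n => (r n).posA x a)
  · intro y b; exact opC_isPositive _ _ (fun n => (r n).posB y b)
  · intro x
    exact opC_sum_eq_one (fun a n => (r n).A x a) (fun a n => hA1 x a n) (fun n => (r n).sumA x)
  · intro y
    exact opC_sum_eq_one (fun b n => (r n).B y b) (fun b n => hB1 y b n) (fun n => (r n).sumB y)
  · intro x y a b
    exact opC_comm _ _ _ _ (fun n => (r n).comm x y a b)
  · intro x y a b
    refine (opC_inner _ _ _ _ ψW _ ?_).symm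
    have h2 : Tendsto (fun n => (Pn n) a b x y) atTop (𝓝 (P a b x y)) :=
      tendsto_pi_nhds.mp (tendsto_pi_nhds.mp (tendsto_pi_nhds.mp
        (tendsto_pi_nhds.mp hlim a) b) x) y
    have h1 : Tendsto (fun n => ((Pn n) a b x y : ℂ)) ↑U (𝓝 ((P a b x y : ℝ) : ℂ)) :=
      (Complex.continuous_ofReal.tendsto _).comp (h2.mono_left hU)
    refine Tendsto.congr (fun n => ?_) h1
    have hc := (r n).corr x y a b
    rw [ContinuousLinearMap.mul_apply] at hc
    exact hc
end

section
/- Every commuting-operator quantum correlation is attainable by projective measurements: if P is a commuting-operator quantum correlation for the scenario (k, m), then there exist a complex Hilbert space H, a unit vector ψ ∈ H, and self-adjoint idempotent operators (orthogonal projections) A^x_a, B^y_b ∈ B(H) with Σ_a A^x_a = 1 for each x, Σ_b B^y_b = 1 for each y, and A^x_a B^y_b = B^y_b A^x_a for all x, y, a, b, such that P(a,b|x,y) = ⟨ψ, A^x_a B^y_b ψ⟩ for all x, y, a, b. -/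
set_option maxHeartbeats 2000000
set_option synthInstance.maxHeartbeats 400000

open scoped NNReal

noncomputable section Stmt12Aux

lemma Stmt12.sqrt_mem_elemental {A : Type*} [CStarAlgebra A] [PartialOrder A] [StarOrderedRing A]
    {a : A} (ha : 0 ≤ a) : CFC.sqrt a ∈ StarAlgebra.elemental ℂ a := by
  have hsa : IsSelfAdjoint a := .of_nonneg ha
  have h1 : CFC.sqrt a = cfc (fun x : ℂ => ((NNReal.sqrt x.re.toNNReal : ℝ) : ℂ)) a := by
    rw [CFC.sqrt_eq_cfc, cfc_nnreal_eq_real NNReal.sqrt a ha,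
      cfc_real_eq_complex (fun x : ℝ => ((NNReal.sqrt x.toNNReal : ℝ≥0) : ℝ)) hsa]
  have hf : ContinuousOn (fun x : ℂ => ((NNReal.sqrt x.re.toNNReal : ℝ) : ℂ))
      (spectrum ℂ a) := by
    apply Continuous.continuousOn
    exact Complex.continuous_ofReal.comp <| NNReal.continuous_coe.comp <|
      NNReal.continuous_sqrt.comp <| continuous_real_toNNReal.comp Complex.continuous_re
  rw [h1, cfc_apply (fun x : ℂ => ((NNReal.sqrt x.re.toNNReal : ℝ) : ℂ)) a hsa.isStarNormal hf,
    cfcHom_eq_of_isStarNormal]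
  exact SetLike.coe_mem _

lemma Stmt12.commute_sqrt {A : Type*} [CStarAlgebra A] [PartialOrder A] [StarOrderedRing A]
    {a b : A} (ha : 0 ≤ a) (hab : Commute b a) : Commute b (CFC.sqrt a) := by
  have hsa : IsSelfAdjoint a := .of_nonneg ha
  have hstar : Commute b (star a) := by rwa [hsa.star_eq]
  refine StarAlgebra.elemental.induction_on (R := ℂ) (Stmt12.sqrt_mem_elemental ha)
    (P := fun u _ => Commute b u) hab hstar (fun r => (Algebra.commutes r b).symm)
    (fun u _ v _ hu hv => hu.add_right hv) (fun u _ v _ hu hv => hu.mul_right hv) ?_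
  intro s hs hP v hv
  have hcl : IsClosed {u : A | Commute b u} := isClosed_eq (by fun_prop) (by fun_prop)
  exact closure_minimal (fun u hu => hP u hu) hcl hv

section Dilation

variable {H : Type} [NormedAddCommGroup H] [InnerProductSpace ℂ H] {m : ℕ}

/-- The dilated space `H ⊗ ℂ^m`. -/
abbrev Stmt12K (H : Type) (m : ℕ) := PiLp 2 (fun _ : Fin m => H)

instance Stmt12K.completeSpace [CompleteSpace H] : CompleteSpace (Stmt12K H m) :=
  (completeSpace_congr
    (PiLp.continuousLinearEquiv 2 ℂ (fun _ : Fin m => H)).isUniformEmbedding).mpr inferInstance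

variable (H m) in
def Stmt12e : Stmt12K H m ≃L[ℂ] (Fin m → H) := PiLp.continuousLinearEquiv 2 ℂ _

def Stmt12pr (c : Fin m) : Stmt12K H m →L[ℂ] H :=
  (ContinuousLinearMap.proj c).comp (Stmt12e H m).toContinuousLinearMap

@[simp] lemma Stmt12pr_apply (c : Fin m) (φ : Stmt12K H m) : Stmt12pr c φ = φ c := rfl

/-- `T ⊗ 1`. -/
def Stmt12dg (m : ℕ) (T : H →L[ℂ] H) : Stmt12K H m →L[ℂ] Stmt12K H m :=
  (Stmt12e H m).symm.toContinuousLinearMap.comp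
    (ContinuousLinearMap.pi fun c => T.comp (Stmt12pr c))

@[simp] lemma Stmt12dg_apply (T : H →L[ℂ] H) (φ : Stmt12K H m) (c : Fin m) :
    (Stmt12dg m T φ) c = T (φ c) := rfl

/-- The isometry `v ↦ (R c v)_c`. -/
def Stmt12V (R : Fin m → (H →L[ℂ] H)) : H →L[ℂ] Stmt12K H m :=
  (Stmt12e H m).symm.toContinuousLinearMap.comp (ContinuousLinearMap.pi fun c => R c)

@[simp] lemma Stmt12V_apply (R : Fin m → (H →L[ℂ] H)) (v : H) (c : Fin m) :
    (Stmt12V R v) c = R c v := rfl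

/-- The adjoint of `Stmt12V`. -/
def Stmt12W (R : Fin m → (H →L[ℂ] H)) : Stmt12K H m →L[ℂ] H :=
  ∑ c, (R c).comp (Stmt12pr c)

@[simp] lemma Stmt12W_apply (R : Fin m → (H →L[ℂ] H)) (φ : Stmt12K H m) :
    Stmt12W R φ = ∑ c, R c (φ c) := by
  simp [Stmt12W, ContinuousLinearMap.sum_apply]

/-- The coordinate projection `1 ⊗ |a⟩⟨a|`. -/
def Stmt12Pj (m : ℕ) (a : Fin m) : Stmt12K H m →L[ℂ] Stmt12K H m :=
  (Stmt12e H m).symm.toContinuousLinearMap.comp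
    (ContinuousLinearMap.pi fun c => if c = a then Stmt12pr a else 0)

@[simp] lemma Stmt12Pj_apply (a : Fin m) (φ : Stmt12K H m) (c : Fin m) :
    (Stmt12Pj m a φ) c = if c = a then φ a else 0 := by
  show (if c = a then Stmt12pr a else 0) φ = _
  split <;> rfl

lemma Stmt12K_sum_apply {ι : Type*} (s : Finset ι) (f : ι → Stmt12K H m) (c : Fin m) :
    (∑ i ∈ s, f i) c = ∑ i ∈ s, f i c := by
  have h : (Stmt12e H m) (∑ i ∈ s, f i) = ∑ i ∈ s, (Stmt12e H m) (f i) := map_sum _ _ _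
  have h2 := congrFun (congrArg (fun (g : Fin m → H) => g) h) c
  simpa using (Finset.sum_apply c s fun i => (Stmt12e H m) (f i)) ▸ h2

end Dilation

/-- Partial progress predicate: a commuting model for `P` in which the measurements in
`SA` (for Alice) and `SB` (for Bob) are already projective. -/
def Stmt12Config (k m : ℕ) (P : Fin m → Fin m → Fin k → Fin k → ℝ)
    (SA SB : Finset (Fin k)) : Prop :=
  ∃ (H : Type) (_ : NormedAddCommGroup H) (_ : InnerProductSpace ℂ H) (_ : CompleteSpace H)
    (ψ : H) (A B : Fin k → Fin m → (H →L[ℂ] H)),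
    ‖ψ‖ = 1 ∧
    (∀ x a, (A x a).IsPositive) ∧
    (∀ y b, (B y b).IsPositive) ∧
    (∀ x, (∑ a, A x a) = 1) ∧
    (∀ y, (∑ b, B y b) = 1) ∧
    (∀ x y a b, A x a * B y b = B y b * A x a) ∧
    (∀ x y a b, (P a b x y : ℂ) = inner ℂ ψ ((A x a * B y b) ψ)) ∧
    (∀ x ∈ SA, ∀ a, star (A x a) = A x a ∧ A x a * A x a = A x a) ∧
    (∀ y ∈ SB, ∀ b, star (B y b) = B y b ∧ B y b * B y b = B y b)

lemma Stmt12Config.swap {k m : ℕ} {P : Fin m → Fin m → Fin k → Fin k → ℝ}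
    {SA SB : Finset (Fin k)} (h : Stmt12Config k m P SA SB) :
    Stmt12Config k m (fun a b x y => P b a y x) SB SA := by
  obtain ⟨H, i1, i2, i3, ψ, A, B, hψ, hApos, hBpos, hAsum, hBsum, hcomm, hcorr, hSA, hSB⟩ := h
  exact ⟨H, i1, i2, i3, ψ, B, A, hψ, hBpos, hApos, hBsum, hAsum,
    fun x y a b => (hcomm y x b a).symm,
    fun x y a b => by rw [hcorr y x b a, hcomm y x b a], hSB, hSA⟩

end Stmt12Aux

noncomputable section Stmt12Step

open ContinuousLinearMap in
lemma Stmt12Config.step {k m : ℕ} (hm : 0 < m) {P : Fin m → Fin m → Fin k → Fin k → ℝ}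
    {SA SB : Finset (Fin k)} (x₀ : Fin k) (h : Stmt12Config k m P SA SB) :
    Stmt12Config k m P (insert x₀ SA) SB := by
  classical
  obtain ⟨H, i1, i2, i3, ψ, A, B, hψ, hApos, hBpos, hAsum, hBsum, hcomm, hcorr, hSA, hSB⟩ := h
  set z : Fin m := ⟨0, hm⟩ with hz
  have hAnn : ∀ c, 0 ≤ A x₀ c := fun c =>
    (ContinuousLinearMap.nonneg_iff_isPositive _).mpr (hApos x₀ c)
  set R : Fin m → (H →L[ℂ] H) := fun c => CFC.sqrt (A x₀ c) with hRdef
  have hRnn : ∀ c, (R c).IsPositive := fun c =>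
    (ContinuousLinearMap.nonneg_iff_isPositive _).mp (CFC.sqrt_nonneg (a := A x₀ c))
  have hRsym : ∀ c (v w : H), (inner ℂ (R c v) w : ℂ) = inner ℂ v (R c w) := fun c =>
    ContinuousLinearMap.isSelfAdjoint_iff_isSymmetric.mp (hRnn c).isSelfAdjoint
  have hRsq : ∀ c, R c * R c = A x₀ c := fun c => by
    have h2 := CFC.sq_sqrt (A x₀ c) (hAnn c)
    rwa [pow_two] at h2
  have hRBop : ∀ y b c, B y b * R c = R c * B y b := fun y b c =>
    Stmt12.commute_sqrt (hAnn c) ((hcomm x₀ y c b).symm)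
  -- the dilation
  set V : H →L[ℂ] Stmt12K H m := Stmt12V R with hVdef
  set W : Stmt12K H m →L[ℂ] H := Stmt12W R with hWdef
  have hWapp : ∀ φ, W φ = ∑ c, R c (φ c) := fun φ => Stmt12W_apply R φ
  have hVapp : ∀ v c, (V v) c = R c v := fun v c => rfl
  have hWV : ∀ v, W (V v) = v := by
    intro v
    rw [hWapp]
    have h2 : ∀ c, R c ((V v) c) = (A x₀ c) v := fun c => by
      rw [hVapp, ← ContinuousLinearMap.mul_apply, hRsq]
    rw [Finset.sum_congr rfl fun c _ => h2 c, ← ContinuousLinearMap.sum_apply, hAsum x₀,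
      ContinuousLinearMap.one_apply]
  have hadjVW : ∀ (v : H) (φ : Stmt12K H m), (inner ℂ (V v) φ : ℂ) = inner ℂ v (W φ) := by
    intro v φ
    rw [PiLp.inner_apply, hWapp, inner_sum]
    exact Finset.sum_congr rfl fun c _ => hRsym c v (φ c)
  have hadjWV : ∀ (φ : Stmt12K H m) (v : H), (inner ℂ φ (V v) : ℂ) = inner ℂ (W φ) v := by
    intro φ v
    rw [← inner_conj_symm, hadjVW, inner_conj_symm]
  have hadj : W = ContinuousLinearMap.adjoint V := by
    rw [ContinuousLinearMap.eq_adjoint_iff]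
    exact fun φ v => (hadjWV φ v).symm
  -- properties of V T W and Q
  have hVTW_pos : ∀ T : H →L[ℂ] H, T.IsPositive → (V.comp (T.comp W)).IsPositive := by
    intro T hT
    have h2 := hT.conj_adjoint V
    rwa [← hadj] at h2
  have hVTW_sa : ∀ T : H →L[ℂ] H, IsSelfAdjoint T → IsSelfAdjoint (V.comp (T.comp W)) := by
    intro T hT
    have h2 := hT.conj_adjoint V
    rwa [← hadj] at h2
  have hVW_pos : (V.comp W).IsPositive := by
    have h2 := hVTW_pos 1 isPositive_one
    rwa [ContinuousLinearMap.one_def, ContinuousLinearMap.id_comp] at h2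
  set Q : Stmt12K H m →L[ℂ] Stmt12K H m := 1 - V.comp W with hQdef
  have hQapp : ∀ φ, Q φ = φ - V (W φ) := fun φ => by
    simp [hQdef, ContinuousLinearMap.sub_apply]
  have hWQ : ∀ φ, W (Q φ) = 0 := fun φ => by
    rw [hQapp, map_sub, hWV, sub_self]
  have hQV : ∀ v, Q (V v) = 0 := fun v => by
    rw [hQapp, hWV, sub_self]
  have hQQ : ∀ φ, Q (Q φ) = Q φ := fun φ => by
    conv_lhs => rw [hQapp (Q φ), hWQ, map_zero, sub_zero]
  have hQ_sa : IsSelfAdjoint Q := by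
    exact (IsSelfAdjoint.one (Stmt12K H m →L[ℂ] Stmt12K H m)).sub hVW_pos.isSelfAdjoint
  have hQsym : ∀ φ χ, (inner ℂ (Q φ) χ : ℂ) = inner ℂ φ (Q χ) :=
    ContinuousLinearMap.isSelfAdjoint_iff_isSymmetric.mp hQ_sa
  have hQ_pos : Q.IsPositive := by
    refine ⟨ContinuousLinearMap.isSelfAdjoint_iff_isSymmetric.mp hQ_sa, fun φ => ?_⟩
    have h2 : (inner ℂ (Q φ) φ : ℂ) = inner ℂ (Q φ) (Q φ) := by
      conv_lhs => rw [← hQQ φ]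
      rw [hQsym (Q φ) φ, ← inner_conj_symm, hQsym, inner_conj_symm]
    rw [ContinuousLinearMap.reApplyInnerSelf_apply, h2]
    exact inner_self_nonneg
  -- intertwining with dg
  have hdgV : ∀ (T : H →L[ℂ] H), (∀ c, T * R c = R c * T) →
      ∀ v, Stmt12dg m T (V v) = V (T v) := by
    intro T hT v
    refine PiLp.ext fun c => ?_
    rw [Stmt12dg_apply, hVapp, hVapp, ← ContinuousLinearMap.mul_apply, hT c,
      ContinuousLinearMap.mul_apply]
  have hWdg : ∀ (T : H →L[ℂ] H), (∀ c, T * R c = R c * T) →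
      ∀ φ, W (Stmt12dg m T φ) = T (W φ) := by
    intro T hT φ
    rw [hWapp, hWapp, map_sum]
    refine Finset.sum_congr rfl fun c _ => ?_
    rw [Stmt12dg_apply, ← ContinuousLinearMap.mul_apply, ← hT c, ContinuousLinearMap.mul_apply]
  -- the new model
  set A' : Fin k → Fin m → (Stmt12K H m →L[ℂ] Stmt12K H m) := fun x a =>
    if x = x₀ then Stmt12Pj m a
    else V.comp ((A x a).comp W) + (if a = z then Q else 0) with hA'def
  set B' : Fin k → Fin m → (Stmt12K H m →L[ℂ] Stmt12K H m) := fun y b =>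
    Stmt12dg m (B y b) with hB'def
  have hA'x₀ : ∀ a, A' x₀ a = Stmt12Pj m a := fun a => by simp [hA'def]
  have hA'ne : ∀ x, x ≠ x₀ → ∀ a,
      A' x a = V.comp ((A x a).comp W) + (if a = z then Q else 0) :=
    fun x hx a => by simp [hA'def, hx]
  have hA'neapp : ∀ x, x ≠ x₀ → ∀ a (v : H), A' x a (V v) = V (A x a v) := by
    intro x hx a v
    rw [hA'ne x hx a, ContinuousLinearMap.add_apply, ContinuousLinearMap.comp_apply,
      ContinuousLinearMap.comp_apply, hWV]
    split
    · rw [hQV, add_zero]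
    · rw [ContinuousLinearMap.zero_apply, add_zero]
  have hB'app : ∀ y b v, B' y b (V v) = V (B y b v) := fun y b v =>
    hdgV (B y b) (hRBop y b) v
  -- Pj basic facts
  have hPjsym : ∀ (a : Fin m) (φ χ : Stmt12K H m),
      (inner ℂ (Stmt12Pj m a φ) χ : ℂ) = inner ℂ (φ a) (χ a) := by
    intro a φ χ
    rw [PiLp.inner_apply,
      Finset.sum_eq_single a
        (fun c _ hc => by rw [Stmt12Pj_apply, if_neg hc, inner_zero_left])
        (fun hc => absurd (Finset.mem_univ a) hc),
      Stmt12Pj_apply, if_pos rfl]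
  have hPjsym' : ∀ (a : Fin m) (φ χ : Stmt12K H m),
      (inner ℂ φ (Stmt12Pj m a χ) : ℂ) = inner ℂ (φ a) (χ a) := by
    intro a φ χ
    rw [← inner_conj_symm, hPjsym, inner_conj_symm]
  have hPj_sa : ∀ a : Fin m, IsSelfAdjoint (Stmt12Pj m a (H := H)) := fun a =>
    ContinuousLinearMap.isSelfAdjoint_iff_isSymmetric.mpr fun φ χ =>
      (hPjsym a φ χ).trans (hPjsym' a φ χ).symm
  -- B' symmetry
  have hdgsym : ∀ (T : H →L[ℂ] H), IsSelfAdjoint T →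
      ∀ (φ χ : Stmt12K H m), (inner ℂ (Stmt12dg m T φ) χ : ℂ) = inner ℂ φ (Stmt12dg m T χ) := by
    intro T hT φ χ
    have hTs := ContinuousLinearMap.isSelfAdjoint_iff_isSymmetric.mp hT
    rw [PiLp.inner_apply, PiLp.inner_apply]
    exact Finset.sum_congr rfl fun c _ => hTs (φ c) (χ c)
  refine ⟨Stmt12K H m, inferInstance, inferInstance, inferInstance, V ψ, A', B',
    ?_, ?_, ?_, ?_, ?_, ?_, ?_, ?_, ?_⟩
  · -- norm
    have h1 : (inner ℂ (V ψ) (V ψ) : ℂ) = inner ℂ ψ ψ := by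
      rw [hadjWV (V ψ) ψ, hWV]
    rw [@norm_eq_sqrt_re_inner ℂ, h1, ← @norm_eq_sqrt_re_inner ℂ, hψ]
  · -- A' positive
    intro x a
    by_cases hx : x = x₀
    · subst hx
      rw [hA'x₀]
      refine ⟨ContinuousLinearMap.isSelfAdjoint_iff_isSymmetric.mp (hPj_sa a), fun φ => ?_⟩
      rw [ContinuousLinearMap.reApplyInnerSelf_apply, hPjsym a φ φ]
      exact inner_self_nonneg
    · rw [hA'ne x hx a]
      by_cases ha : a = z
      · rw [if_pos ha]
        exact (hVTW_pos _ (hApos x a)).add hQ_pos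
      · rw [if_neg ha, add_zero]
        exact hVTW_pos _ (hApos x a)
  · -- B' positive
    intro y b
    simp only [hB'def]
    refine ⟨
      (hdgsym _ (hBpos y b).isSelfAdjoint), fun φ => ?_⟩
    rw [ContinuousLinearMap.reApplyInnerSelf_apply, PiLp.inner_apply, map_sum]
    exact Finset.sum_nonneg fun c _ => (hBpos y b).re_inner_nonneg_left (φ c)
  · -- A' sums to one
    intro x
    by_cases hx : x = x₀
    · subst hx
      rw [Finset.sum_congr rfl fun a _ => hA'x₀ a]
      refine ContinuousLinearMap.ext fun φ => ?_
      rw [ContinuousLinearMap.sum_apply, ContinuousLinearMap.one_apply]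
      refine PiLp.ext fun c => ?_
      rw [Stmt12K_sum_apply, Finset.sum_congr rfl fun a _ => Stmt12Pj_apply a φ c,
        Finset.sum_ite_eq, if_pos (Finset.mem_univ c)]
    · rw [Finset.sum_congr rfl fun a _ => hA'ne x hx a, Finset.sum_add_distrib,
        Finset.sum_ite_eq' Finset.univ z fun _ => Q, if_pos (Finset.mem_univ z)]
      refine ContinuousLinearMap.ext fun φ => ?_
      rw [ContinuousLinearMap.add_apply, ContinuousLinearMap.sum_apply,
        ContinuousLinearMap.one_apply]
      have h2 : ∑ a, (V.comp ((A x a).comp W)) φ = V (W φ) := by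
        have h3 : ∀ a : Fin m, (V.comp ((A x a).comp W)) φ = V ((A x a) (W φ)) := fun a => rfl
        rw [Finset.sum_congr rfl fun a _ => h3 a, ← map_sum V,
          ← ContinuousLinearMap.sum_apply, hAsum x, ContinuousLinearMap.one_apply]
      rw [h2, hQapp]
      abel
  · -- B' sums to one
    intro y
    simp only [hB'def]
    refine ContinuousLinearMap.ext fun φ => ?_
    rw [ContinuousLinearMap.sum_apply, ContinuousLinearMap.one_apply]
    refine PiLp.ext fun c => ?_
    rw [Stmt12K_sum_apply, Finset.sum_congr rfl fun b _ => Stmt12dg_apply (B y b) φ c,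
      ← ContinuousLinearMap.sum_apply, hBsum y, ContinuousLinearMap.one_apply]
  · -- commutation
    intro x y a b
    have hAB : ∀ w, A x a (B y b w) = B y b (A x a w) := fun w => by
      have h2 := congrArg (fun T : H →L[ℂ] H => T w) (hcomm x y a b)
      simpa [ContinuousLinearMap.mul_apply] using h2
    by_cases hx : x = x₀
    · subst hx
      rw [hA'x₀]
      simp only [hB'def]
      refine ContinuousLinearMap.ext fun φ => ?_
      rw [ContinuousLinearMap.mul_apply, ContinuousLinearMap.mul_apply]
      refine PiLp.ext fun c => ?_
      by_cases hc : c = a <;> simp [Stmt12Pj_apply, hc]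
    · rw [hA'ne x hx a]
      have hWdgB : ∀ φ, W (Stmt12dg m (B y b) φ) = B y b (W φ) := hWdg (B y b) (hRBop y b)
      have hdgVB : ∀ v, Stmt12dg m (B y b) (V v) = V (B y b v) := hdgV (B y b) (hRBop y b)
      simp only [hB'def]
      by_cases ha : a = z
      · rw [if_pos ha]
        refine ContinuousLinearMap.ext fun φ => ?_
        rw [ContinuousLinearMap.mul_apply, ContinuousLinearMap.mul_apply]
        rw [ContinuousLinearMap.add_apply, ContinuousLinearMap.add_apply,
          ContinuousLinearMap.comp_apply, ContinuousLinearMap.comp_apply,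
          ContinuousLinearMap.comp_apply, ContinuousLinearMap.comp_apply]
        rw [hWdgB, hQapp, hQapp, map_add (Stmt12dg m (B y b)), map_sub (Stmt12dg m (B y b)),
          hdgVB, hdgVB, hWdgB, hAB (W φ)]
      · rw [if_neg ha, add_zero]
        refine ContinuousLinearMap.ext fun φ => ?_
        rw [ContinuousLinearMap.mul_apply, ContinuousLinearMap.mul_apply,
          ContinuousLinearMap.comp_apply, ContinuousLinearMap.comp_apply,
          ContinuousLinearMap.comp_apply, ContinuousLinearMap.comp_apply]
        rw [hWdgB, hdgVB, hAB (W φ)]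
  · -- correlation
    intro x y a b
    rw [ContinuousLinearMap.mul_apply, hB'app y b ψ]
    by_cases hx : x = x₀
    · subst hx
      rw [hA'x₀]
      have h2 : (inner ℂ (V ψ) (Stmt12Pj m a (V (B y b ψ))) : ℂ)
          = inner ℂ (R a ψ) (R a (B y b ψ)) := hPjsym' a (V ψ) (V (B y b ψ))
      rw [h2, hRsym a ψ (R a (B y b ψ)), ← ContinuousLinearMap.mul_apply (R a) (R a), hRsq a,
        hcorr x y a b, ContinuousLinearMap.mul_apply]
    · rw [hA'neapp x hx a (B y b ψ), hadjWV (V ψ) (A x a (B y b ψ)), hWV,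
        hcorr x y a b, ContinuousLinearMap.mul_apply]
  · -- Alice projections
    intro x hx a
    by_cases hx0 : x = x₀
    · subst hx0
      rw [hA'x₀]
      refine ⟨hPj_sa a, ?_⟩
      refine ContinuousLinearMap.ext fun φ => ?_
      rw [ContinuousLinearMap.mul_apply]
      refine PiLp.ext fun c => ?_
      by_cases hc : c = a <;> simp [Stmt12Pj_apply, hc]
    · have hx' : x ∈ SA := by
        rcases Finset.mem_insert.mp hx with h2 | h2
        · exact absurd h2 hx0
        · exact h2
      obtain ⟨hps, hpi⟩ := hSA x hx' a
      have hpapp : ∀ w, A x a (A x a w) = A x a w := fun w => by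
        have h2 := congrArg (fun T : H →L[ℂ] H => T w) hpi
        simpa [ContinuousLinearMap.mul_apply] using h2
      constructor
      · rw [hA'ne x hx0 a]
        have hsa1 : IsSelfAdjoint (V.comp ((A x a).comp W)) := hVTW_sa _ hps
        by_cases ha : a = z
        · rw [if_pos ha]
          exact hsa1.add hQ_sa
        · rw [if_neg ha, add_zero]
          exact hsa1
      · rw [hA'ne x hx0 a]
        by_cases ha : a = z
        · rw [if_pos ha]
          refine ContinuousLinearMap.ext fun φ => ?_
          rw [ContinuousLinearMap.mul_apply, ContinuousLinearMap.add_apply,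
            ContinuousLinearMap.add_apply, ContinuousLinearMap.comp_apply,
            ContinuousLinearMap.comp_apply, ContinuousLinearMap.comp_apply,
            ContinuousLinearMap.comp_apply]
          rw [map_add W, hWQ, add_zero, hWV, hpapp, map_add Q, hQV, hQQ, zero_add]
        · rw [if_neg ha, add_zero]
          refine ContinuousLinearMap.ext fun φ => ?_
          rw [ContinuousLinearMap.mul_apply, ContinuousLinearMap.comp_apply,
            ContinuousLinearMap.comp_apply, ContinuousLinearMap.comp_apply,
            ContinuousLinearMap.comp_apply, hWV, hpapp]
  · -- Bob projections
    intro y hy b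
    obtain ⟨hps, hpi⟩ := hSB y hy b
    have hpapp : ∀ w, B y b (B y b w) = B y b w := fun w => by
      have h2 := congrArg (fun T : H →L[ℂ] H => T w) hpi
      simpa [ContinuousLinearMap.mul_apply] using h2
    constructor
    · exact ContinuousLinearMap.isSelfAdjoint_iff_isSymmetric.mpr (hdgsym _ hps)
    · simp only [hB'def]
      refine ContinuousLinearMap.ext fun φ => ?_
      rw [ContinuousLinearMap.mul_apply]
      refine PiLp.ext fun c => ?_
      exact hpapp (φ c)

end Stmt12Step

noncomputable section Stmt12Main

lemma Stmt12Config.fill {k m : ℕ} (hm : 0 < m) {P : Fin m → Fin m → Fin k → Fin k → ℝ}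
    {SB : Finset (Fin k)} :
    ∀ (n : ℕ) (SA : Finset (Fin k)), (Finset.univ \ SA).card = n →
      Stmt12Config k m P SA SB → Stmt12Config k m P Finset.univ SB := by
  intro n
  induction n using Nat.strong_induction_on with
  | _ n ih =>
    intro SA hcard hc
    by_cases hSA : SA = Finset.univ
    · rwa [hSA] at hc
    · obtain ⟨x₀, hx₀⟩ : ∃ x, x ∉ SA := by
        by_contra hno
        push_neg at hno
        exact hSA (Finset.eq_univ_iff_forall.mpr hno)
      have hlt : (Finset.univ \ insert x₀ SA).card < n := by
        rw [← hcard]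
        refine Finset.card_lt_card ?_
        rw [Finset.ssubset_iff_of_subset
          (Finset.sdiff_subset_sdiff (subset_refl _) (Finset.subset_insert x₀ SA))]
        exact ⟨x₀, Finset.mem_sdiff.mpr ⟨Finset.mem_univ x₀, hx₀⟩,
          fun hmem => (Finset.mem_sdiff.mp hmem).2 (Finset.mem_insert_self x₀ SA)⟩
      exact ih _ hlt (insert x₀ SA) rfl (hc.step hm x₀)

end Stmt12Main

theorem commutingCorrelation_projective
    (k m : ℕ) (hk : 1 ≤ k) (hm : 1 ≤ m)
    (P : Fin m → Fin m → Fin k → Fin k → ℝ)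
    (hP : IsCommutingCorrelation k m P) :
    ∃ (H : Type) (_ : NormedAddCommGroup H) (_ : InnerProductSpace ℂ H) (_ : CompleteSpace H)
      (ψ : H) (A B : Fin k → Fin m → (H →L[ℂ] H)),
      ‖ψ‖ = 1 ∧
      (∀ x a, star (A x a) = A x a ∧ A x a * A x a = A x a) ∧
      (∀ y b, star (B y b) = B y b ∧ B y b * B y b = B y b) ∧
      (∀ x, (∑ a, A x a) = 1) ∧
      (∀ y, (∑ b, B y b) = 1) ∧
      (∀ x y a b, A x a * B y b = B y b * A x a) ∧
      (∀ x y a b, (P a b x y : ℂ) = inner ℂ ψ ((A x a * B y b) ψ)) := by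
  have hm' : 0 < m := hm
  have c0 : Stmt12Config k m P ∅ ∅ := by
    obtain ⟨H, i1, i2, i3, ψ, A, B, h1, h2, h3, h4, h5, h6, h7⟩ := hP
    exact ⟨H, i1, i2, i3, ψ, A, B, h1, h2, h3, h4, h5, h6, h7,
      fun x hx => absurd hx (Finset.notMem_empty x),
      fun y hy => absurd hy (Finset.notMem_empty y)⟩
  have c1 : Stmt12Config k m P Finset.univ ∅ := Stmt12Config.fill hm' _ ∅ rfl c0
  have c2 : Stmt12Config k m (fun a b x y => P b a y x) ∅ Finset.univ := c1.swap
  have c3 : Stmt12Config k m (fun a b x y => P b a y x) Finset.univ Finset.univ :=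
    Stmt12Config.fill hm' _ ∅ rfl c2
  have c4 : Stmt12Config k m P Finset.univ Finset.univ := c3.swap
  obtain ⟨H, i1, i2, i3, ψ, A, B, h1, _, _, h4, h5, h6, h7, h8, h9⟩ := c4
  exact ⟨H, i1, i2, i3, ψ, A, B, h1,
    fun x a => h8 x (Finset.mem_univ x) a,
    fun y b => h9 y (Finset.mem_univ y) b, h4, h5, h6, h7⟩
end

section
/- (Realization of steering data; Hughston–Jozsa–Wootters) Let d, k, m ≥ 1 and let (α^x_a)_{x ∈ [k], a ∈ [m]} be steering data on M_d(ℂ). Then there exist a density matrix R on ℂ^d ⊗ ℂ^d, i.e., a positive semidefinite matrix R ∈ M_{d·d}(ℂ) (indexed by Fin d × Fin d) with trace 1, and matrices A^x_a ∈ M_d(ℂ) with each A^x_a positive semidefinite and Σ_a A^x_a = 1 for every x, such that α^x_a(X) = tr(R · (X ⊗ A^x_a)) for all x ∈ [k], a ∈ [m], and X ∈ M_d(ℂ), where X ⊗ A^x_a denotes the Kronecker product. -/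
open scoped ComplexOrder Kronecker

open Matrix in
private lemma aux_vecMulVec_psd {n : Type*} [Fintype n] (v : n → ℂ) :
    (vecMulVec v (star v)).PosSemidef := by
  refine Matrix.PosSemidef.of_dotProduct_mulVec_nonneg ?_ ?_
  · ext i j
    simp [vecMulVec_apply, conjTranspose_apply, mul_comm]
  · intro x
    have h : star x ⬝ᵥ (vecMulVec v (star v)) *ᵥ x
        = star (star v ⬝ᵥ x) * (star v ⬝ᵥ x) := by
      simp only [dotProduct, mulVec, vecMulVec_apply, Pi.star_apply, star_sum, star_mul',
        star_star, Finset.sum_mul]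
      refine Finset.sum_congr rfl fun i _ => ?_
      rw [Finset.mul_sum, Finset.mul_sum]
      exact Finset.sum_congr rfl fun j _ => by ring
    rw [h]
    exact star_mul_self_nonneg _

open Matrix in
private lemma aux_trace_vecMulVec_mul {n : Type*} [Fintype n] (v w : n → ℂ)
    (K : Matrix n n ℂ) : (vecMulVec v w * K).trace = w ⬝ᵥ (K *ᵥ v) := by
  simp only [trace, diag_apply, mul_apply, vecMulVec_apply, dotProduct, mulVec]
  rw [Finset.sum_comm]
  refine Finset.sum_congr rfl fun q _ => ?_
  rw [Finset.mul_sum]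
  exact Finset.sum_congr rfl fun p _ => by ring

open Matrix in
private noncomputable def funcMat {d : ℕ} (φ : Matrix (Fin d) (Fin d) ℂ →ₗ[ℂ] ℂ) :
    Matrix (Fin d) (Fin d) ℂ :=
  Matrix.of fun i j => φ (Matrix.single j i 1)

open Matrix in
private lemma funcMat_trace {d : ℕ} (φ : Matrix (Fin d) (Fin d) ℂ →ₗ[ℂ] ℂ)
    (X : Matrix (Fin d) (Fin d) ℂ) : (funcMat φ * X).trace = φ X := by
  conv_rhs => rw [Matrix.matrix_eq_sum_single X]
  simp only [map_sum]
  simp only [trace, diag_apply, mul_apply, funcMat, of_apply]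
  rw [Finset.sum_comm]
  refine Finset.sum_congr rfl fun i _ => ?_
  refine Finset.sum_congr rfl fun j _ => ?_
  rw [show Matrix.single i j (X i j) = X i j • Matrix.single i j 1 by
    rw [Matrix.smul_single, smul_eq_mul, mul_one], LinearMap.map_smul]
  rw [smul_eq_mul, mul_comm]

open Matrix in
private lemma funcMat_quad {d : ℕ} (φ : Matrix (Fin d) (Fin d) ℂ →ₗ[ℂ] ℂ)
    (v : Fin d → ℂ) : star v ⬝ᵥ (funcMat φ) *ᵥ v = φ (vecMulVec v (star v)) := by
  conv_rhs => rw [Matrix.matrix_eq_sum_single (vecMulVec v (star v))]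
  simp only [map_sum]
  simp only [dotProduct, mulVec, funcMat, of_apply, Pi.star_apply]
  rw [Finset.sum_comm]
  refine Finset.sum_congr rfl fun a _ => ?_
  rw [Finset.mul_sum]
  refine Finset.sum_congr rfl fun b _ => ?_
  rw [show Matrix.single b a (vecMulVec v (star v) b a)
      = (v b * star (v a)) • Matrix.single b a 1 by
    rw [Matrix.smul_single, smul_eq_mul, mul_one, vecMulVec_apply, Pi.star_apply],
    LinearMap.map_smul]
  rw [smul_eq_mul]
  ring

open Matrix in
private lemma funcMat_psd {d : ℕ} (φ : Matrix (Fin d) (Fin d) ℂ →ₗ[ℂ] ℂ)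
    (hφ : ∀ X : Matrix (Fin d) (Fin d) ℂ, X.PosSemidef → 0 ≤ φ X) :
    (funcMat φ).PosSemidef := by
  have hreal : ∀ v : Fin d → ℂ, (starRingEnd ℂ) (φ (vecMulVec v (star v)))
      = φ (vecMulVec v (star v)) := by
    intro v
    have h := hφ _ (aux_vecMulVec_psd v)
    rw [Complex.conj_eq_iff_im]
    exact ((Complex.le_def.mp h).2).symm
  have hbil : ∀ v w : Fin d → ℂ,
      (starRingEnd ℂ) (φ (vecMulVec v (star w))) = φ (vecMulVec w (star v)) := by
    intro v w
    have hvw : ∀ c : ℂ, vecMulVec (v + c • w) (star (v + c • w))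
        = vecMulVec v (star v) + (starRingEnd ℂ) c • vecMulVec v (star w)
          + c • vecMulVec w (star v) + (c * (starRingEnd ℂ) c) • vecMulVec w (star w) := by
      intro c
      ext i j
      simp only [vecMulVec_apply, Pi.star_apply, Pi.add_apply, Pi.smul_apply, Matrix.add_apply,
        Matrix.smul_apply, smul_eq_mul, star_add, star_mul', Complex.star_def]
      push_cast
      ring
    have h1 := hreal (v + (1 : ℂ) • w)
    have h2 := hreal (v + Complex.I • w)
    rw [hvw] at h1 h2
    simp only [map_add, LinearMap.map_smul, smul_eq_mul, _root_.map_mul, _root_.map_one,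
      map_neg, Complex.conj_I, Complex.conj_conj, hreal v, hreal w, one_mul, neg_mul,
      neg_neg, mul_neg] at h1 h2
    set x := φ (vecMulVec v (star w)) with hx
    set y := φ (vecMulVec w (star v)) with hy
    linear_combination h1 / 2 - Complex.I / 2 * h2 +
      (((starRingEnd ℂ) x - (starRingEnd ℂ) y + x - y) / 2) * Complex.I_mul_I
  refine Matrix.PosSemidef.of_dotProduct_mulVec_nonneg ?_ ?_
  · ext i j
    have hb : ∀ a b : Fin d, vecMulVec (Pi.single a 1 : Fin d → ℂ)
        (star (Pi.single b 1 : Fin d → ℂ)) = Matrix.single a b 1 := by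
      intro a b
      ext i' j'
      by_cases h1 : a = i' <;> by_cases h2 : b = j' <;>
        simp [vecMulVec_apply, Pi.single_apply, Matrix.single, h1, h2, eq_comm]
    have := hbil (Pi.single i 1) (Pi.single j 1)
    rw [hb, hb] at this
    simpa [conjTranspose_apply, funcMat, Complex.star_def] using this
  · intro x
    rw [funcMat_quad]
    exact hφ _ (aux_vecMulVec_psd x)

namespace SteeringAux
open Matrix

variable {d : ℕ} {ρ : Matrix (Fin d) (Fin d) ℂ}

private noncomputable def Fd (hρ : ρ.IsHermitian) (g : Fin d → ℝ) :
    Matrix (Fin d) (Fin d) ℂ :=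
  (hρ.eigenvectorUnitary : Matrix (Fin d) (Fin d) ℂ) *
    Matrix.diagonal (fun i => (g i : ℂ)) *
    star (hρ.eigenvectorUnitary : Matrix (Fin d) (Fin d) ℂ)

private lemma Fd_mul (hρ : ρ.IsHermitian) (g₁ g₂ : Fin d → ℝ) :
    Fd hρ g₁ * Fd hρ g₂ = Fd hρ (fun i => g₁ i * g₂ i) := by
  have hU : star (hρ.eigenvectorUnitary : Matrix (Fin d) (Fin d) ℂ) *
      (hρ.eigenvectorUnitary : Matrix (Fin d) (Fin d) ℂ) = 1 :=
    Matrix.mem_unitaryGroup_iff'.mp hρ.eigenvectorUnitary.2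
  unfold Fd
  calc (hρ.eigenvectorUnitary : Matrix (Fin d) (Fin d) ℂ) * diagonal (fun i => (g₁ i : ℂ)) *
        star (hρ.eigenvectorUnitary : Matrix (Fin d) (Fin d) ℂ) *
        ((hρ.eigenvectorUnitary : Matrix (Fin d) (Fin d) ℂ) * diagonal (fun i => (g₂ i : ℂ)) *
        star (hρ.eigenvectorUnitary : Matrix (Fin d) (Fin d) ℂ))
      = (hρ.eigenvectorUnitary : Matrix (Fin d) (Fin d) ℂ) * (diagonal (fun i => (g₁ i : ℂ)) *
        ((star (hρ.eigenvectorUnitary : Matrix (Fin d) (Fin d) ℂ) *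
          (hρ.eigenvectorUnitary : Matrix (Fin d) (Fin d) ℂ)) *
          (diagonal (fun i => (g₂ i : ℂ)) *
          star (hρ.eigenvectorUnitary : Matrix (Fin d) (Fin d) ℂ)))) := by
        simp only [Matrix.mul_assoc]
    _ = (hρ.eigenvectorUnitary : Matrix (Fin d) (Fin d) ℂ) *
        diagonal (fun i => ((g₁ i * g₂ i : ℝ) : ℂ)) *
        star (hρ.eigenvectorUnitary : Matrix (Fin d) (Fin d) ℂ) := by
        rw [hU, one_mul]
        push_cast
        rw [← diagonal_mul_diagonal]
        simp only [Matrix.mul_assoc]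

private lemma Fd_add (hρ : ρ.IsHermitian) (g₁ g₂ : Fin d → ℝ) :
    Fd hρ g₁ + Fd hρ g₂ = Fd hρ (fun i => g₁ i + g₂ i) := by
  unfold Fd
  rw [← add_mul, ← mul_add, diagonal_add]
  push_cast
  rfl

private lemma Fd_one (hρ : ρ.IsHermitian) : Fd hρ (fun _ => 1) = 1 := by
  have hU : (hρ.eigenvectorUnitary : Matrix (Fin d) (Fin d) ℂ) *
      star (hρ.eigenvectorUnitary : Matrix (Fin d) (Fin d) ℂ) = 1 :=
    Matrix.mem_unitaryGroup_iff.mp hρ.eigenvectorUnitary.2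
  unfold Fd
  simp only [Complex.ofReal_one]
  rw [show Matrix.diagonal (fun _ : Fin d => (1 : ℂ)) = 1 from Matrix.diagonal_one, mul_one, hU]

private lemma Fd_zero (hρ : ρ.IsHermitian) : Fd hρ (fun _ => 0) = 0 := by
  unfold Fd
  simp

private lemma Fd_herm (hρ : ρ.IsHermitian) (g : Fin d → ℝ) : (Fd hρ g).IsHermitian := by
  unfold Fd
  simp only [Matrix.IsHermitian, Matrix.star_eq_conjTranspose, conjTranspose_mul,
    conjTranspose_conjTranspose, diagonal_conjTranspose, Matrix.mul_assoc]
  congr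
  ext i j
  simp [Matrix.diagonal_apply, Pi.star_apply, Complex.star_def, Complex.conj_ofReal]

private lemma Fd_psd (hρ : ρ.IsHermitian) (g : Fin d → ℝ) (hg : ∀ i, 0 ≤ g i) :
    (Fd hρ g).PosSemidef := by
  unfold Fd
  rw [Matrix.star_eq_conjTranspose]
  exact (Matrix.posSemidef_diagonal_iff.mpr fun i =>
    Complex.zero_le_real.mpr (hg i)).mul_mul_conjTranspose_same _

private lemma Fd_eigen (hρ : ρ.IsHermitian) : Fd hρ hρ.eigenvalues = ρ := by
  conv_rhs => rw [hρ.spectral_theorem]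
  rfl

end SteeringAux

open Matrix in
private lemma aux_kron_mulVec {d : ℕ} (X A S : Matrix (Fin d) (Fin d) ℂ) :
    ((X ⊗ₖ A) *ᵥ fun p : Fin d × Fin d => S p.1 p.2)
      = fun q : Fin d × Fin d => (X * S * Aᵀ) q.1 q.2 := by
  funext q
  simp only [mulVec, dotProduct, mul_apply, kroneckerMap_apply, transpose_apply,
    Fintype.sum_prod_type, Finset.sum_mul]
  rw [Finset.sum_comm]
  refine Finset.sum_congr rfl fun i _ => Finset.sum_congr rfl fun j _ => by ring

open Matrix in
private lemma aux_dot_star {d : ℕ} (s N : Matrix (Fin d) (Fin d) ℂ) (hs : s.IsHermitian) :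
    (star fun p : Fin d × Fin d => s p.1 p.2) ⬝ᵥ (fun q : Fin d × Fin d => N q.1 q.2)
      = (s * N).trace := by
  simp only [dotProduct, Pi.star_apply, trace, diag_apply, mul_apply, Fintype.sum_prod_type]
  rw [Finset.sum_comm]
  refine Finset.sum_congr rfl fun l _ => Finset.sum_congr rfl fun k _ => ?_
  rw [hs.apply l k, mul_comm]

private lemma aux_sum_psd {n ι : Type*} [Fintype n] (s : Finset ι)
    (f : ι → Matrix n n ℂ) (h : ∀ i ∈ s, (f i).PosSemidef) :
    (∑ i ∈ s, f i).PosSemidef := by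
  classical
  induction s using Finset.induction with
  | empty => simpa using Matrix.PosSemidef.zero
  | @insert a s ha ih =>
    rw [Finset.sum_insert ha]
    exact (h _ (Finset.mem_insert_self _ _)).add
      (ih fun i hi => h i (Finset.mem_insert_of_mem hi))

private lemma aux_smul_psd {n : Type*} [Fintype n] (c : ℝ) (hc : 0 ≤ c)
    {A : Matrix n n ℂ} (hA : A.PosSemidef) : ((c : ℂ) • A).PosSemidef := by
  refine Matrix.PosSemidef.of_dotProduct_mulVec_nonneg ?_ ?_
  · unfold Matrix.IsHermitian
    rw [Matrix.conjTranspose_smul, hA.1.eq, Complex.star_def, Complex.conj_ofReal]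
  · intro x
    rw [Matrix.smul_mulVec, dotProduct_smul, smul_eq_mul]
    exact mul_nonneg (Complex.zero_le_real.mpr hc) (hA.dotProduct_mulVec_nonneg x)

open Matrix

/-!
**Statement 13 (realization of steering data; Hughston–Jozsa–Wootters).** Any steering data
`(α^x_a)` on `M_d(ℂ)` arises from a bipartite density matrix `R` on `ℂ^d ⊗ ℂ^d` together
with POVMs `(A^x_a)` via `α^x_a(X) = tr(R · (X ⊗ A^x_a))`.
-/

theorem steering_data_realization
    (d k m : ℕ) (hd : 1 ≤ d) (hk : 1 ≤ k) (hm : 1 ≤ m)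
    (α : Fin k → Fin m → (Matrix (Fin d) (Fin d) ℂ →ₗ[ℂ] ℂ))
    (hpos : ∀ x a (X : Matrix (Fin d) (Fin d) ℂ), X.PosSemidef → 0 ≤ α x a X)
    (hnorm : ∀ x, (∑ a, α x a 1) = 1)
    (hnosig : ∀ x x', (∑ a, α x a) = ∑ a, α x' a) :
    ∃ R : Matrix (Fin d × Fin d) (Fin d × Fin d) ℂ,
      R.PosSemidef ∧ R.trace = 1 ∧
      ∃ A : Fin k → Fin m → Matrix (Fin d) (Fin d) ℂ,
        (∀ x a, (A x a).PosSemidef) ∧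
        (∀ x, (∑ a, A x a) = 1) ∧
        ∀ x a (X : Matrix (Fin d) (Fin d) ℂ),
          α x a X = (R * (X ⊗ₖ A x a)).trace := by
  classical
  set x₀ : Fin k := ⟨0, hk⟩ with hx₀
  set M : Fin k → Fin m → Matrix (Fin d) (Fin d) ℂ := fun x a => funcMat (α x a) with hM
  have hMpsd : ∀ x a, (M x a).PosSemidef := fun x a => funcMat_psd _ (hpos x a)
  have hMtr : ∀ x a X, ((M x a) * X).trace = α x a X := fun x a X => funcMat_trace _ X
  set ρ : Matrix (Fin d) (Fin d) ℂ := ∑ a, M x₀ a with hρdef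
  have hsum : ∀ x, (∑ a, M x a) = ρ := by
    intro x
    ext i j
    have h := congrArg (fun (L : Matrix (Fin d) (Fin d) ℂ →ₗ[ℂ] ℂ) =>
      L (Matrix.single j i 1)) (hnosig x x₀)
    simpa only [hρdef, hM, funcMat, Matrix.sum_apply, Matrix.of_apply,
      LinearMap.coe_sum, Finset.sum_apply] using h
  have hρpsd : ρ.PosSemidef := aux_sum_psd _ _ fun a _ => hMpsd x₀ a
  have hρH : ρ.IsHermitian := hρpsd.1
  set lam : Fin d → ℝ := hρH.eigenvalues with hlam
  have hlnn : ∀ i, 0 ≤ lam i := fun i => hρpsd.eigenvalues_nonneg i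
  set gs : Fin d → ℝ := fun i => Real.sqrt (lam i) with hgs
  set gt : Fin d → ℝ := fun i => (Real.sqrt (lam i))⁻¹ with hgt
  set pf : Fin d → ℝ := fun i => gs i * gt i with hpf
  set pcf : Fin d → ℝ := fun i => 1 - pf i with hpcf
  set s : Matrix (Fin d) (Fin d) ℂ := SteeringAux.Fd hρH gs with hs
  set t : Matrix (Fin d) (Fin d) ℂ := SteeringAux.Fd hρH gt with ht
  set P : Matrix (Fin d) (Fin d) ℂ := SteeringAux.Fd hρH pf with hP
  set Pc : Matrix (Fin d) (Fin d) ℂ := SteeringAux.Fd hρH pcf with hPc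
  have f2 : s * t = P := SteeringAux.Fd_mul hρH gs gt
  have f3 : t * s = P := by
    rw [ht, hs, SteeringAux.Fd_mul, hP]
    have he : (fun i => gt i * gs i) = pf := by
      funext i; rw [hpf]; exact mul_comm _ _
    rw [he]
  have f4 : P * P = P := by
    rw [hP, SteeringAux.Fd_mul]
    have he : (fun i => pf i * pf i) = pf := by
      funext i
      rcases eq_or_ne (Real.sqrt (lam i)) 0 with h | h
      · simp [hpf, hgs, hgt, h]
      · simp [hpf, hgs, hgt, mul_inv_cancel₀ h]
    rw [he]
  have f5 : P + Pc = 1 := by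
    rw [hP, hPc, SteeringAux.Fd_add]
    have he : (fun i => pf i + pcf i) = fun _ => (1 : ℝ) := by
      funext i; simp [hpcf]
    rw [he, SteeringAux.Fd_one]
  have f8 : s * s = ρ := by
    rw [hs, SteeringAux.Fd_mul]
    have he : (fun i => gs i * gs i) = lam := by
      funext i; exact Real.mul_self_sqrt (hlnn i)
    rw [he, hlam, SteeringAux.Fd_eigen]
  have f6 : s * Pc = 0 := by
    rw [hs, hPc, SteeringAux.Fd_mul]
    have he : (fun i => gs i * pcf i) = fun _ => (0 : ℝ) := by
      funext i
      rcases eq_or_ne (Real.sqrt (lam i)) 0 with h | h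
      · simp [hgs, h]
      · simp [hgs, hpcf, hpf, hgt, mul_inv_cancel₀ h]
    rw [he, SteeringAux.Fd_zero]
  have f7 : ρ * Pc = 0 := by
    have h8 : ρ = SteeringAux.Fd hρH lam := by rw [hlam, SteeringAux.Fd_eigen]
    rw [h8, hPc, SteeringAux.Fd_mul]
    have he : (fun i => lam i * pcf i) = fun _ => (0 : ℝ) := by
      funext i
      rcases eq_or_ne (Real.sqrt (lam i)) 0 with h | h
      · have h0 : lam i = 0 := by
          rw [← Real.mul_self_sqrt (hlnn i), h, mul_zero]
        simp [h0]
      · simp [hpcf, hpf, hgs, hgt, mul_inv_cancel₀ h]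
    rw [he, SteeringAux.Fd_zero]
  have hsH : s.IsHermitian := SteeringAux.Fd_herm hρH gs
  have htH : t.IsHermitian := SteeringAux.Fd_herm hρH gt
  have hPcH : Pc.IsHermitian := SteeringAux.Fd_herm hρH pcf
  have hPcpsd : Pc.PosSemidef := by
    refine SteeringAux.Fd_psd hρH pcf fun i => ?_
    rcases eq_or_ne (Real.sqrt (lam i)) 0 with h | h
    · simp [hpcf, hpf, hgs, hgt, h]
    · simp [hpcf, hpf, hgs, hgt, mul_inv_cancel₀ h]
  -- kernel property
  have hker : ∀ x a, M x a * Pc = 0 := by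
    intro x a
    have hdiff : (ρ - M x a).PosSemidef := by
      have he : ρ - M x a = ∑ a' ∈ Finset.univ.erase a, M x a' := by
        rw [← hsum x, ← Finset.add_sum_erase _ _ (Finset.mem_univ a)]
        exact add_sub_cancel_left _ _
      rw [he]
      exact aux_sum_psd _ _ fun a' _ => hMpsd x a'
    ext i j
    set w : Fin d → ℂ := fun r => Pc r j with hw
    have hρw : ρ *ᵥ w = 0 := by
      funext i'
      have h7 : (ρ * Pc) i' j = 0 := by rw [f7]; rfl
      simpa [Matrix.mulVec, dotProduct, Matrix.mul_apply, hw] using h7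
    have h0 : star w ⬝ᵥ (M x a) *ᵥ w = 0 := by
      have h1 := (hMpsd x a).dotProduct_mulVec_nonneg w
      have h2 := hdiff.dotProduct_mulVec_nonneg w
      rw [Matrix.sub_mulVec, dotProduct_sub, hρw, dotProduct_zero,
        zero_sub] at h2
      exact le_antisymm (neg_nonneg.mp h2) h1
    have hMv := ((hMpsd x a).dotProduct_mulVec_zero_iff w).mp h0
    have := congrFun hMv i
    simpa [Matrix.mul_apply, Matrix.mulVec, dotProduct, hw] using this
  have hMP : ∀ x a, M x a * P = M x a := by
    intro x a
    have : P = 1 - Pc := by rw [← f5, add_sub_cancel_right]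
    rw [this, Matrix.mul_sub, hker, mul_one, sub_zero]
  have hPM : ∀ x a, P * M x a = M x a := by
    intro x a
    have h := congrArg Matrix.conjTranspose (hker x a)
    rw [Matrix.conjTranspose_mul, hPcH.eq, (hMpsd x a).1.eq, Matrix.conjTranspose_zero] at h
    have : P = 1 - Pc := by rw [← f5, add_sub_cancel_right]
    rw [this, Matrix.sub_mul, h, one_mul, sub_zero]
  -- the POVM elements
  set B : Fin k → Fin m → Matrix (Fin d) (Fin d) ℂ :=
    fun x a => t * M x a * t + (((m : ℝ)⁻¹ : ℝ) : ℂ) • Pc with hB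
  have hBpsd : ∀ x a, (B x a).PosSemidef := by
    intro x a
    refine Matrix.PosSemidef.add ?_ (aux_smul_psd _ (by positivity) hPcpsd)
    have h := (hMpsd x a).conjTranspose_mul_mul_same t
    rwa [htH.eq] at h
  have hB1 : ∀ x, ∑ a, B x a = 1 := by
    intro x
    rw [hB]
    rw [Finset.sum_add_distrib, Finset.sum_const, Finset.card_univ, Fintype.card_fin]
    have hL : ∑ a, t * M x a * t = P := by
      rw [← Finset.sum_mul, ← Finset.mul_sum, hsum x, ← f8,
        show t * (s * s) * t = (t * s) * (s * t) by simp only [Matrix.mul_assoc], f3, f2, f4]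
    rw [hL]
    have hsm : (m : ℕ) • ((((m : ℝ)⁻¹ : ℝ) : ℂ) • Pc) = Pc := by
      rw [← Nat.cast_smul_eq_nsmul ℂ, smul_smul]
      have : (m : ℂ) * (((m : ℝ)⁻¹ : ℝ) : ℂ) = 1 := by
        push_cast
        exact mul_inv_cancel₀ (Nat.cast_ne_zero.mpr (by omega))
      rw [this, one_smul]
    rw [hsm, f5]
  have hsBs : ∀ x a, s * (B x a * s) = M x a := by
    intro x a
    rw [hB]
    simp only [Matrix.add_mul, Matrix.mul_add, Matrix.smul_mul, Matrix.mul_smul]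
    have h1 : s * (t * M x a * t * s) = M x a := by
      rw [show s * (t * M x a * t * s) = (s * t) * (M x a * (t * s)) by
        simp only [Matrix.mul_assoc], f2, f3, hMP, hPM]
    have h2 : s * (Pc * s) = 0 := by
      rw [← Matrix.mul_assoc, f6, Matrix.zero_mul]
    rw [h1, h2, smul_zero, add_zero]
  -- the state
  set ψ : Fin d × Fin d → ℂ := fun p => s p.1 p.2 with hψ
  refine ⟨Matrix.vecMulVec ψ (star ψ), aux_vecMulVec_psd ψ, ?_, fun x a => (B x a)ᵀ,
    fun x a => (hBpsd x a).transpose, ?_, ?_⟩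
  · -- trace = 1
    have h1 : (Matrix.vecMulVec ψ (star ψ)).trace = (s * s).trace := by
      simp only [Matrix.trace, Matrix.diag_apply, Matrix.vecMulVec_apply, Pi.star_apply,
        Matrix.mul_apply, Fintype.sum_prod_type, hψ]
      refine Finset.sum_congr rfl fun i _ => Finset.sum_congr rfl fun j _ => ?_
      rw [← hsH.apply j i, mul_comm]
    rw [h1, f8]
    rw [hρdef, Matrix.trace_sum]
    have : ∀ a, (M x₀ a).trace = α x₀ a 1 := by
      intro a
      have := hMtr x₀ a 1
      rwa [mul_one] at this
    rw [Finset.sum_congr rfl fun a _ => this a]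
    exact hnorm x₀
  · -- sum of POVM elements
    intro x
    rw [← Matrix.transpose_sum, hB1, Matrix.transpose_one]
  · -- the realization identity
    intro x a X
    rw [← hMtr x a X, aux_trace_vecMulVec_mul, hψ, aux_kron_mulVec X ((B x a)ᵀ) s,
      Matrix.transpose_transpose, aux_dot_star _ _ hsH,
      Matrix.trace_mul_comm s (X * s * B x a)]
    simp only [Matrix.mul_assoc]
    rw [hsBs x a, Matrix.trace_mul_comm]
end

section
/- (Ping-pong lemma) Let l ≥ 2, let G be a group acting on a nonempty set X, and let g_1, …, g_l ∈ G. Suppose there are 2l pairwise disjoint nonempty subsets X_1^-, …, X_l^-, X_1^+, …, X_l^+ ⊆ X such that for every i = 1, …, l: g_i · (X \ X_i^-) ⊆ X_i^+ and g_i^{-1} · (X \ X_i^+) ⊆ X_i^-. Then the group homomorphism from the free group on l generators to G sending the i-th generator to g_i is injective; in particular, the subgroup of G generated by g_1, …, g_l is free of rank l, and if g_1, …, g_l generate G then G is a free group on these generators. -/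
open scoped Pointwise

theorem ping_pong_lemma
    {G X : Type*} [Group G] [MulAction G X] [Nonempty X]
    (l : ℕ) (hl : 2 ≤ l) (g : Fin l → G)
    (Xm Xp : Fin l → Set X)
    (hmne : ∀ i, (Xm i).Nonempty) (hpne : ∀ i, (Xp i).Nonempty)
    (hmm : ∀ i j, i ≠ j → Disjoint (Xm i) (Xm j))
    (hpp : ∀ i j, i ≠ j → Disjoint (Xp i) (Xp j))
    (hmp : ∀ i j, Disjoint (Xm i) (Xp j))
    (h₁ : ∀ i, g i • (Xm i)ᶜ ⊆ Xp i)
    (h₂ : ∀ i, (g i)⁻¹ • (Xp i)ᶜ ⊆ Xm i) :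
    Function.Injective ⇑(FreeGroup.lift g : FreeGroup (Fin l) →* G) := by
  have : Nontrivial (Fin l) := Fin.nontrivial_iff_two_le.mpr hl
  set ι := ULift (Fin l) with hι
  have : Nontrivial ι := inferInstance
  set g' : ι → G := fun i => g i.down with hg'
  have key : Function.Injective ⇑(FreeGroup.lift g' : FreeGroup ι →* G) := by
    refine FreeGroup.injective_lift_of_ping_pong (α := X) g'
      (fun i => Xp i.down) (fun i => Xm i.down)
      (fun i => hpne i.down)
      (fun i j h => hpp i.down j.down (fun e => h (congrArg ULift.up e)))
      (fun i j h => hmm i.down j.down (fun e => h (congrArg ULift.up e)))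
      (fun i j => (hmp j.down i.down).symm)
      (fun i => h₁ i.down)
      (fun i => h₂ i.down)
  have hcomp : (FreeGroup.lift g : FreeGroup (Fin l) →* G) =
      (FreeGroup.lift g').comp (FreeGroup.freeGroupCongr Equiv.ulift.symm).toMonoidHom := by
    ext i
    simp [hg']
  rw [hcomp]
  exact key.comp (FreeGroup.freeGroupCongr Equiv.ulift.symm).injective
end

section
/- (Induction of unitary representations) Let G be a group, H ≤ G a subgroup, and let π : H → U(H_π) be a unitary representation of H on a complex Hilbert space H_π (a group homomorphism into the unitary group of B(H_π)). Then there exist a complex Hilbert space K, an isometric complex-linear embedding V : H_π → K, and a unitary representation σ : G → U(K) such that for every h ∈ H and every ξ ∈ H_π one has σ(h)(V ξ) = V(π(h) ξ); i.e., every unitary representation of a subgroup extends, along an isometric embedding of Hilbert spaces, to a unitary representation of the whole group. -/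
open scoped ENNReal

namespace IndRepAux

universe u v

variable {G : Type u} [Group G] {H : Subgroup G}
variable {Hπ : Type v} [NormedAddCommGroup Hπ] [InnerProductSpace ℂ Hπ] [CompleteSpace Hπ]

open Classical in
/-- A section of `G ⧸ H` sending the trivial coset to `1`. -/
noncomputable def sec (H : Subgroup G) (x : G ⧸ H) : G :=
  if x = ((1 : G) : G ⧸ H) then 1 else x.out

lemma sec_spec (x : G ⧸ H) : ((sec H x : G) : G ⧸ H) = x := by
  unfold sec
  split
  · next h => exact h.symm
  · exact QuotientGroup.out_eq' x

lemma sec_one : sec H (((1 : G) : G ⧸ H)) = 1 := if_pos rfl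

/-- The cocycle associated to the section `sec`. -/
noncomputable def coc (H : Subgroup G) (g : G) (x : G ⧸ H) : H :=
  ⟨(sec H x)⁻¹ * (g * sec H (g⁻¹ • x)), by
    refine QuotientGroup.eq.mp ?_
    rw [sec_spec]
    have : ((g * sec H (g⁻¹ • x) : G) : G ⧸ H) = g • ((sec H (g⁻¹ • x) : G) : G ⧸ H) := rfl
    rw [this, sec_spec, smul_inv_smul]⟩

lemma coc_mul (g₁ g₂ : G) (x : G ⧸ H) :
    coc H (g₁ * g₂) x = coc H g₁ x * coc H g₂ (g₁⁻¹ • x) := by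
  apply Subtype.ext
  show (sec H x)⁻¹ * ((g₁ * g₂) * sec H ((g₁ * g₂)⁻¹ • x)) =
    ((sec H x)⁻¹ * (g₁ * sec H (g₁⁻¹ • x))) *
      ((sec H (g₁⁻¹ • x))⁻¹ * (g₂ * sec H (g₂⁻¹ • g₁⁻¹ • x)))
  rw [mul_inv_rev, mul_smul]
  group

lemma coc_one (x : G ⧸ H) : coc H 1 x = 1 := by
  apply Subtype.ext
  show (sec H x)⁻¹ * ((1 : G) * sec H ((1 : G)⁻¹ • x)) = 1
  simp

lemma smul_mk_one (h : H) : (h : G)⁻¹ • (((1 : G) : G ⧸ H)) = ((1 : G) : G ⧸ H) := by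
  have : (h : G)⁻¹ • (((1 : G) : G ⧸ H)) = (((h : G)⁻¹ * 1 : G) : G ⧸ H) := rfl
  rw [this, mul_one]
  exact QuotientGroup.eq.mpr (by simpa using h.2)

lemma coc_mem_one (h : H) : coc H (h : G) (((1 : G) : G ⧸ H)) = h := by
  apply Subtype.ext
  show (sec H (((1 : G) : G ⧸ H)))⁻¹ *
      ((h : G) * sec H ((h : G)⁻¹ • (((1 : G) : G ⧸ H)))) = (h : G)
  rw [smul_mk_one, sec_one]
  simp

variable (ρ : H →* (Hπ ≃ₗᵢ[ℂ] Hπ))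

lemma two_toReal_pos : 0 < (2 : ℝ≥0∞).toReal := by norm_num

lemma memℓp_T (g : G) (f : lp (fun _ : G ⧸ H => Hπ) 2) :
    Memℓp (fun x : G ⧸ H => ρ (coc H g x) (f (g⁻¹ • x))) 2 := by
  have hf := lp.memℓp f
  rw [memℓp_gen_iff two_toReal_pos] at hf ⊢
  have he : (fun x : G ⧸ H => ‖ρ (coc H g x) (f (g⁻¹ • x))‖ ^ (2 : ℝ≥0∞).toReal) =
      (fun x : G ⧸ H => ‖f x‖ ^ (2 : ℝ≥0∞).toReal) ∘ (MulAction.toPerm (g⁻¹ : G)) := by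
    funext x
    simp [LinearIsometryEquiv.norm_map, MulAction.toPerm]
  rw [he]
  exact (Equiv.summable_iff _).mpr hf

/-- The underlying map of the induced representation. -/
noncomputable def Tfun (g : G) (f : lp (fun _ : G ⧸ H => Hπ) 2) :
    lp (fun _ : G ⧸ H => Hπ) 2 :=
  ⟨fun x => ρ (coc H g x) (f (g⁻¹ • x)), memℓp_T ρ g f⟩

lemma Tfun_apply (g : G) (f : lp (fun _ : G ⧸ H => Hπ) 2) (x : G ⧸ H) :
    Tfun ρ g f x = ρ (coc H g x) (f (g⁻¹ • x)) := rfl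

lemma Tfun_norm (g : G) (f : lp (fun _ : G ⧸ H => Hπ) 2) : ‖Tfun ρ g f‖ = ‖f‖ := by
  rw [lp.norm_eq_tsum_rpow two_toReal_pos, lp.norm_eq_tsum_rpow two_toReal_pos]
  congr 1
  have : ∀ x : G ⧸ H, ‖Tfun ρ g f x‖ ^ (2 : ℝ≥0∞).toReal
      = ‖f ((MulAction.toPerm (g⁻¹ : G)) x)‖ ^ (2 : ℝ≥0∞).toReal := by
    intro x
    simp [Tfun_apply, LinearIsometryEquiv.norm_map, MulAction.toPerm]
  rw [tsum_congr this]
  exact (MulAction.toPerm (g⁻¹ : G)).tsum_eq fun x => ‖f x‖ ^ (2 : ℝ≥0∞).toReal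

lemma Tfun_one (f : lp (fun _ : G ⧸ H => Hπ) 2) : Tfun ρ 1 f = f := by
  apply lp.ext
  funext x
  show ρ (coc H 1 x) (f ((1 : G)⁻¹ • x)) = f x
  rw [coc_one, map_one]
  simp

lemma Tfun_mul (g₁ g₂ : G) (f : lp (fun _ : G ⧸ H => Hπ) 2) :
    Tfun ρ g₁ (Tfun ρ g₂ f) = Tfun ρ (g₁ * g₂) f := by
  apply lp.ext
  funext x
  show ρ (coc H g₁ x) (Tfun ρ g₂ f (g₁⁻¹ • x)) = ρ (coc H (g₁ * g₂) x) (f ((g₁ * g₂)⁻¹ • x))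
  rw [Tfun_apply, coc_mul, map_mul, mul_inv_rev, mul_smul]
  rfl

/-- The induced representation as a family of linear isometric equivalences. -/
noncomputable def Tequiv (g : G) :
    lp (fun _ : G ⧸ H => Hπ) 2 ≃ₗᵢ[ℂ] lp (fun _ : G ⧸ H => Hπ) 2 where
  toFun := Tfun ρ g
  invFun := Tfun ρ g⁻¹
  map_add' f₁ f₂ := by
    apply lp.ext
    funext x
    show ρ (coc H g x) ((f₁ + f₂) (g⁻¹ • x)) = (Tfun ρ g f₁ + Tfun ρ g f₂) x
    rw [lp.coeFn_add, lp.coeFn_add]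
    simp [Tfun_apply]
  map_smul' c f := by
    apply lp.ext
    funext x
    show ρ (coc H g x) ((c • f) (g⁻¹ • x)) = (c • Tfun ρ g f) x
    rw [lp.coeFn_smul, lp.coeFn_smul]
    simp [Tfun_apply]
  left_inv f := by
    show Tfun ρ g⁻¹ (Tfun ρ g f) = f
    rw [Tfun_mul, inv_mul_cancel, Tfun_one]
  right_inv f := by
    show Tfun ρ g (Tfun ρ g⁻¹ f) = f
    rw [Tfun_mul, mul_inv_cancel, Tfun_one]
  norm_map' := Tfun_norm ρ g

/-- The induced representation as a homomorphism into linear isometric equivalences. -/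
noncomputable def sigmaIso : G →* (lp (fun _ : G ⧸ H => Hπ) 2 ≃ₗᵢ[ℂ] lp (fun _ : G ⧸ H => Hπ) 2) where
  toFun := Tequiv ρ
  map_one' := LinearIsometryEquiv.ext fun f => Tfun_one ρ f
  map_mul' g₁ g₂ := LinearIsometryEquiv.ext fun f => (Tfun_mul ρ g₁ g₂ f).symm

end IndRepAux

/-!
**Statement 17 (induction of unitary representations).** Every unitary representation
`π : H → U(H_π)` of a subgroup `H ≤ G` on a complex Hilbert space `H_π` extends, along an
isometric complex-linear embedding `V : H_π → K` of Hilbert spaces, to a unitary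
representation `σ : G → U(K)`: one has `σ(h)(V ξ) = V(π(h) ξ)` for all `h ∈ H`, `ξ ∈ H_π`.
-/

theorem induced_unitary_representation
    {G : Type u} [Group G] (H : Subgroup G)
    {Hπ : Type v} [NormedAddCommGroup Hπ] [InnerProductSpace ℂ Hπ] [CompleteSpace Hπ]
    (π : H →* unitary (Hπ →L[ℂ] Hπ)) :
    ∃ (K : Type (max u v)) (_ : NormedAddCommGroup K) (_ : InnerProductSpace ℂ K)
      (_ : CompleteSpace K) (V : Hπ →ₗᵢ[ℂ] K) (σ : G →* unitary (K →L[ℂ] K)),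
      ∀ (h : H) (ξ : Hπ),
        ((σ (h : G) : K →L[ℂ] K)) (V ξ) = V (((π h : Hπ →L[ℂ] Hπ)) ξ) := by
  classical
  set ρ : H →* (Hπ ≃ₗᵢ[ℂ] Hπ) := Unitary.linearIsometryEquiv.toMonoidHom.comp π with hρ
  set e₀ : G ⧸ H := ((1 : G) : G ⧸ H) with he₀
  refine ⟨lp (fun _ : G ⧸ H => Hπ) 2, inferInstance, inferInstance, inferInstance,
    { toFun := fun ξ => lp.single 2 e₀ ξ
      map_add' := fun ξ₁ ξ₂ => by
        apply lp.ext
        funext x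
        by_cases hx : x = e₀
        · subst hx
          rw [lp.coeFn_add]
          simp [lp.single_apply_self]
        · rw [lp.coeFn_add]
          simp [lp.single_apply_ne _ _ _ hx]
      map_smul' := fun c ξ => by simpa using lp.single_smul 2 e₀ ξ c
      norm_map' := fun ξ => by exact lp.norm_single (E := fun _ : G ⧸ H => Hπ) (p := 2) (by norm_num) e₀ ξ },
    Unitary.linearIsometryEquiv.symm.toMonoidHom.comp (IndRepAux.sigmaIso ρ), ?_⟩
  intro h ξ
  show (Unitary.linearIsometryEquiv.symm (IndRepAux.Tequiv ρ (h : G)) :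
      lp (fun _ : G ⧸ H => Hπ) 2 →L[ℂ] lp (fun _ : G ⧸ H => Hπ) 2) (lp.single 2 e₀ ξ)
    = lp.single 2 e₀ ((π h : Hπ →L[ℂ] Hπ) ξ)
  have hcoe : (Unitary.linearIsometryEquiv.symm (IndRepAux.Tequiv ρ (h : G)) :
      lp (fun _ : G ⧸ H => Hπ) 2 →L[ℂ] lp (fun _ : G ⧸ H => Hπ) 2) (lp.single 2 e₀ ξ)
      = IndRepAux.Tequiv ρ (h : G) (lp.single 2 e₀ ξ) := rfl
  rw [hcoe]
  show IndRepAux.Tfun ρ (h : G) (lp.single 2 e₀ ξ) = lp.single 2 e₀ ((π h : Hπ →L[ℂ] Hπ) ξ)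
  apply lp.ext
  funext x
  rw [IndRepAux.Tfun_apply]
  by_cases hx : x = e₀
  · subst hx
    rw [IndRepAux.smul_mk_one h, lp.single_apply_self, lp.single_apply_self,
      IndRepAux.coc_mem_one h]
    rfl
  · have hx' : (h : G)⁻¹ • x ≠ e₀ := by
      intro hcon
      apply hx
      have := congrArg (fun y => (h : G) • y) hcon
      have h1 : x = ((h : G) : G ⧸ H) := by
        simpa [smul_smul, he₀, IndRepAux.smul_mk_one] using this
      exact h1.trans (QuotientGroup.eq.mpr (by simpa using H.inv_mem h.2))
    rw [lp.single_apply_ne _ _ _ hx', lp.single_apply_ne _ _ _ hx, map_zero]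
end

section
/- (Hardy-type inequality for local hidden variable models) Consider a bipartite scenario where Alice has 2 measurement settings with 3 outcomes labeled {+, −, ∅} and Bob has 2 measurement settings with 2 outcomes labeled {+, −}. If the conditional probability distribution P(a,b|x,y) admits a local hidden variable model, then P(+,+|2,2) ≤ P(+,+|2,1) + P(+,+|1,2) + P(−,−|1,1) + P(∅,−|1,1). -/
/-!
**Statement 18 (Hardy-type inequality for local hidden variable models).**

Alice has 2 settings (indexed by `Fin 2`, with index `0` ↔ setting `1` and index `1` ↔
setting `2`) and 3 outcomes (indexed by `Fin 3`, with `0` ↔ `+`, `1` ↔ `−`, `2` ↔ `∅`);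
Bob has 2 settings and 2 outcomes (`0` ↔ `+`, `1` ↔ `−`).  If `P(a,b|x,y)` admits a local
hidden variable model, then
`P(+,+|2,2) ≤ P(+,+|2,1) + P(+,+|1,2) + P(−,−|1,1) + P(∅,−|1,1)`.
-/

/-- `P` (written `P a b x y` for `P(a,b|x,y)`) admits a local hidden variable model. -/
def HasLHVModel {ka kb oa ob : ℕ}
    (P : Fin oa → Fin ob → Fin ka → Fin kb → ℝ) : Prop :=
  ∃ (Ω : Type) (_ : MeasurableSpace Ω) (μ : MeasureTheory.Measure Ω),
    MeasureTheory.IsProbabilityMeasure μ ∧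
    ∃ (pA : Fin ka → Fin oa → Ω → ℝ) (pB : Fin kb → Fin ob → Ω → ℝ),
      (∀ x a, Measurable (pA x a)) ∧ (∀ y b, Measurable (pB y b)) ∧
      (∀ x a ω, 0 ≤ pA x a ω) ∧ (∀ y b ω, 0 ≤ pB y b ω) ∧
      (∀ x ω, (∑ a, pA x a ω) = 1) ∧ (∀ y ω, (∑ b, pB y b ω) = 1) ∧
      (∀ a b x y, P a b x y = ∫ ω, pA x a ω * pB y b ω ∂μ)

theorem hardy_inequality_of_lhv
    (P : Fin 3 → Fin 2 → Fin 2 → Fin 2 → ℝ) (hP : HasLHVModel P) :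
    P 0 0 1 1 ≤ P 0 0 1 0 + P 0 0 0 1 + P 1 1 0 0 + P 2 1 0 0 := by
  obtain ⟨Ω, mΩ, μ, hprob, pA, pB, hmA, hmB, hA0, hB0, hA1, hB1, hPint⟩ := hP
  have hAle : ∀ x a ω, pA x a ω ≤ 1 := by
    intro x a ω
    calc pA x a ω ≤ ∑ a', pA x a' ω :=
          Finset.single_le_sum (fun i _ => hA0 x i ω) (Finset.mem_univ a)
      _ = 1 := hA1 x ω
  have hBle : ∀ y b ω, pB y b ω ≤ 1 := by
    intro y b ω
    calc pB y b ω ≤ ∑ b', pB y b' ω :=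
          Finset.single_le_sum (fun i _ => hB0 y i ω) (Finset.mem_univ b)
      _ = 1 := hB1 y ω
  have integ : ∀ x a y b, MeasureTheory.Integrable (fun ω => pA x a ω * pB y b ω) μ := by
    intro x a y b
    apply MeasureTheory.Integrable.mono' (MeasureTheory.integrable_const (1:ℝ))
    · exact ((hmA x a).mul (hmB y b)).aestronglyMeasurable
    · filter_upwards with ω
      rw [Real.norm_eq_abs, abs_of_nonneg (mul_nonneg (hA0 x a ω) (hB0 y b ω))]
      exact mul_le_one₀ (hAle x a ω) (hB0 y b ω) (hBle y b ω)
  have hpt : ∀ ω, pA 1 0 ω * pB 1 0 ω ≤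
      pA 1 0 ω * pB 0 0 ω + pA 0 0 ω * pB 1 0 ω + pA 0 1 ω * pB 0 1 ω
        + pA 0 2 ω * pB 0 1 ω := by
    intro ω
    have hA : pA 0 0 ω + pA 0 1 ω + pA 0 2 ω = 1 := by
      have := hA1 0 ω; rwa [Fin.sum_univ_three] at this
    have hB : pB 0 0 ω + pB 0 1 ω = 1 := by
      have := hB1 0 ω; rwa [Fin.sum_univ_two] at this
    have h1 : pA 0 1 ω * pB 0 1 ω + pA 0 2 ω * pB 0 1 ω
        = (1 - pA 0 0 ω) * (1 - pB 0 0 ω) := by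
      linear_combination pB 0 1 ω * hA + (1 - pA 0 0 ω) * hB
    rcases le_or_gt (pB 1 0 ω) (pB 0 0 ω) with h | h
    · nlinarith [mul_nonneg (hA0 1 0 ω) (sub_nonneg.2 h),
        mul_nonneg (hA0 0 0 ω) (hB0 1 0 ω),
        mul_nonneg (sub_nonneg.2 (hAle 0 0 ω)) (sub_nonneg.2 (hBle 0 0 ω))]
    · nlinarith [mul_nonneg (sub_nonneg.2 (hAle 1 0 ω)) (sub_nonneg.2 h.le),
        mul_nonneg (sub_nonneg.2 (hAle 0 0 ω)) (sub_nonneg.2 (hBle 1 0 ω)),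
        mul_nonneg (hA0 0 0 ω) (hB0 0 0 ω)]
  have i1 := integ 1 0 0 0
  have i2 := integ 0 0 1 0
  have i3 := integ 0 1 0 1
  have i4 := integ 0 2 0 1
  have i12 : MeasureTheory.Integrable
      (fun ω => pA 1 0 ω * pB 0 0 ω + pA 0 0 ω * pB 1 0 ω) μ := i1.add i2
  have i123 : MeasureTheory.Integrable
      (fun ω => pA 1 0 ω * pB 0 0 ω + pA 0 0 ω * pB 1 0 ω + pA 0 1 ω * pB 0 1 ω) μ :=
    i12.add i3
  have i1234 : MeasureTheory.Integrable
      (fun ω => pA 1 0 ω * pB 0 0 ω + pA 0 0 ω * pB 1 0 ω + pA 0 1 ω * pB 0 1 ω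
        + pA 0 2 ω * pB 0 1 ω) μ := i123.add i4
  rw [hPint 0 0 1 1, hPint 0 0 1 0, hPint 0 0 0 1, hPint 1 1 0 0, hPint 2 1 0 0]
  calc ∫ ω, pA 1 0 ω * pB 1 0 ω ∂μ
      ≤ ∫ ω, (pA 1 0 ω * pB 0 0 ω + pA 0 0 ω * pB 1 0 ω + pA 0 1 ω * pB 0 1 ω
          + pA 0 2 ω * pB 0 1 ω) ∂μ :=
        MeasureTheory.integral_mono (integ 1 0 1 0) i1234 hpt
    _ = (∫ ω, (pA 1 0 ω * pB 0 0 ω + pA 0 0 ω * pB 1 0 ω + pA 0 1 ω * pB 0 1 ω) ∂μ)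
          + ∫ ω, pA 0 2 ω * pB 0 1 ω ∂μ := MeasureTheory.integral_add i123 i4
    _ = ((∫ ω, (pA 1 0 ω * pB 0 0 ω + pA 0 0 ω * pB 1 0 ω) ∂μ)
          + ∫ ω, pA 0 1 ω * pB 0 1 ω ∂μ) + ∫ ω, pA 0 2 ω * pB 0 1 ω ∂μ := by
        rw [MeasureTheory.integral_add i12 i3]
    _ = (∫ ω, pA 1 0 ω * pB 0 0 ω ∂μ) + (∫ ω, pA 0 0 ω * pB 1 0 ω ∂μ)
          + (∫ ω, pA 0 1 ω * pB 0 1 ω ∂μ) + ∫ ω, pA 0 2 ω * pB 0 1 ω ∂μ := by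
        rw [MeasureTheory.integral_add i1 i2]
end
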